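/- arXiv:1506.02335 — 8 statements merged into one kernel-verified Lean document; each statement's English description precedes it below -/
import Mathlib

section
/- Let f₁,…,f_m ∈ ℝ[x] be polynomials of the same degree n with positive leading coefficients. Then f₁,…,f_m have a common interlacing if and only if every convex combination λ₁f₁ + ⋯ + λ_m f_m (with λ_i ≥ 0, Σλ_i = 1) is real-rooted. -/
open scoped BigOperators
open Polynomial Filter Topology

namespace CIaux

noncomputable def pp {n : ℕ} (L : ℝ) (r : Fin n → ℝ) : Polynomial ℝ :=
  Polynomial.C L * ∏ i, (Polynomial.X - Polynomial.C (r i))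

lemma prod_eq_multiset {n : ℕ} (r : Fin n → ℝ) :
    (∏ i, (Polynomial.X - Polynomial.C (r i))) =
      ((↑(List.ofFn r) : Multiset ℝ).map fun a => Polynomial.X - Polynomial.C a).prod := by
  rw [Multiset.map_coe, Multiset.prod_coe, List.map_ofFn, List.prod_ofFn]
  rfl

lemma eval_pp {n : ℕ} (L : ℝ) (r : Fin n → ℝ) (x : ℝ) :
    (pp L r).eval x = L * ∏ i, (x - r i) := by
  simp [pp, Polynomial.eval_prod]

lemma roots_pp {n : ℕ} {L : ℝ} (hL : L ≠ 0) (r : Fin n → ℝ) :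
    (pp L r).roots = ↑(List.ofFn r) := by
  rw [pp, Polynomial.roots_C_mul _ hL, prod_eq_multiset,
    Polynomial.roots_multiset_prod_X_sub_C]

lemma card_roots_pp {n : ℕ} {L : ℝ} (hL : L ≠ 0) (r : Fin n → ℝ) :
    (pp L r).roots.card = n := by
  rw [roots_pp hL]
  simp

lemma natDegree_pp {n : ℕ} {L : ℝ} (hL : L ≠ 0) (r : Fin n → ℝ) :
    (pp L r).natDegree = n := by
  rw [pp, Polynomial.natDegree_C_mul hL, prod_eq_multiset,
    Polynomial.natDegree_multiset_prod_X_sub_C_eq_card]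
  simp

lemma pp_ne_zero {n : ℕ} {L : ℝ} (hL : L ≠ 0) (r : Fin n → ℝ) : pp L r ≠ 0 := by
  have h := card_roots_pp hL r
  intro h0
  rw [pp] at h0
  exact (mul_ne_zero (Polynomial.C_ne_zero.mpr hL)
    (Polynomial.monic_prod_of_monic _ _ fun i _ => Polynomial.monic_X_sub_C (r i)).ne_zero) h0

lemma leadingCoeff_pp {n : ℕ} {L : ℝ} (hL : L ≠ 0) (r : Fin n → ℝ) :
    (pp L r).leadingCoeff = L := by
  rw [pp, Polynomial.leadingCoeff_mul, Polynomial.leadingCoeff_C,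
    (Polynomial.monic_prod_of_monic _ _ fun i _ => Polynomial.monic_X_sub_C (r i)).leadingCoeff,
    mul_one]

/-- Representation of a real-rooted polynomial via a listing of its roots. -/
lemma rep {n : ℕ} {p : Polynomial ℝ} (hdeg : p.natDegree = n)
    (hcard : p.roots.card = n) {r : Fin n → ℝ}
    (hr : (↑(List.ofFn r) : Multiset ℝ) = p.roots) :
    p = pp p.leadingCoeff r := by
  have h := Polynomial.C_leadingCoeff_mul_prod_multiset_X_sub_C
    (p := p) (by rw [hcard, hdeg])
  rw [pp, prod_eq_multiset, hr, h]

/-- Uniqueness of antitone listings. -/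
lemma listing_unique {n : ℕ} {r s : Fin n → ℝ} (hr : Antitone r) (hs : Antitone s)
    (h : (↑(List.ofFn r) : Multiset ℝ) = ↑(List.ofFn s)) : r = s := by
  have hperm : (List.ofFn r).Perm (List.ofFn s) := Multiset.coe_eq_coe.mp h
  have hsr : List.Pairwise (· ≥ ·) (List.ofFn r) := by
    rw [List.pairwise_ofFn]
    exact fun i j hij => hr hij.le
  have hss : List.Pairwise (· ≥ ·) (List.ofFn s) := by
    rw [List.pairwise_ofFn]
    exact fun i j hij => hs hij.le
  exact List.ofFn_injective (List.Perm.eq_of_pairwise' hsr hss hperm)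

/-- Existence of an antitone listing. -/
lemma listing_exists {n : ℕ} {p : Polynomial ℝ} (hcard : p.roots.card = n) :
    ∃ r : Fin n → ℝ, Antitone r ∧ (↑(List.ofFn r) : Multiset ℝ) = p.roots := by
  classical
  set l := p.roots.sort (· ≤ ·) with hl
  have hlen : l.length = n := by rw [hl, Multiset.length_sort, hcard]
  have hsort : List.Pairwise (· ≤ ·) l := Multiset.pairwise_sort _ _
  refine ⟨fun i => l.get ⟨n - 1 - (i : ℕ), by omega⟩, ?_, ?_⟩
  · intro i j hij
    rcases eq_or_lt_of_le hij with h | h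
    · rw [h]
    · exact hsort.rel_get_of_le (by simp [Fin.le_iff_val_le_val]; omega)
  · have hrev : List.ofFn (fun i : Fin n => l.get ⟨n - 1 - (i : ℕ), by omega⟩)
        = l.reverse := by
      apply List.ext_get
      · simp [hlen]
      · intro k h1 h2
        simp only [List.get_ofFn, List.get_eq_getElem, List.getElem_reverse]
        have h3 : k < n := by simpa using h1
        have h4 : l.reverse.length = n := by simp [hlen]
        have h5 : n - 1 - k = l.length - 1 - k := by omega
        simp [List.get_eq_getElem, h5]
    rw [hrev, Multiset.coe_reverse, hl, Multiset.sort_eq]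


lemma bw {n : ℕ} {M : ℝ} {L : ℕ → ℝ} {L0 : ℝ} (hL : Tendsto L atTop (𝓝 L0))
    {r : ℕ → Fin n → ℝ} (hbd : ∀ q i, r q i ∈ Set.Icc (-M) M)
    (hanti : ∀ q, Antitone (r q)) {p : Polynomial ℝ}
    (hev : ∀ x : ℝ, Tendsto (fun q => L q * ∏ i, (x - r q i)) atTop (𝓝 (p.eval x))) :
    ∃ (φ : ℕ → ℕ) (v : Fin n → ℝ), StrictMono φ ∧ Antitone v ∧
      (∀ i, Tendsto (fun q => r (φ q) i) atTop (𝓝 (v i))) ∧ p = pp L0 v := by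
  have hcomp : IsCompact (Set.Icc (fun _ : Fin n => -M) (fun _ => M)) := isCompact_Icc
  have hmem : ∀ q, r q ∈ Set.Icc (fun _ : Fin n => -M) (fun _ => M) := by
    intro q
    constructor <;> intro i
    · exact (hbd q i).1
    · exact (hbd q i).2
  obtain ⟨v, _, φ, hφ, hconv⟩ := hcomp.tendsto_subseq hmem
  have hpt : ∀ i, Tendsto (fun q => r (φ q) i) atTop (𝓝 (v i)) := by
    intro i
    exact (tendsto_pi_nhds.mp hconv) i
  refine ⟨φ, v, hφ, ?_, hpt, ?_⟩
  · intro i i' hii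
    exact le_of_tendsto_of_tendsto' (hpt i') (hpt i) fun q => hanti (φ q) hii
  · apply Polynomial.funext
    intro x
    rw [eval_pp]
    have h1 : Tendsto (fun q => L (φ q) * ∏ i, (x - r (φ q) i)) atTop
        (𝓝 (L0 * ∏ i, (x - v i))) := by
      apply Tendsto.mul (hL.comp hφ.tendsto_atTop)
      apply tendsto_finset_prod
      intro i _
      exact tendsto_const_nhds.sub (hpt i)
    have h2 : Tendsto (fun q => L (φ q) * ∏ i, (x - r (φ q) i)) atTop (𝓝 (p.eval x)) :=
      (hev x).comp hφ.tendsto_atTop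
    exact tendsto_nhds_unique h2 h1

lemma conv {n : ℕ} {M : ℝ} {L : ℕ → ℝ} {L0 : ℝ} (hL : Tendsto L atTop (𝓝 L0))
    (hL0 : L0 ≠ 0) {r : ℕ → Fin n → ℝ} (hbd : ∀ q i, r q i ∈ Set.Icc (-M) M)
    (hanti : ∀ q, Antitone (r q)) {w : Fin n → ℝ} (hw : Antitone w)
    (hev : ∀ x : ℝ, Tendsto (fun q => L q * ∏ i, (x - r q i)) atTop
      (𝓝 ((pp L0 w).eval x))) :
    ∀ i, Tendsto (fun q => r q i) atTop (𝓝 (w i)) := by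
  have main : Tendsto (fun q => r q) atTop (𝓝 w) := by
    apply tendsto_of_subseq_tendsto
    intro ns hns
    obtain ⟨φ, v, hφ, hvanti, hpt, hppv⟩ := bw (p := pp L0 w) (hL.comp hns)
      (fun q i => hbd (ns q) i) (fun q => hanti (ns q)) (fun x => (hev x).comp hns)
    have hvw : v = w := by
      apply listing_unique hvanti hw
      have : (pp L0 v).roots = (pp L0 w).roots := by rw [← hppv]
      rwa [roots_pp hL0, roots_pp hL0] at this
    refine ⟨φ, ?_⟩
    rw [tendsto_pi_nhds]
    intro i
    rw [← hvw]
    exact hpt i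
  intro i
  exact (tendsto_pi_nhds.mp main) i

lemma card_roots_of_inj {n : ℕ} {q : Polynomial ℝ} (hq : q ≠ 0) (hdeg : q.natDegree = n)
    {z : Fin n → ℝ} (hinj : Function.Injective z) (hz : ∀ i, q.eval (z i) = 0) :
    q.roots.card = n := by
  refine le_antisymm (hdeg ▸ q.card_roots') ?_
  have hsub : Finset.univ.image z ⊆ q.roots.toFinset := by
    intro x hx
    obtain ⟨i, _, rfl⟩ := Finset.mem_image.mp hx
    rw [Multiset.mem_toFinset, Polynomial.mem_roots hq]
    exact hz i
  calc n = (Finset.univ.image z).card := by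
            rw [Finset.card_image_of_injective _ hinj]; simp
    _ ≤ q.roots.toFinset.card := Finset.card_le_card hsub
    _ ≤ q.roots.card := q.roots.toFinset_card_le

lemma filter_downward {n : ℕ} {P : Fin n → Prop} [DecidablePred P]
    (hmono : ∀ s s' : Fin n, s ≤ s' → P s' → P s) (s : Fin n) :
    ((s : ℕ) < (Finset.univ.filter P).card ↔ P s) := by
  constructor
  · intro h
    by_contra hPs
    have hsub : Finset.univ.filter P ⊆ Finset.Iio s := by
      intro s' hs'
      rw [Finset.mem_filter] at hs'
      rw [Finset.mem_Iio]
      by_contra hss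
      exact hPs (hmono s s' (not_lt.mp hss) hs'.2)
    have := Finset.card_le_card hsub
    rw [Fin.card_Iio] at this
    omega
  · intro h
    have hsub : Finset.Iic s ⊆ Finset.univ.filter P := by
      intro s' hs'
      rw [Finset.mem_Iic] at hs'
      rw [Finset.mem_filter]
      exact ⟨Finset.mem_univ _, hmono s' s hs' h⟩
    have := Finset.card_le_card hsub
    rw [Fin.card_Iic] at this
    omega

lemma prod_neg_aux {α : Type*} (s : Finset α) (g : α → ℝ) :
    (∏ i ∈ s, (-(g i))) = (-1) ^ s.card * ∏ i ∈ s, g i := by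
  rw [← Finset.prod_const, ← Finset.prod_mul_distrib]
  simp

lemma card_filter_lt_fin {n K : ℕ} (hK : K ≤ n) :
    (Finset.univ.filter (fun i : Fin n => (i : ℕ) < K)).card = K := by
  have h2 : (Finset.univ.filter (fun i : Fin n => (i : ℕ) < K)).image Fin.val
      = Finset.range K := by
    ext a
    simp only [Finset.mem_image, Finset.mem_filter, Finset.mem_univ, true_and,
      Finset.mem_range]
    constructor
    · rintro ⟨i, hiK, rfl⟩
      exact hiK
    · intro ha
      exact ⟨⟨a, lt_of_lt_of_le ha hK⟩, ha, rfl⟩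
  rw [← Finset.card_image_of_injective _ Fin.val_injective, h2, Finset.card_range]

lemma ivt_root {p : Polynomial ℝ} {u v : ℝ} (huv : u < v) (h : p.eval u * p.eval v < 0) :
    ∃ x, x ∈ Set.Ioo u v ∧ p.eval x = 0 := by
  rcases lt_or_ge (p.eval u) 0 with hu | hu
  · have hv : 0 < p.eval v := by nlinarith
    obtain ⟨x, hx, hx0⟩ := intermediate_value_Ioo huv.le
      (Polynomial.continuousOn (p := p) (s := Set.Icc u v)) (Set.mem_Ioo.mpr ⟨hu, hv⟩)
    exact ⟨x, hx, hx0⟩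
  · have hu' : 0 < p.eval u := lt_of_le_of_ne hu (by rintro h'; rw [← h'] at h; simp at h)
    have hv : p.eval v < 0 := by nlinarith
    obtain ⟨x, hx, hx0⟩ := intermediate_value_Ioo' huv.le
      (Polynomial.continuousOn (p := p) (s := Set.Icc u v)) (Set.mem_Ioo.mpr ⟨hv, hu'⟩)
    exact ⟨x, hx, hx0⟩

section strict

variable {n m : ℕ} {lam lc : Fin m → ℝ} {rr : Fin m → Fin n → ℝ}

lemma eval_comb (lam lc : Fin m → ℝ) (rr : Fin m → Fin n → ℝ) (x : ℝ) :
    (∑ j, Polynomial.C (lam j) * pp (lc j) (rr j)).eval x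
      = ∑ j, lam j * (lc j * ∏ i, (x - rr j i)) := by
  rw [Polynomial.eval_finset_sum]
  refine Finset.sum_congr rfl fun j _ => ?_
  rw [Polynomial.eval_mul, Polynomial.eval_C, eval_pp]

lemma sign_comb (hlam : ∀ j, 0 ≤ lam j) (hlc : ∀ j, 0 < lc j) {j0 : Fin m} (hj0 : 0 < lam j0)
    {x : ℝ} {K : ℕ} (hK : K ≤ n) (hx1 : ∀ j (i : Fin n), (i : ℕ) < K → x < rr j i)
    (hx2 : ∀ j (i : Fin n), K ≤ (i : ℕ) → rr j i < x) :
    0 < (-1) ^ K * (∑ j, Polynomial.C (lam j) * pp (lc j) (rr j)).eval x := by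
  have key : ∀ j, 0 < (-1 : ℝ) ^ K * (lc j * ∏ i, (x - rr j i)) := by
    intro j
    rw [← Finset.prod_filter_mul_prod_filter_not Finset.univ (fun i : Fin n => (i : ℕ) < K)]
    have h1 : (∏ i ∈ Finset.univ.filter (fun i : Fin n => (i : ℕ) < K), (x - rr j i))
        = (-1) ^ K * ∏ i ∈ Finset.univ.filter (fun i : Fin n => (i : ℕ) < K),
            (rr j i - x) := by
      have h1a : (∏ i ∈ Finset.univ.filter (fun i : Fin n => (i : ℕ) < K), (x - rr j i))
          = (-1) ^ (Finset.univ.filter (fun i : Fin n => (i : ℕ) < K)).card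
            * ∏ i ∈ Finset.univ.filter (fun i : Fin n => (i : ℕ) < K), (rr j i - x) := by
        rw [← prod_neg_aux]
        exact Finset.prod_congr rfl fun i _ => by ring
      rwa [card_filter_lt_fin hK] at h1a
    have hpos1 : 0 < ∏ i ∈ Finset.univ.filter (fun i : Fin n => (i : ℕ) < K), (rr j i - x) := by
      apply Finset.prod_pos
      intro i hi
      rw [Finset.mem_filter] at hi
      exact sub_pos.mpr (hx1 j i hi.2)
    have hpos2 : 0 < ∏ i ∈ Finset.univ.filter (fun i : Fin n => ¬ (i : ℕ) < K),
        (x - rr j i) := by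
      apply Finset.prod_pos
      intro i hi
      rw [Finset.mem_filter] at hi
      exact sub_pos.mpr (hx2 j i (not_lt.mp hi.2))
    rw [h1]
    have hsq : (-1 : ℝ) ^ K * (-1) ^ K = 1 := by
      rw [← pow_add]
      exact Even.neg_one_pow ⟨K, by ring⟩
    calc (0:ℝ) < (lc j * ((∏ i ∈ Finset.univ.filter (fun i : Fin n => (i : ℕ) < K),
            (rr j i - x)) * ∏ i ∈ Finset.univ.filter (fun i : Fin n => ¬ (i : ℕ) < K),
            (x - rr j i))) := mul_pos (hlc j) (mul_pos hpos1 hpos2)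
      _ = (-1 : ℝ) ^ K * (lc j * (((-1) ^ K * ∏ i ∈ Finset.univ.filter
            (fun i : Fin n => (i : ℕ) < K), (rr j i - x)) * ∏ i ∈ Finset.univ.filter
            (fun i : Fin n => ¬ (i : ℕ) < K), (x - rr j i))) := by
          rw [show ∀ a b c : ℝ, (-1:ℝ)^K * (a * ((-1)^K * b * c)) = ((-1:ℝ)^K * (-1)^K) * (a * (b * c))
            from fun a b c => by ring, hsq]
          ring
  rw [eval_comb, Finset.mul_sum]
  apply Finset.sum_pos'
  · intro j _
    have := mul_nonneg (hlam j) (key j).le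
    calc (0:ℝ) ≤ lam j * ((-1) ^ K * (lc j * ∏ i, (x - rr j i))) := this
      _ = (-1) ^ K * (lam j * (lc j * ∏ i, (x - rr j i))) := by ring
  · refine ⟨j0, Finset.mem_univ _, ?_⟩
    calc (0:ℝ) < lam j0 * ((-1) ^ K * (lc j0 * ∏ i, (x - rr j0 i))) :=
          mul_pos hj0 (key j0)
      _ = (-1) ^ K * (lam j0 * (lc j0 * ∏ i, (x - rr j0 i))) := by ring

end strict


lemma coeff_comb_n {n m : ℕ} {lam lc : Fin m → ℝ} {rr : Fin m → Fin n → ℝ}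
    (hlam : ∀ j, 0 ≤ lam j) (hlc : ∀ j, 0 < lc j) {j0 : Fin m} (hj0 : 0 < lam j0) :
    (∑ j, Polynomial.C (lam j) * pp (lc j) (rr j)).coeff n = ∑ j, lam j * lc j := by
  rw [Polynomial.finset_sum_coeff]
  refine Finset.sum_congr rfl fun j _ => ?_
  rw [Polynomial.coeff_C_mul]
  congr 1
  have h1 : (pp (lc j) (rr j)).natDegree = n := natDegree_pp (hlc j).ne' _
  have h2 := Polynomial.coeff_natDegree (p := pp (lc j) (rr j))
  rw [h1] at h2
  rw [h2, leadingCoeff_pp (hlc j).ne']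

lemma sum_lam_lc_pos {m : ℕ} {lam lc : Fin m → ℝ}
    (hlam : ∀ j, 0 ≤ lam j) (hlc : ∀ j, 0 < lc j) {j0 : Fin m} (hj0 : 0 < lam j0) :
    0 < ∑ j, lam j * lc j := by
  apply Finset.sum_pos' (fun j _ => mul_nonneg (hlam j) (hlc j).le)
  exact ⟨j0, Finset.mem_univ _, mul_pos hj0 (hlc j0)⟩

lemma comb_ne_zero {n m : ℕ} {lam lc : Fin m → ℝ} {rr : Fin m → Fin n → ℝ}
    (hlam : ∀ j, 0 ≤ lam j) (hlc : ∀ j, 0 < lc j) {j0 : Fin m} (hj0 : 0 < lam j0) :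
    (∑ j, Polynomial.C (lam j) * pp (lc j) (rr j)) ≠ 0 := by
  intro h0
  have h := coeff_comb_n (rr := rr) hlam hlc hj0
  rw [h0] at h
  simp only [Polynomial.coeff_zero] at h
  exact absurd h.symm (ne_of_gt (sum_lam_lc_pos hlam hlc hj0))

lemma natDegree_comb {n m : ℕ} {lam lc : Fin m → ℝ} {rr : Fin m → Fin n → ℝ}
    (hlam : ∀ j, 0 ≤ lam j) (hlc : ∀ j, 0 < lc j) {j0 : Fin m} (hj0 : 0 < lam j0) :
    (∑ j, Polynomial.C (lam j) * pp (lc j) (rr j)).natDegree = n := by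
  apply le_antisymm
  · apply Polynomial.natDegree_sum_le_of_forall_le
    intro j _
    exact (Polynomial.natDegree_C_mul_le _ _).trans (le_of_eq (natDegree_pp (hlc j).ne' _))
  · apply Polynomial.le_natDegree_of_ne_zero
    rw [coeff_comb_n hlam hlc hj0]
    exact (sum_lam_lc_pos hlam hlc hj0).ne'

lemma rr_lt_bound {n m : ℕ} (rr : Fin m → Fin n → ℝ) (j : Fin m) (i : Fin n) :
    rr j i < 1 + ∑ j', ∑ i', |rr j' i'| := by
  have h1 : rr j i ≤ |rr j i| := le_abs_self _
  have h2 : |rr j i| ≤ ∑ i', |rr j i'| :=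
    Finset.single_le_sum (f := fun i' => |rr j i'|) (fun i' _ => abs_nonneg _)
      (Finset.mem_univ i)
  have h3 : (∑ i', |rr j i'|) ≤ ∑ j', ∑ i', |rr j' i'| :=
    Finset.single_le_sum (f := fun j' => ∑ i', |rr j' i'|)
      (fun j' _ => Finset.sum_nonneg fun i' _ => abs_nonneg _) (Finset.mem_univ j)
  linarith

lemma strict_card {n m : ℕ} {lam lc : Fin m → ℝ} {rr : Fin m → Fin n → ℝ}
    (hlam : ∀ j, 0 ≤ lam j) (hlc : ∀ j, 0 < lc j) {j0 : Fin m} (hj0 : 0 < lam j0)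
    {γ : Fin n → ℝ} (hγ : StrictAnti γ)
    (h1 : ∀ j i, γ i < rr j i)
    (h2 : ∀ j (i : Fin n), 0 < (i : ℕ) →
      rr j i < γ ⟨(i : ℕ) - 1, lt_of_le_of_lt (Nat.sub_le _ _) i.isLt⟩) :
    (∑ j, Polynomial.C (lam j) * pp (lc j) (rr j)).roots.card = n := by
  classical
  set q := ∑ j, Polynomial.C (lam j) * pp (lc j) (rr j) with hq
  set X0 : ℝ := 1 + ∑ j', ∑ i', |rr j' i'| with hX0
  have hrb : ∀ j i, rr j i < X0 := fun j i => rr_lt_bound rr j i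
  have htop : 0 < q.eval X0 := by
    have := sign_comb (rr := rr) hlam hlc hj0 (x := X0) (K := 0) (Nat.zero_le n)
      (fun j i hi => absurd hi (Nat.not_lt_zero _)) (fun j i _ => hrb j i)
    simpa using this
  have hval : ∀ k : Fin n, 0 < (-1 : ℝ) ^ ((k : ℕ) + 1) * q.eval (γ k) := by
    intro k
    apply sign_comb hlam hlc hj0 (x := γ k) (K := (k : ℕ) + 1) k.isLt
    · intro j i hi
      exact lt_of_le_of_lt (hγ.antitone (Fin.le_def.mpr (by omega))) (h1 j i)
    · intro j i hi
      have hipos : 0 < (i : ℕ) := by omega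
      refine lt_of_lt_of_le (h2 j i hipos) (hγ.antitone (Fin.le_def.mpr ?_))
      simp only
      omega
  -- the comparison point above γ k
  set prev : Fin n → ℝ := fun k =>
    if hk0 : (k : ℕ) = 0 then X0
    else γ ⟨(k : ℕ) - 1, lt_of_le_of_lt (Nat.sub_le _ _) k.isLt⟩ with hprev
  have hprev1 : ∀ k, γ k < prev k := by
    intro k
    simp only [hprev]
    split
    · exact lt_trans (h1 j0 k) (hrb j0 k)
    · exact hγ (Fin.lt_def.mpr (by simp; omega))
  have hsignprev : ∀ k : Fin n, 0 < (-1 : ℝ) ^ ((k : ℕ)) * q.eval (prev k) := by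
    intro k
    simp only [hprev]
    split
    · rename_i hk0
      rw [hk0]
      simpa using htop
    · rename_i hk0
      have := hval ⟨(k : ℕ) - 1, lt_of_le_of_lt (Nat.sub_le _ _) k.isLt⟩
      simp only at this
      have hexp : (k : ℕ) - 1 + 1 = (k : ℕ) := by omega
      rwa [hexp] at this
  have hopp : ∀ k : Fin n, q.eval (γ k) * q.eval (prev k) < 0 := by
    intro k
    have hA := hval k
    have hB := hsignprev k
    have hAB := mul_pos hA hB
    have hm : (-1 : ℝ) ^ ((k : ℕ) + 1) * (-1) ^ ((k : ℕ)) = -1 := by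
      rw [← pow_add]
      exact Odd.neg_one_pow ⟨(k : ℕ), by ring⟩
    have : ((-1 : ℝ) ^ ((k : ℕ) + 1) * q.eval (γ k)) * ((-1) ^ ((k : ℕ)) * q.eval (prev k))
        = ((-1 : ℝ) ^ ((k : ℕ) + 1) * (-1) ^ ((k : ℕ))) * (q.eval (γ k) * q.eval (prev k)) := by
      ring
    rw [this, hm] at hAB
    linarith
  have hz : ∀ k : Fin n, ∃ x, x ∈ Set.Ioo (γ k) (prev k) ∧ q.eval x = 0 :=
    fun k => ivt_root (hprev1 k) (hopp k)
  set z : Fin n → ℝ := fun k => (hz k).choose with hzdef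
  have hzmem : ∀ k, z k ∈ Set.Ioo (γ k) (prev k) := fun k => (hz k).choose_spec.1
  have hzroot : ∀ k, q.eval (z k) = 0 := fun k => (hz k).choose_spec.2
  have hzanti : StrictAnti z := by
    intro k k' hkk'
    have hk'0 : (k' : ℕ) ≠ 0 := by
      have := Fin.lt_def.mp hkk'
      omega
    have h01 : z k' < prev k' := (hzmem k').2
    have h02 : prev k' = γ ⟨(k' : ℕ) - 1, lt_of_le_of_lt (Nat.sub_le _ _) k'.isLt⟩ := by
      simp only [hprev]
      split
      · exact absurd (by assumption) hk'0
      · rfl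
    have h03 : γ (⟨(k' : ℕ) - 1, lt_of_le_of_lt (Nat.sub_le _ _) k'.isLt⟩ : Fin n) ≤ γ k := by
      apply hγ.antitone
      rw [Fin.le_def]
      have := Fin.lt_def.mp hkk'
      simp only
      omega
    have h04 : γ k < z k := (hzmem k).1
    rw [h02] at h01
    linarith
  exact card_roots_of_inj (comb_ne_zero hlam hlc hj0) (natDegree_comb hlam hlc hj0)
    hzanti.injective hzroot


lemma aux_der (r : ℝ) (ν : ℕ) (V : Polynomial ℝ) :
    (Polynomial.X - Polynomial.C r) * Polynomial.derivative ((Polynomial.X - Polynomial.C r) ^ ν * V)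
      = Polynomial.C (ν : ℝ) * (Polynomial.X - Polynomial.C r) ^ ν * V
        + (Polynomial.X - Polynomial.C r) ^ (ν + 1) * Polynomial.derivative V := by
  rw [Polynomial.derivative_mul, Polynomial.derivative_X_sub_C_pow]
  cases ν with
  | zero => simp
  | succ k =>
    have : k + 1 - 1 = k := rfl
    rw [this]
    ring

lemma mult_eq_of_wronskian {F G : Polynomial ℝ} (hF : F ≠ 0) (hG : G ≠ 0)
    (hW : F * Polynomial.derivative G = Polynomial.derivative F * G) (r : ℝ) :
    F.rootMultiplicity r = G.rootMultiplicity r := by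
  obtain ⟨U, hFU, hU⟩ := F.exists_eq_pow_rootMultiplicity_mul_and_not_dvd hF r
  obtain ⟨V, hGV, hV⟩ := G.exists_eq_pow_rootMultiplicity_mul_and_not_dvd hG r
  set μ := F.rootMultiplicity r with hμ
  set ν := G.rootMultiplicity r with hν
  set A := Polynomial.X - Polynomial.C r with hA
  have hUr : U.eval r ≠ 0 := by
    intro h0
    exact hU (Polynomial.dvd_iff_isRoot.mpr h0)
  have hVr : V.eval r ≠ 0 := by
    intro h0
    exact hV (Polynomial.dvd_iff_isRoot.mpr h0)
  -- multiply the Wronskian identity by A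
  have key : Polynomial.C (ν : ℝ) * U * V + A * U * Polynomial.derivative V
      = Polynomial.C (μ : ℝ) * U * V + A * (Polynomial.derivative U) * V := by
    have h1 : F * (A * Polynomial.derivative G) = F * (Polynomial.C (ν : ℝ) * A ^ ν * V
        + A ^ (ν + 1) * Polynomial.derivative V) := by rw [← aux_der, ← hGV, hA]
    have h2 : G * (A * Polynomial.derivative F) = G * (Polynomial.C (μ : ℝ) * A ^ μ * U
        + A ^ (μ + 1) * Polynomial.derivative U) := by rw [← aux_der, ← hFU, hA]
    have h3 : F * (A * Polynomial.derivative G) = G * (A * Polynomial.derivative F) := by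
      rw [show F * (A * Polynomial.derivative G) = A * (F * Polynomial.derivative G) from by ring,
        hW]
      ring
    rw [h1, h2] at h3
    rw [hFU, hGV] at h3
    have h4 : A ^ (μ + ν) * (Polynomial.C (ν : ℝ) * U * V + A * U * Polynomial.derivative V)
        = A ^ (μ + ν) * (Polynomial.C (μ : ℝ) * U * V + A * (Polynomial.derivative U) * V) := by
      linear_combination h3
    exact mul_left_cancel₀ (pow_ne_zero _ (Polynomial.X_sub_C_ne_zero r)) h4
  -- evaluate at r
  have := congrArg (Polynomial.eval r) key
  simp only [Polynomial.eval_add, Polynomial.eval_mul, Polynomial.eval_C, hA,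
    Polynomial.eval_sub, Polynomial.eval_X, sub_self, zero_mul, add_zero, mul_zero] at this
  have hUV : U.eval r * V.eval r ≠ 0 := mul_ne_zero hUr hVr
  have hμν : (ν : ℝ) * (U.eval r * V.eval r) = (μ : ℝ) * (U.eval r * V.eval r) := by
    linear_combination this
  have hcast : (ν : ℝ) = (μ : ℝ) := mul_right_cancel₀ hUV hμν
  exact_mod_cast hcast.symm

lemma roots_eq_of_wronskian {F G : Polynomial ℝ} (hF : F ≠ 0) (hG : G ≠ 0)
    (hW : F * Polynomial.derivative G = Polynomial.derivative F * G) :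
    F.roots = G.roots := by
  classical
  ext r
  rw [Polynomial.count_roots, Polynomial.count_roots]
  exact mult_eq_of_wronskian hF hG hW r


lemma forward {n m : ℕ} (f : Fin m → Polynomial ℝ)
    (hdeg : ∀ j, (f j).natDegree = n)
    (hlead : ∀ j, 0 < (f j).leadingCoeff)
    (hroots : ∀ j, (f j).roots.card = n)
    (ρ : Fin m → Fin n → ℝ)
    (hρ : ∀ j, (↑(List.ofFn (ρ j)) : Multiset ℝ) = (f j).roots)
    (β : Fin n → ℝ) (hβa : Antitone β)
    (hβ1 : ∀ j i, β i ≤ ρ j i)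
    (hβ2 : ∀ j, ∀ i : Fin n, 0 < (i : ℕ) →
      ρ j i ≤ β ⟨(i : ℕ) - 1, lt_of_le_of_lt (Nat.sub_le _ _) i.isLt⟩)
    (lam : Fin m → ℝ) (hlam : ∀ j, 0 ≤ lam j) (hlam1 : (∑ j, lam j) = 1) :
    (∑ j, Polynomial.C (lam j) * f j).roots.card = n := by
  classical
  -- a positive weight
  have hex : ∃ j0, 0 < lam j0 := by
    by_contra hno
    push_neg at hno
    have : ∀ j, lam j = 0 := fun j => le_antisymm (hno j) (hlam j)
    rw [Finset.sum_congr rfl (fun j _ => this j)] at hlam1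
    simp at hlam1
  obtain ⟨j0, hj0⟩ := hex
  set lc : Fin m → ℝ := fun j => (f j).leadingCoeff with hlc_def
  have hlc : ∀ j, 0 < lc j := hlead
  have hfj : ∀ j, f j = pp (lc j) (ρ j) := fun j => rep (hdeg j) (hroots j) (hρ j)
  have hgpp : (∑ j, Polynomial.C (lam j) * f j)
      = ∑ j, Polynomial.C (lam j) * pp (lc j) (ρ j) :=
    Finset.sum_congr rfl fun j _ => by rw [hfj j]
  rw [hgpp]
  set g := ∑ j, Polynomial.C (lam j) * pp (lc j) (ρ j) with hg
  set L : ℝ := ∑ j, lam j * lc j with hL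
  have hLpos : 0 < L := sum_lam_lc_pos hlam hlc hj0
  -- the perturbations
  set ε : ℕ → ℝ := fun q => 1 / ((q : ℝ) + 1) with hε
  have hεpos : ∀ q, 0 < ε q := fun q => by positivity
  have hεle : ∀ q, ε q ≤ 1 := by
    intro q
    rw [hε]
    rw [div_le_one (by positivity)]
    simp
  have hεlim : Tendsto ε atTop (𝓝 0) := tendsto_one_div_add_atTop_nhds_zero_nat
  set rr : ℕ → Fin m → Fin n → ℝ := fun q j i => ρ j i - (i : ℕ) * ε q with hrr
  set γ : ℕ → Fin n → ℝ := fun q i => β i - (i : ℕ) * ε q - ε q / 2 with hγ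
  have hγa : ∀ q, StrictAnti (γ q) := by
    intro q
    intro i i' hii'
    have h1 : β i' ≤ β i := hβa hii'.le
    have h2 : ((i : ℕ) : ℝ) * ε q < ((i' : ℕ) : ℝ) * ε q := by
      apply mul_lt_mul_of_pos_right _ (hεpos q)
      exact_mod_cast Fin.lt_def.mp hii'
    simp only [hγ]
    linarith
  have hint1 : ∀ q j i, γ q i < rr q j i := by
    intro q j i
    simp only [hγ, hrr]
    have := hβ1 j i
    have := hεpos q
    linarith
  have hint2 : ∀ q j (i : Fin n), 0 < (i : ℕ) →
      rr q j i < γ q ⟨(i : ℕ) - 1, lt_of_le_of_lt (Nat.sub_le _ _) i.isLt⟩ := by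
    intro q j i hi
    simp only [hγ, hrr]
    have hb := hβ2 j i hi
    have hcast : (((i : ℕ) - 1 : ℕ) : ℝ) = ((i : ℕ) : ℝ) - 1 := by
      have : 1 ≤ (i : ℕ) := hi
      push_cast [Nat.cast_sub this]
      ring
    rw [hcast]
    have := hεpos q
    nlinarith [hεpos q]
  -- the perturbed polynomials
  set Q : ℕ → Polynomial ℝ := fun q => ∑ j, Polynomial.C (lam j) * pp (lc j) (rr q j) with hQ
  have hQcard : ∀ q, (Q q).roots.card = n := fun q =>
    strict_card hlam hlc hj0 (hγa q) (hint1 q) (hint2 q)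
  have hQdeg : ∀ q, (Q q).natDegree = n := fun q => natDegree_comb hlam hlc hj0
  have hQlead : ∀ q, (Q q).leadingCoeff = L := by
    intro q
    rw [Polynomial.leadingCoeff, hQdeg q]
    exact coeff_comb_n hlam hlc hj0
  have hQlist : ∀ q, ∃ r : Fin n → ℝ, Antitone r ∧ (↑(List.ofFn r) : Multiset ℝ)
      = (Q q).roots := fun q => listing_exists (hQcard q)
  choose r hranti hrlist using hQlist
  have hQrep : ∀ q, Q q = pp L (r q) := by
    intro q
    have := rep (hQdeg q) (hQcard q) (hrlist q)
    rwa [hQlead q] at this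
  -- bound on the roots
  set B : ℝ := 1 + (n : ℝ) + ∑ j', ∑ i', |ρ j' i'| with hB
  have hsum_abs : ∀ j i, |ρ j i| ≤ ∑ j', ∑ i', |ρ j' i'| := by
    intro j i
    have h2 : |ρ j i| ≤ ∑ i', |ρ j i'| :=
      Finset.single_le_sum (f := fun i' => |ρ j i'|) (fun i' _ => abs_nonneg _)
        (Finset.mem_univ i)
    have h3 : (∑ i', |ρ j i'|) ≤ ∑ j', ∑ i', |ρ j' i'| :=
      Finset.single_le_sum (f := fun j' => ∑ i', |ρ j' i'|)
        (fun j' _ => Finset.sum_nonneg fun i' _ => abs_nonneg _) (Finset.mem_univ j)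
    linarith
  have hrrb : ∀ q j i, rr q j i ∈ Set.Icc (-B) B := by
    intro q j i
    have habs := hsum_abs j i
    have h1 : -|ρ j i| ≤ ρ j i := neg_abs_le _
    have h2 : ρ j i ≤ |ρ j i| := le_abs_self _
    have h3 : 0 ≤ ((i : ℕ) : ℝ) * ε q := by positivity
    have h4 : ((i : ℕ) : ℝ) * ε q ≤ n := by
      calc ((i : ℕ) : ℝ) * ε q ≤ ((i : ℕ) : ℝ) * 1 :=
            mul_le_mul_of_nonneg_left (hεle q) (by positivity)
        _ = ((i : ℕ) : ℝ) := mul_one _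
        _ ≤ n := by exact_mod_cast (le_of_lt i.isLt)
    constructor
    · simp only [hrr]; linarith
    · simp only [hrr]; linarith
  have hbd : ∀ q i, r q i ∈ Set.Icc (-B) B := by
    intro q i
    -- r q i is a root of Q q, and all roots of Q q lie in [-B, B]
    have hmem : r q i ∈ (Q q).roots := by
      rw [← hrlist q]
      exact Multiset.mem_coe.mpr (by
        rw [List.mem_ofFn]
        exact ⟨i, rfl⟩)
    have hne : Q q ≠ 0 := comb_ne_zero hlam hlc hj0
    have hroot : (Q q).eval (r q i) = 0 := by
      exact (Polynomial.mem_roots hne |>.mp hmem)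
    by_contra hout
    rw [Set.mem_Icc] at hout
    push_neg at hout
    rcases le_or_gt (r q i) B with hle | hgt
    · -- r q i < -B : all perturbed roots are above it
      have hlt : r q i < -B := by
        rcases lt_or_ge (r q i) (-B) with h | h
        · exact h
        · exact absurd (hout h) (not_lt.mpr hle)
      have := sign_comb (rr := rr q) hlam hlc hj0 (x := r q i) (K := n) le_rfl
        (fun j i' _ => lt_of_lt_of_le hlt (by
          have := (hrrb q j i').1
          linarith))
        (fun j i' hi' => absurd hi' (by have := i'.isLt; omega))
      have h0 : (∑ j, Polynomial.C (lam j) * pp (lc j) (rr q j)).eval (r q i) = 0 := hroot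
      rw [h0] at this
      simp at this
    · -- B < r q i : all perturbed roots are below it
      have := sign_comb (rr := rr q) hlam hlc hj0 (x := r q i) (K := 0) (Nat.zero_le n)
        (fun j i' hi' => absurd hi' (Nat.not_lt_zero _))
        (fun j i' _ => lt_of_le_of_lt ((hrrb q j i').2) hgt)
      have h0 : (∑ j, Polynomial.C (lam j) * pp (lc j) (rr q j)).eval (r q i) = 0 := hroot
      rw [h0] at this
      simp at this
  -- pointwise convergence of evaluations
  have hev : ∀ x : ℝ, Tendsto (fun q => L * ∏ i, (x - r q i)) atTop (𝓝 (g.eval x)) := by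
    intro x
    have heq : ∀ q, L * ∏ i, (x - r q i) = ∑ j, lam j * (lc j * ∏ i, (x - rr q j i)) := by
      intro q
      have h1 : L * ∏ i, (x - r q i) = (pp L (r q)).eval x := (eval_pp L (r q) x).symm
      rw [h1, ← hQrep q, hQ, eval_comb]
    have hlim : Tendsto (fun q => ∑ j, lam j * (lc j * ∏ i, (x - rr q j i))) atTop
        (𝓝 (∑ j, lam j * (lc j * ∏ i, (x - ρ j i)))) := by
      apply tendsto_finset_sum
      intro j _
      apply Tendsto.const_mul
      apply Tendsto.const_mul
      apply tendsto_finset_prod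
      intro i _
      have : (fun q => x - rr q j i) = fun q => (x - ρ j i) + (i : ℕ) * ε q := by
        funext q
        simp only [hrr]
        ring
      rw [this]
      have h0 : Tendsto (fun q => ((i : ℕ) : ℝ) * ε q) atTop (𝓝 0) := by
        have h0' := hεlim.const_mul ((i : ℕ) : ℝ)
        rw [mul_zero] at h0'
        exact h0'
      have := tendsto_const_nhds (α := ℕ) (x := x - ρ j i) |>.add h0
      simpa using this
    rw [show (fun q => L * ∏ i, (x - r q i))
        = fun q => ∑ j, lam j * (lc j * ∏ i, (x - rr q j i)) from funext heq]
    have hgx : g.eval x = ∑ j, lam j * (lc j * ∏ i, (x - ρ j i)) := by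
      rw [hg, eval_comb]
    rw [hgx]
    exact hlim
  obtain ⟨φ, v, hφ, hvanti, hpt, hgeq⟩ := bw tendsto_const_nhds hbd hranti hev
  rw [hgeq]
  exact card_roots_pp hLpos.ne' v


set_option maxHeartbeats 1000000 in
lemma cross {n : ℕ} {F G : Polynomial ℝ}
    (hFl : 0 < F.leadingCoeff) (hGl : 0 < G.leadingCoeff)
    {ρF ρG : Fin n → ℝ} (hρFa : Antitone ρF) (hρGa : Antitone ρG)
    (hFrep : F = pp F.leadingCoeff ρF) (hGrep : G = pp G.leadingCoeff ρG)
    (H : ∀ t : ℝ, 0 ≤ t → t ≤ 1 →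
      (Polynomial.C (1 - t) * F + Polynomial.C t * G).roots.card = n)
    (i : Fin n) (hi : 0 < (i : ℕ))
    (hlt : ρG ⟨(i : ℕ) - 1, lt_of_le_of_lt (Nat.sub_le _ _) i.isLt⟩ < ρF i) : False := by
  classical
  have hFne : F ≠ 0 := Polynomial.leadingCoeff_ne_zero.mp hFl.ne'
  have hGne : G ≠ 0 := Polynomial.leadingCoeff_ne_zero.mp hGl.ne'
  set i' : Fin n := ⟨(i : ℕ) - 1, lt_of_le_of_lt (Nat.sub_le _ _) i.isLt⟩ with hi'
  -- the two-element family
  set lam : ℝ → Fin 2 → ℝ := fun t => ![1 - t, t] with hlam_def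
  set lc2 : Fin 2 → ℝ := ![F.leadingCoeff, G.leadingCoeff] with hlc2_def
  set rr2 : Fin 2 → Fin n → ℝ := ![ρF, ρG] with hrr2_def
  set ht : ℝ → Polynomial ℝ := fun t => Polynomial.C (1 - t) * F + Polynomial.C t * G
    with hht_def
  have hcomb : ∀ t : ℝ, (∑ j, Polynomial.C (lam t j) * pp (lc2 j) (rr2 j)) = ht t := by
    intro t
    rw [Fin.sum_univ_two]
    simp only [hlam_def, hlc2_def, hrr2_def, Matrix.cons_val_zero, Matrix.cons_val_one,
      Matrix.head_cons, hht_def]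
    rw [← hFrep, ← hGrep]
  have hlam2 : ∀ t : ℝ, 0 ≤ t → t ≤ 1 → ∀ j, 0 ≤ lam t j := by
    intro t h0 h1 j
    fin_cases j <;> simp [hlam_def] <;> linarith
  have hlc2pos : ∀ j, 0 < lc2 j := by
    intro j
    fin_cases j <;> simp [hlc2_def] <;> [exact hFl; exact hGl]
  have hj0ex : ∀ t : ℝ, 0 ≤ t → t ≤ 1 → ∃ j0, 0 < lam t j0 := by
    intro t h0 h1
    rcases lt_or_ge t 1 with h | h
    · exact ⟨0, by simp [hlam_def]; linarith⟩
    · exact ⟨1, by simp [hlam_def]; linarith⟩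
  set Lf : ℝ → ℝ := fun t => (1 - t) * F.leadingCoeff + t * G.leadingCoeff with hLf_def
  have hLsum : ∀ t : ℝ, (∑ j, lam t j * lc2 j) = Lf t := by
    intro t
    rw [Fin.sum_univ_two]
    simp [hlam_def, hlc2_def, hLf_def]
  have hLpos : ∀ t : ℝ, 0 ≤ t → t ≤ 1 → 0 < Lf t := by
    intro t h0 h1
    rcases lt_or_ge t 1 with h | h
    · have : 0 < (1 - t) * F.leadingCoeff := mul_pos (by linarith) hFl
      have h2 : 0 ≤ t * G.leadingCoeff := mul_nonneg h0 hGl.le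
      simp only [hLf_def]; linarith
    · have ht1 : t = 1 := le_antisymm h1 h
      simp only [hLf_def, ht1]; simpa using hGl
  have hdegt : ∀ t : ℝ, 0 ≤ t → t ≤ 1 → (ht t).natDegree = n := by
    intro t h0 h1
    obtain ⟨j0, hj0⟩ := hj0ex t h0 h1
    rw [← hcomb t]
    exact natDegree_comb (hlam2 t h0 h1) hlc2pos hj0
  have hnet : ∀ t : ℝ, 0 ≤ t → t ≤ 1 → ht t ≠ 0 := by
    intro t h0 h1
    obtain ⟨j0, hj0⟩ := hj0ex t h0 h1
    rw [← hcomb t]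
    exact comb_ne_zero (hlam2 t h0 h1) hlc2pos hj0
  have hleadt : ∀ t : ℝ, 0 ≤ t → t ≤ 1 → (ht t).leadingCoeff = Lf t := by
    intro t h0 h1
    obtain ⟨j0, hj0⟩ := hj0ex t h0 h1
    rw [Polynomial.leadingCoeff, hdegt t h0 h1, ← hcomb t,
      coeff_comb_n (hlam2 t h0 h1) hlc2pos hj0, hLsum]
  have hcardt : ∀ t : ℝ, 0 ≤ t → t ≤ 1 → (ht t).roots.card = n := fun t h0 h1 => H t h0 h1
  -- listings of the roots
  have hlist : ∀ t : ℝ, 0 ≤ t → t ≤ 1 → ∃ r : Fin n → ℝ, Antitone r ∧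
      (↑(List.ofFn r) : Multiset ℝ) = (ht t).roots := fun t h0 h1 =>
    listing_exists (hcardt t h0 h1)
  choose! rt hrta hrtl using hlist
  have hrept : ∀ t : ℝ, 0 ≤ t → t ≤ 1 → ht t = pp (Lf t) (rt t) := by
    intro t h0 h1
    have := rep (hdegt t h0 h1) (hcardt t h0 h1) (hrtl t h0 h1)
    rwa [hleadt t h0 h1] at this
  have hρFcoe : (↑(List.ofFn ρF) : Multiset ℝ) = F.roots := by
    rw [hFrep, roots_pp hFl.ne']
  have hρGcoe : (↑(List.ofFn ρG) : Multiset ℝ) = G.roots := by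
    rw [hGrep, roots_pp hGl.ne']
  have hht0 : ht 0 = F := by simp [hht_def]
  have hht1 : ht 1 = G := by simp [hht_def]
  have hrt0 : rt 0 = ρF := by
    apply listing_unique (hrta 0 le_rfl zero_le_one) hρFa
    rw [hrtl 0 le_rfl zero_le_one, hht0, ← hρFcoe]
  have hrt1 : rt 1 = ρG := by
    apply listing_unique (hrta 1 zero_le_one le_rfl) hρGa
    rw [hrtl 1 zero_le_one le_rfl, hht1, ← hρGcoe]
  -- uniform bound on the roots
  set M : ℝ := 1 + (∑ i', |ρF i'|) + (∑ i', |ρG i'|) with hM_def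
  have hrr2bd : ∀ j i'', |rr2 j i''| ≤ M - 1 := by
    intro j i''
    have hF' : |ρF i''| ≤ ∑ i', |ρF i'| :=
      Finset.single_le_sum (f := fun i' => |ρF i'|) (fun _ _ => abs_nonneg _)
        (Finset.mem_univ _)
    have hG' : |ρG i''| ≤ ∑ i', |ρG i'| :=
      Finset.single_le_sum (f := fun i' => |ρG i'|) (fun _ _ => abs_nonneg _)
        (Finset.mem_univ _)
    have h1 : (0:ℝ) ≤ ∑ i', |ρF i'| := Finset.sum_nonneg fun _ _ => abs_nonneg _
    have h2 : (0:ℝ) ≤ ∑ i', |ρG i'| := Finset.sum_nonneg fun _ _ => abs_nonneg _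
    fin_cases j
    · show |ρF i''| ≤ M - 1
      rw [hM_def]; linarith
    · show |ρG i''| ≤ M - 1
      rw [hM_def]; linarith
  have hbd : ∀ t : ℝ, 0 ≤ t → t ≤ 1 → ∀ s, rt t s ∈ Set.Icc (-M) M := by
    intro t h0 h1 s
    obtain ⟨j0, hj0⟩ := hj0ex t h0 h1
    have hmem : rt t s ∈ (ht t).roots := by
      rw [← hrtl t h0 h1]
      exact Multiset.mem_coe.mpr (by rw [List.mem_ofFn]; exact ⟨s, rfl⟩)
    have hroot : (ht t).eval (rt t s) = 0 :=
      (Polynomial.mem_roots (hnet t h0 h1)).mp hmem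
    rw [Set.mem_Icc]
    by_contra hout
    push_neg at hout
    rcases le_or_gt (rt t s) M with hle | hgt
    · have hlt2 : rt t s < -M := by
        rcases lt_or_ge (rt t s) (-M) with h | h
        · exact h
        · exact absurd (hout h) (not_lt.mpr hle)
      have := sign_comb (rr := rr2) (hlam2 t h0 h1) hlc2pos hj0 (x := rt t s) (K := n) le_rfl
        (fun j i'' _ => by
          have := hrr2bd j i''
          have := abs_le.mp this
          linarith [this.1])
        (fun j i'' hi'' => absurd hi'' (by have := i''.isLt; omega))
      rw [hcomb t] at this
      rw [hroot] at this
      simp at this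
    · have := sign_comb (rr := rr2) (hlam2 t h0 h1) hlc2pos hj0 (x := rt t s) (K := 0)
        (Nat.zero_le n)
        (fun j i'' hi'' => absurd hi'' (Nat.not_lt_zero _))
        (fun j i'' _ => by
          have := (abs_le.mp (hrr2bd j i'')).2
          linarith)
      rw [hcomb t] at this
      rw [hroot] at this
      simp at this
  -- continuity of the root listings
  have hcont : ∀ t0 : ℝ, 0 ≤ t0 → t0 ≤ 1 → ∀ tq : ℕ → ℝ,
      (∀ q, 0 ≤ tq q ∧ tq q ≤ 1) → Tendsto tq atTop (𝓝 t0) →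
      ∀ s, Tendsto (fun q => rt (tq q) s) atTop (𝓝 (rt t0 s)) := by
    intro t0 h00 h01 tq htq hlim
    apply conv (L := fun q => Lf (tq q)) (L0 := Lf t0) ?_ (hLpos t0 h00 h01).ne'
      (fun q s => hbd _ (htq q).1 (htq q).2 s) (fun q => hrta _ (htq q).1 (htq q).2)
      (hrta t0 h00 h01)
    · -- evaluation convergence
      intro x
      have he1 : ∀ t : ℝ, 0 ≤ t → t ≤ 1 →
          Lf t * ∏ i'', (x - rt t i'') = (1 - t) * F.eval x + t * G.eval x := by
        intro t h0 h1
        rw [← eval_pp, ← hrept t h0 h1]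
        simp [hht_def]
      have heq : (fun q => Lf (tq q) * ∏ i'', (x - rt (tq q) i''))
          = fun q => (1 - tq q) * F.eval x + tq q * G.eval x :=
        funext fun q => he1 _ (htq q).1 (htq q).2
      rw [heq]
      have hval : (pp (Lf t0) (rt t0)).eval x = (1 - t0) * F.eval x + t0 * G.eval x := by
        rw [← hrept t0 h00 h01]
        simp [hht_def]
      rw [hval]
      exact ((tendsto_const_nhds.sub hlim).mul tendsto_const_nhds).add
        (hlim.mul tendsto_const_nhds)
    · -- convergence of the leading coefficients
      simp only [hLf_def]
      exact ((tendsto_const_nhds.sub hlim).mul tendsto_const_nhds).add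
        (hlim.mul tendsto_const_nhds)
  -- main claim : the Wronskian vanishes on the gap interval
  set W : Polynomial ℝ := F * Polynomial.derivative G - Polynomial.derivative F * G
    with hW_def
  have hWc : ∀ c : ℝ, ρG i' < c → c < ρF i → F.eval c ≠ 0 → G.eval c ≠ 0 →
      W.eval c = 0 := by
    intro c hc1 hc2 hcF hcG
    set N : ℝ → ℕ := fun t => (Finset.univ.filter fun s => c < rt t s).card with hN_def
    have haff : ∀ t : ℝ, (ht t).eval c = F.eval c + t * (G.eval c - F.eval c) := by
      intro t
      simp only [hht_def, Polynomial.eval_add, Polynomial.eval_mul, Polynomial.eval_C]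
      ring
    have huniq : ∀ t t' : ℝ, (ht t).eval c = 0 → (ht t').eval c = 0 → t = t' := by
      intro t t' h1 h2
      by_contra hne'
      rw [haff] at h1 h2
      have h3 : (t - t') * (G.eval c - F.eval c) = 0 := by linear_combination h1 - h2
      rcases mul_eq_zero.mp h3 with h4 | h4
      · exact hne' (by linarith [sub_eq_zero.mp h4])
      · rw [h4, mul_zero, add_zero] at h1
        exact hcF h1
    have hNev : ∀ t0 : ℝ, 0 ≤ t0 → t0 ≤ 1 → (ht t0).eval c ≠ 0 → ∀ tq : ℕ → ℝ,
        (∀ q, 0 ≤ tq q ∧ tq q ≤ 1) → Tendsto tq atTop (𝓝 t0) →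
        ∀ᶠ q in atTop, N (tq q) = N t0 := by
      intro t0 h00 h01 hc0 tq htq hlim
      have hnotc : ∀ s, rt t0 s ≠ c := by
        intro s hs
        apply hc0
        have hcm : c ∈ (ht t0).roots := by
          rw [← hrtl t0 h00 h01, ← hs]
          exact Multiset.mem_coe.mpr (by rw [List.mem_ofFn]; exact ⟨s, rfl⟩)
        exact (Polynomial.mem_roots (hnet t0 h00 h01)).mp hcm
      have hev' : ∀ᶠ q in atTop, ∀ s : Fin n, (c < rt (tq q) s ↔ c < rt t0 s) := by
        rw [eventually_all]
        intro s
        rcases lt_or_gt_of_ne (hnotc s) with h | h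
        · exact ((hcont t0 h00 h01 tq htq hlim s).eventually_lt_const h).mono
            fun q hq => iff_of_false (not_lt.mpr hq.le) (not_lt.mpr h.le)
        · exact ((hcont t0 h00 h01 tq htq hlim s).eventually_const_lt h).mono
            fun q hq => iff_of_true hq h
      filter_upwards [hev'] with q hq
      simp only [hN_def]
      exact congrArg Finset.card (Finset.filter_congr fun s _ => hq s)
    have hconst : ∀ u v : ℝ, 0 ≤ u → v ≤ 1 → u ≤ v →
        (∀ s : ℝ, s ∈ Set.Icc u v → (ht s).eval c ≠ 0) → N u = N v := by
      intro u v hu0 hv1 huv hnz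
      have hIcc : ∀ x ∈ Set.Icc u v, 0 ≤ x ∧ x ≤ 1 :=
        fun x hx => ⟨le_trans hu0 hx.1, le_trans hx.2 hv1⟩
      set A : Set ℝ := {t | t ∈ Set.Icc u v ∧ N t = N u} with hA_def
      set B : Set ℝ := {t | t ∈ Set.Icc u v ∧ N t ≠ N u} with hB_def
      have hseq : ∀ (xq : ℕ → ℝ) (p : ℝ), (∀ q, xq q ∈ Set.Icc u v) →
          Tendsto xq atTop (𝓝 p) → p ∈ Set.Icc u v ∧ ∀ᶠ q in atTop, N (xq q) = N p := by
        intro xq p hxq hxlim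
        have hp : p ∈ Set.Icc u v := isClosed_Icc.isSeqClosed hxq hxlim
        exact ⟨hp, hNev p (hIcc p hp).1 (hIcc p hp).2 (hnz p hp) xq
          (fun q => hIcc _ (hxq q)) hxlim⟩
      have hAc : IsClosed A := by
        apply IsSeqClosed.isClosed
        intro xq p hxq hxlim
        obtain ⟨hp, hev⟩ := hseq xq p (fun q => (hxq q).1) hxlim
        obtain ⟨q, hq⟩ := hev.exists
        exact ⟨hp, by rw [← hq, (hxq q).2]⟩
      have hBc : IsClosed B := by
        apply IsSeqClosed.isClosed
        intro xq p hxq hxlim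
        obtain ⟨hp, hev⟩ := hseq xq p (fun q => (hxq q).1) hxlim
        obtain ⟨q, hq⟩ := hev.exists
        exact ⟨hp, by rw [← hq]; exact (hxq q).2⟩
      by_contra hNuv
      have hnon : (Set.Icc u v ∩ (A ∩ B)).Nonempty := by
        apply (isPreconnected_closed_iff.mp isPreconnected_Icc) A B hAc hBc
        · intro t htuv
          by_cases hN : N t = N u
          · exact Or.inl ⟨htuv, hN⟩
          · exact Or.inr ⟨htuv, hN⟩
        · exact ⟨u, Set.left_mem_Icc.mpr huv, Set.left_mem_Icc.mpr huv, rfl⟩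
        · exact ⟨v, Set.right_mem_Icc.mpr huv, Set.right_mem_Icc.mpr huv,
            fun h => hNuv h.symm⟩
      obtain ⟨x, -, hxA, hxB⟩ := hnon
      exact hxB.2 hxA.2
    have hN0 : (i : ℕ) < N 0 := by
      have hdc : ∀ s s' : Fin n, s ≤ s' → c < ρF s' → c < ρF s :=
        fun s s' hss h => lt_of_lt_of_le h (hρFa hss)
      have h := (filter_downward hdc i).mpr hc2
      simpa [hN_def, hrt0] using h
    have hN1 : N 1 ≤ (i : ℕ) - 1 := by
      by_contra hcon
      push_neg at hcon
      have hdc : ∀ s s' : Fin n, s ≤ s' → c < ρG s' → c < ρG s :=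
        fun s s' hss h => lt_of_lt_of_le h (hρGa hss)
      have hval : N 1 = (Finset.univ.filter fun s => c < ρG s).card := by
        simp [hN_def, hrt1]
      have h2 : ((i' : ℕ)) < (Finset.univ.filter fun s => c < ρG s).card := by
        rw [← hval]
        have : (i' : ℕ) = (i : ℕ) - 1 := rfl
        omega
      exact absurd ((filter_downward hdc i').mp h2) (not_lt.mpr hc1.le)
    have hex0 : ∃ T, (0 ≤ T ∧ T ≤ 1) ∧ (ht T).eval c = 0 := by
      by_contra hno
      push_neg at hno
      have h := hconst 0 1 le_rfl le_rfl zero_le_one (fun s hs => hno s ⟨hs.1, hs.2⟩)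
      omega
    obtain ⟨T, ⟨hT0, hT1⟩, hTc⟩ := hex0
    have hTne0 : T ≠ 0 := by
      intro h
      rw [h, haff 0] at hTc
      simp at hTc
      exact hcF hTc
    have hTne1 : T ≠ 1 := by
      intro h
      rw [h, haff 1] at hTc
      have hG0 : G.eval c = 0 := by linarith
      exact hcG hG0
    have hTpos : 0 < T := lt_of_le_of_ne hT0 (Ne.symm hTne0)
    have hTlt1 : T < 1 := lt_of_le_of_ne hT1 hTne1
    have honly : ∀ s : ℝ, (ht s).eval c = 0 → s = T := fun s hs => huniq s T hs hTc
    set Sgt := Finset.univ.filter (fun s => c < rt T s) with hSgt_def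
    set Seq := Finset.univ.filter (fun s => rt T s = c) with hSeq_def
    set tq : ℕ → ℝ := fun q => T - T / ((q : ℝ) + 1) with htq_def
    set tq' : ℕ → ℝ := fun q => T + (1 - T) / ((q : ℝ) + 1) with htq'_def
    have hq1cast : ∀ q : ℕ, (1:ℝ) ≤ (q:ℝ) + 1 := by
      intro q
      have := Nat.cast_nonneg (α := ℝ) q
      linarith
    have htqI : ∀ q, 0 ≤ tq q ∧ tq q ≤ 1 := by
      intro q
      have h1 : 0 < T / ((q:ℝ) + 1) := by positivity
      have h2 : T / ((q:ℝ) + 1) ≤ T := div_le_self hT0 (hq1cast q)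
      exact ⟨by simp only [htq_def]; linarith, by simp only [htq_def]; linarith⟩
    have htqltT : ∀ q, tq q < T := by
      intro q
      have h1 : 0 < T / ((q:ℝ) + 1) := by positivity
      simp only [htq_def]; linarith
    have htq'I : ∀ q, 0 ≤ tq' q ∧ tq' q ≤ 1 := by
      intro q
      have h1 : 0 < (1 - T) / ((q:ℝ) + 1) := by
        apply div_pos (by linarith) (by linarith [hq1cast q])
      have h2 : (1 - T) / ((q:ℝ) + 1) ≤ 1 - T := div_le_self (by linarith) (hq1cast q)
      exact ⟨by simp only [htq'_def]; linarith, by simp only [htq'_def]; linarith⟩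
    have htq'gtT : ∀ q, T < tq' q := by
      intro q
      have h1 : 0 < (1 - T) / ((q:ℝ) + 1) :=
        div_pos (by linarith) (by linarith [hq1cast q])
      simp only [htq'_def]; linarith
    have hbase : Tendsto (fun q : ℕ => 1 / ((q:ℝ) + 1)) atTop (𝓝 0) :=
      tendsto_one_div_add_atTop_nhds_zero_nat
    have htqlim : Tendsto tq atTop (𝓝 T) := by
      have h1 := hbase.const_mul T
      rw [mul_zero] at h1
      have h2 := (tendsto_const_nhds (α := ℕ) (x := T)).sub h1
      rw [sub_zero] at h2
      have : tq = fun q : ℕ => T - T * (1 / ((q:ℝ) + 1)) := by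
        funext q
        simp only [htq_def]
        ring
      rw [this]
      exact h2
    have htq'lim : Tendsto tq' atTop (𝓝 T) := by
      have h1 := hbase.const_mul (1 - T)
      rw [mul_zero] at h1
      have h2 := (tendsto_const_nhds (α := ℕ) (x := T)).add h1
      rw [add_zero] at h2
      have : tq' = fun q : ℕ => T + (1 - T) * (1 / ((q:ℝ) + 1)) := by
        funext q
        simp only [htq'_def]
        ring
      rw [this]
      exact h2
    have hNtq : ∀ q, N (tq q) = N 0 := by
      intro q
      refine (hconst 0 (tq q) le_rfl (le_trans (htqI q).2 le_rfl) (htqI q).1 ?_).symm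
      intro s hs h0
      have hsT : s = T := honly s h0
      have := htqltT q
      rw [hsT] at hs
      linarith [hs.2]
    have hNtq' : ∀ q, N (tq' q) = N 1 := by
      intro q
      refine hconst (tq' q) 1 (htq'I q).1 le_rfl (htq'I q).2 ?_
      intro s hs h0
      have hsT : s = T := honly s h0
      have := htq'gtT q
      rw [hsT] at hs
      linarith [hs.1]
    have hev2 : ∀ᶠ q in atTop, ∀ s : Fin n, rt T s < c → rt (tq q) s < c := by
      rw [eventually_all]
      intro s
      by_cases h : rt T s < c
      · exact ((hcont T hT0 hT1 tq htqI htqlim s).eventually_lt_const h).mono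
          fun q hq _ => hq
      · exact Filter.Eventually.of_forall fun q hq => absurd hq h
    obtain ⟨q1, hq1⟩ := hev2.exists
    have hsub1 : (Finset.univ.filter fun s => c < rt (tq q1) s) ⊆ Sgt ∪ Seq := by
      intro s hs
      rw [Finset.mem_filter] at hs
      rw [Finset.mem_union, hSgt_def, hSeq_def, Finset.mem_filter, Finset.mem_filter]
      rcases lt_trichotomy (rt T s) c with h | h | h
      · exact absurd (hq1 s h) (not_lt.mpr hs.2.le)
      · exact Or.inr ⟨Finset.mem_univ _, h⟩
      · exact Or.inl ⟨Finset.mem_univ _, h⟩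
    have hupper : N 0 ≤ Sgt.card + Seq.card := by
      rw [← hNtq q1]
      calc N (tq q1) ≤ (Sgt ∪ Seq).card := Finset.card_le_card hsub1
        _ ≤ Sgt.card + Seq.card := Finset.card_union_le _ _
    have hev3 : ∀ᶠ q in atTop, ∀ s : Fin n, c < rt T s → c < rt (tq' q) s := by
      rw [eventually_all]
      intro s
      by_cases h : c < rt T s
      · exact ((hcont T hT0 hT1 tq' htq'I htq'lim s).eventually_const_lt h).mono
          fun q hq _ => hq
      · exact Filter.Eventually.of_forall fun q hq => absurd hq h
    obtain ⟨q2, hq2⟩ := hev3.exists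
    have hsub2 : Sgt ⊆ (Finset.univ.filter fun s => c < rt (tq' q2) s) := by
      intro s hs
      rw [hSgt_def, Finset.mem_filter] at hs
      exact Finset.mem_filter.mpr ⟨Finset.mem_univ _, hq2 s hs.2⟩
    have hlower : Sgt.card ≤ N 1 := by
      rw [← hNtq' q2]
      exact Finset.card_le_card hsub2
    have hSeq2 : 2 ≤ Seq.card := by omega
    have hcount : (ht T).roots.count c = Seq.card := by
      rw [← hrtl T hT0 hT1, ← Fin.univ_val_map, Multiset.count_map]
      have hflip : Multiset.filter (fun a => c = rt T a) Finset.univ.val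
          = Multiset.filter (fun a => rt T a = c) Finset.univ.val :=
        Multiset.filter_congr (fun x _ => eq_comm)
      rw [hflip, hSeq_def]
      rfl
    have hmul : 2 ≤ (ht T).rootMultiplicity c := by
      rw [← Polynomial.count_roots]
      omega
    obtain ⟨k, hk⟩ : (Polynomial.X - Polynomial.C c) ^ 2 ∣ ht T :=
      (pow_dvd_pow _ hmul).trans (Polynomial.pow_rootMultiplicity_dvd _ _)
    have hder0 : (Polynomial.derivative (ht T)).eval c = 0 := by
      rw [hk, Polynomial.derivative_mul, Polynomial.derivative_X_sub_C_sq]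
      simp
    have he1 : (1 - T) * F.eval c + T * G.eval c = 0 := by
      have h := hTc
      simp only [hht_def, Polynomial.eval_add, Polynomial.eval_mul, Polynomial.eval_C] at h
      linarith
    have he2 : (1 - T) * (Polynomial.derivative F).eval c
        + T * (Polynomial.derivative G).eval c = 0 := by
      have hd : Polynomial.derivative (ht T) = Polynomial.C (1 - T) * Polynomial.derivative F
          + Polynomial.C T * Polynomial.derivative G := by
        simp [hht_def, Polynomial.derivative_add, Polynomial.derivative_C_mul]
      rw [hd] at hder0
      simp only [Polynomial.eval_add, Polynomial.eval_mul, Polynomial.eval_C] at hder0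
      linarith
    have hTW : T * W.eval c = 0 := by
      have hWeval : W.eval c = F.eval c * (Polynomial.derivative G).eval c
          - (Polynomial.derivative F).eval c * G.eval c := by
        simp [hW_def]
      rw [hWeval]
      linear_combination (F.eval c) * he2 - ((Polynomial.derivative F).eval c) * he1
    rcases mul_eq_zero.mp hTW with h | h
    · exact absurd h hTne0
    · exact h
  -- conclude
  have hWzero : W = 0 := by
    apply Polynomial.eq_zero_of_infinite_isRoot
    have hinf : (Set.Ioo (ρG i') (ρF i) \
        ({x | F.IsRoot x} ∪ {x | G.IsRoot x})).Infinite :=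
      (Set.Ioo_infinite hlt).diff
        ((Polynomial.finite_setOf_isRoot hFne).union (Polynomial.finite_setOf_isRoot hGne))
    refine hinf.mono ?_
    rintro x ⟨⟨hx1, hx2⟩, hx3⟩
    simp only [Set.mem_union, Set.mem_setOf_eq, not_or] at hx3
    exact hWc x hx1 hx2 hx3.1 hx3.2
  have hFG : F * Polynomial.derivative G = Polynomial.derivative F * G := by
    have := hWzero
    rw [hW_def, sub_eq_zero] at this
    exact this
  have hrooteq : F.roots = G.roots := roots_eq_of_wronskian hFne hGne hFG
  have hρeq : ρF = ρG := listing_unique hρFa hρGa (by rw [hρFcoe, hrooteq, ← hρGcoe])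
  have hmono : ρF i ≤ ρF i' := hρFa (Fin.le_def.mpr (by show (i : ℕ) - 1 ≤ (i : ℕ); omega))
  rw [hρeq] at hmono hlt
  linarith



end CIaux

open CIaux in
/-- Real-rooted polynomials `f₁,…,f_m` of the same degree `n` with positive leading
coefficients have a common interlacing (there are `β_n ≤ … ≤ β₁` such that the `i`-th largest
root of each `f j` lies in `[βᵢ, βᵢ₋₁]`, with `β₀ = +∞`) if and only if every convex
combination of them is real rooted.  `ρ j` lists the roots of `f j` in decreasing order. -/
theorem common_interlacing_iff_convex_real_rooted (n m : ℕ) (hm : 0 < m)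
    (f : Fin m → Polynomial ℝ)
    (hdeg : ∀ j, (f j).natDegree = n)
    (hlead : ∀ j, 0 < (f j).leadingCoeff)
    (hroots : ∀ j, (f j).roots.card = n)
    (ρ : Fin m → Fin n → ℝ)
    (hρa : ∀ j, Antitone (ρ j))
    (hρ : ∀ j, (↑(List.ofFn (ρ j)) : Multiset ℝ) = (f j).roots) :
    (∃ β : Fin n → ℝ, Antitone β ∧
        (∀ j i, β i ≤ ρ j i) ∧
        (∀ j, ∀ i : Fin n, 0 < (i : ℕ) →
          ρ j i ≤ β ⟨(i : ℕ) - 1, lt_of_le_of_lt (Nat.sub_le _ _) i.isLt⟩)) ↔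
      (∀ lam : Fin m → ℝ, (∀ j, 0 ≤ lam j) → (∑ j, lam j) = 1 →
        (∑ j, Polynomial.C (lam j) * f j).roots.card = n) := by
  classical
  constructor
  · rintro ⟨β, hβa, hβ1, hβ2⟩ lam hlam hlam1
    exact forward f hdeg hlead hroots ρ hρ β hβa hβ1 hβ2 lam hlam hlam1
  · intro H
    have hne : Nonempty (Fin m) := ⟨⟨0, hm⟩⟩
    -- the key crossing estimate
    have claim : ∀ j k : Fin m, ∀ i : Fin n, 0 < (i : ℕ) →
        ρ j i ≤ ρ k ⟨(i : ℕ) - 1, lt_of_le_of_lt (Nat.sub_le _ _) i.isLt⟩ := by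
      intro j k i hi
      by_contra hcon
      push_neg at hcon
      by_cases hjk : j = k
      · subst hjk
        have hle : (⟨(i : ℕ) - 1, lt_of_le_of_lt (Nat.sub_le _ _) i.isLt⟩ : Fin n) ≤ i :=
          Fin.le_def.mpr (Nat.sub_le _ _)
        have := hρa j hle
        linarith
      · -- use the two-polynomial crossing lemma
        have hsplit : ∀ u v : ℝ,
            (∑ s, Polynomial.C (if s = j then u else if s = k then v else 0) * f s)
              = Polynomial.C u * f j + Polynomial.C v * f k := by
          intro u v
          have hzero : ∀ x ∈ Finset.univ, x ∉ ({j, k} : Finset (Fin m)) →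
              Polynomial.C (if x = j then u else if x = k then v else 0) * f x = 0 := by
            intro x _ hx
            simp only [Finset.mem_insert, Finset.mem_singleton, not_or] at hx
            rw [if_neg hx.1, if_neg hx.2]
            simp
          rw [← Finset.sum_subset (Finset.subset_univ ({j, k} : Finset (Fin m))) hzero,
            Finset.sum_pair hjk]
          rw [if_pos rfl, if_neg (Ne.symm hjk), if_pos rfl]
        have H2 : ∀ t : ℝ, 0 ≤ t → t ≤ 1 →
            (Polynomial.C (1 - t) * f j + Polynomial.C t * f k).roots.card = n := by
          intro t h0 h1
          have hlamnn : ∀ s : Fin m,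
              0 ≤ (if s = j then 1 - t else if s = k then t else 0) := by
            intro s
            by_cases hs : s = j
            · rw [if_pos hs]; linarith
            · rw [if_neg hs]
              by_cases hs' : s = k
              · rw [if_pos hs']; linarith
              · rw [if_neg hs']
          have hlamsum : (∑ s, (if s = j then 1 - t else if s = k then t else 0)) = 1 := by
            have hzero : ∀ x ∈ Finset.univ, x ∉ ({j, k} : Finset (Fin m)) →
                (if x = j then 1 - t else if x = k then t else 0) = 0 := by
              intro x _ hx
              simp only [Finset.mem_insert, Finset.mem_singleton, not_or] at hx
              rw [if_neg hx.1, if_neg hx.2]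
            rw [← Finset.sum_subset (Finset.subset_univ ({j, k} : Finset (Fin m))) hzero,
              Finset.sum_pair hjk, if_pos rfl, if_neg (Ne.symm hjk), if_pos rfl]
            ring
          have := H (fun s => if s = j then 1 - t else if s = k then t else 0)
            hlamnn hlamsum
          rwa [hsplit (1 - t) t] at this
        exact cross (hlead j) (hlead k) (hρa j) (hρa k)
          (rep (hdeg j) (hroots j) (hρ j)) (rep (hdeg k) (hroots k) (hρ k))
          H2 i hi hcon
    -- define the common interlacing
    refine ⟨fun i => Finset.univ.inf' (Finset.univ_nonempty) (fun j => ρ j i), ?_, ?_, ?_⟩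
    · intro i i' hii'
      apply Finset.le_inf'
      intro k _
      exact le_trans (Finset.inf'_le _ (Finset.mem_univ k)) (hρa k hii')
    · intro j i
      exact Finset.inf'_le _ (Finset.mem_univ j)
    · intro j i hi
      apply Finset.le_inf'
      intro k _
      exact claim j k i hi
end

section
/- Let f₁,…,f_m ∈ ℝ[x] be real-rooted polynomials of the same degree n with positive leading coefficients that have a common interlacing, and let λ₁,…,λ_m ≥ 0 with Σλ_i = 1. Then for each 1 ≤ i ≤ n, the i-th largest root of λ₁f₁+⋯+λ_m f_m lies in the closed interval [min_j r_i(f_j), max_j r_i(f_j)], where r_i(f_j) denotes the i-th largest root of f_j. -/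
open scoped BigOperators

open Polynomial Finset

namespace RootHull

variable {α : Type*}

lemma prod_neg_eq {ι : Type*} (s : Finset ι) (g : ι → ℝ) :
    ∏ i ∈ s, (-g i) = (-1 : ℝ)^s.card * ∏ i ∈ s, g i := by
  rw [← Finset.prod_const, ← Finset.prod_mul_distrib]
  simp

lemma sa_val {N : ℕ} (p : Fin (N+1)) (k : Fin N) :
    ((p.succAbove k : Fin (N+1)) : ℕ) = if (k:ℕ) < (p:ℕ) then (k:ℕ) else (k:ℕ)+1 := by
  by_cases h : (k:ℕ) < (p:ℕ)
  · rw [Fin.succAbove_of_castSucc_lt p k (by simpa [Fin.lt_def] using h)]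
    simp [h]
  · rw [Fin.succAbove_of_le_castSucc p k (by simpa [Fin.le_def] using Nat.le_of_not_lt h)]
    simp [h]

lemma multiset_ofFn_eq {N : ℕ} (v : Fin (N+1) → α) (K : Fin (N+1)) :
    (↑(List.ofFn v) : Multiset α) = v K ::ₘ ↑(List.ofFn (fun k => v (K.succAbove k))) := by
  classical
  have huval : ∀ (q : ℕ) (w : Fin q → α),
      (↑(List.ofFn w) : Multiset α) = Multiset.map w (univ : Finset (Fin q)).val := by
    intro q w
    rw [List.ofFn_eq_map, Fin.univ_def]
    rfl
  have huniv : (univ : Finset (Fin (N+1))) =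
      insert K ((univ : Finset (Fin N)).map ⟨K.succAbove, Fin.succAbove_right_injective⟩) := by
    ext x
    simp only [mem_insert, mem_map, mem_univ, true_iff, Function.Embedding.coeFn_mk]
    by_cases hx : x = K
    · exact Or.inl hx
    · obtain ⟨z, hz⟩ := Fin.exists_succAbove_eq hx
      exact Or.inr ⟨z, trivial, hz⟩
  have hnot : K ∉ (univ : Finset (Fin N)).map ⟨K.succAbove, Fin.succAbove_right_injective⟩ := by
    simp only [mem_map, Function.Embedding.coeFn_mk]
    rintro ⟨z, -, hz⟩
    exact Fin.succAbove_ne K z hz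
  rw [huval, huval, huniv, Finset.insert_val_of_notMem hnot, Multiset.map_cons, Finset.map_val,
    Multiset.map_map]
  rfl

lemma card_filter_lt (n c : ℕ) (hc : c ≤ n) :
    ((univ : Finset (Fin n)).filter (fun k : Fin n => (k:ℕ) < c)).card = c := by
  classical
  rw [Finset.card_filter]
  rw [Fin.sum_univ_eq_sum_range (fun k => if k < c then 1 else 0)]
  rw [Finset.sum_boole]
  simp only [Nat.cast_id]
  have he : Finset.filter (fun i => i < c) (range n) = range c := by
    ext a
    simp only [mem_filter, mem_range]
    omega
  rw [he, Finset.card_range]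

lemma prod_sign_nonneg {n : ℕ} (x : ℝ) (v : Fin n → ℝ) (P : Fin n → Prop) [DecidablePred P]
    (h1 : ∀ k, P k → x ≤ v k) (h2 : ∀ k, ¬ P k → v k ≤ x) :
    0 ≤ (-1 : ℝ)^((univ.filter P).card) * ∏ k, (x - v k) := by
  rw [← Finset.prod_filter_mul_prod_filter_not univ P, ← mul_assoc, ← prod_neg_eq]
  apply mul_nonneg
  · apply Finset.prod_nonneg
    intro k hk
    simp only [mem_filter] at hk
    have := h1 k hk.2
    linarith
  · apply Finset.prod_nonneg
    intro k hk
    simp only [mem_filter] at hk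
    have := h2 k hk.2
    linarith

lemma prod_sign_pos {n : ℕ} (x : ℝ) (v : Fin n → ℝ) (P : Fin n → Prop) [DecidablePred P]
    (h1 : ∀ k, P k → x < v k) (h2 : ∀ k, ¬ P k → v k < x) :
    0 < (-1 : ℝ)^((univ.filter P).card) * ∏ k, (x - v k) := by
  rw [← Finset.prod_filter_mul_prod_filter_not univ P, ← mul_assoc, ← prod_neg_eq]
  apply mul_pos
  · apply Finset.prod_pos
    intro k hk
    simp only [mem_filter] at hk
    have := h1 k hk.2
    linarith
  · apply Finset.prod_pos
    intro k hk
    simp only [mem_filter] at hk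
    have := h2 k hk.2
    linarith

lemma signs_eq {a b : ℕ} {y : ℝ} (h1 : 0 < (-1:ℝ)^a * y) (h2 : 0 ≤ (-1:ℝ)^b * y) :
    ((-1:ℝ))^a = (-1)^b := by
  rcases neg_one_pow_eq_or ℝ a with ha | ha <;> rcases neg_one_pow_eq_or ℝ b with hb | hb <;>
      rw [ha] at h1 <;> rw [hb] at h2 <;> rw [ha, hb] <;>
    first
      | rfl
      | (exfalso; nlinarith)

lemma eval_eq_leading_mul_prod {n : ℕ} (p : Polynomial ℝ) (t : Fin n → ℝ)
    (hd : p.natDegree = n) (hr : p.roots = ↑(List.ofFn t)) (x : ℝ) :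
    p.eval x = p.leadingCoeff * ∏ k, (x - t k) := by
  have hsplits : p.Splits := by
    rw [Polynomial.splits_iff_card_roots, hr, hd]
    simp
  have hfact := hsplits.eq_prod_roots
  conv_lhs => rw [hfact]
  rw [Polynomial.eval_mul, Polynomial.eval_C, Polynomial.eval_multiset_prod, Multiset.map_map, hr]
  congr 1
  have h2 : (Multiset.map (Polynomial.eval x ∘ fun a => Polynomial.X - Polynomial.C a)
      (↑(List.ofFn t) : Multiset ℝ)) = ↑(List.ofFn (fun k => x - t k)) := by
    simp only [Multiset.map_coe, List.map_ofFn]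
    have hfun : (Polynomial.eval x ∘ fun a => Polynomial.X - Polynomial.C a) ∘ t
        = fun k => x - t k := by
      funext k
      simp
    rw [hfun]
  rw [h2]
  exact List.prod_ofFn


def Good (n : ℕ) : Prop :=
  ∀ (m : ℕ) (f : Fin m → Polynomial ℝ) (ρ : Fin m → Fin n → ℝ) (β : Fin n → ℝ)
    (lam : Fin m → ℝ) (τ : Fin n → ℝ),
    (∀ j, (f j).natDegree = n) →
    (∀ j, 0 < (f j).leadingCoeff) →
    (∀ j, (f j).roots = ↑(List.ofFn (ρ j))) →
    (∀ j, Antitone (ρ j)) →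
    Antitone β →
    (∀ j i, β i ≤ ρ j i) →
    (∀ j (s t : Fin n), (s:ℕ) = (t:ℕ)+1 → ρ j s ≤ β t) →
    (∀ j, 0 ≤ lam j) → (∑ j, lam j) = 1 →
    (∀ j, ∃ j', 0 < lam j' ∧ f j' = f j ∧ ρ j' = ρ j) →
    Antitone τ →
    ((∑ j, Polynomial.C (lam j) * f j).roots = ↑(List.ofFn τ)) →
    ∀ i : Fin n, (∃ j, τ i ≤ ρ j i) ∧ (∃ j, ρ j i ≤ τ i)

lemma good_zero : Good 0 := by
  intro m f ρ β lam τ _ _ _ _ _ _ _ _ _ _ _ _ i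
  exact i.elim0


lemma good_succ (N : ℕ) (IH : Good N) : Good (N+1) := by
  classical
  intro m f ρ β lam τ hdeg hlead hroots hρa hβa hlow hhigh hlam hlam1 hrep hτa hτ
  set G : Polynomial ℝ := ∑ j, Polynomial.C (lam j) * f j with hGdef
  -- basic facts
  have hFne : ∀ j, f j ≠ 0 := fun j => Polynomial.leadingCoeff_ne_zero.mp (ne_of_gt (hlead j))
  have hj0 : ∃ j, 0 < lam j := by
    by_contra h
    push_neg at h
    have h1 : (∑ j, lam j) ≤ 0 := Finset.sum_nonpos (fun j _ => h j)
    rw [hlam1] at h1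
    linarith
  obtain ⟨j₀, hj₀⟩ := hj0
  have hGcoeff : G.coeff (N+1) = ∑ j, lam j * (f j).leadingCoeff := by
    rw [hGdef, Polynomial.finset_sum_coeff]
    apply Finset.sum_congr rfl
    intro j _
    rw [Polynomial.coeff_C_mul]
    congr 1
    rw [← hdeg j]
    rfl
  have hGLpos : 0 < ∑ j, lam j * (f j).leadingCoeff := by
    apply Finset.sum_pos'
    · intro j _
      exact mul_nonneg (hlam j) (hlead j).le
    · exact ⟨j₀, Finset.mem_univ _, mul_pos hj₀ (hlead j₀)⟩
  have hGne : G ≠ 0 := by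
    intro h
    rw [h, Polynomial.coeff_zero] at hGcoeff
    rw [← hGcoeff] at hGLpos
    exact lt_irrefl 0 hGLpos
  have hGdeg : G.natDegree = N+1 := by
    apply le_antisymm
    · apply Polynomial.natDegree_sum_le_of_forall_le
      intro j _
      exact le_trans (Polynomial.natDegree_C_mul_le _ _) (le_of_eq (hdeg j))
    · apply Polynomial.le_natDegree_of_ne_zero
      rw [hGcoeff]
      exact ne_of_gt hGLpos
  have hGlead : 0 < G.leadingCoeff := by
    rw [Polynomial.leadingCoeff, hGdeg, hGcoeff]
    exact hGLpos
  have hGroots : G.roots = ↑(List.ofFn τ) := hτ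
  have evalG : ∀ x, G.eval x = G.leadingCoeff * ∏ k, (x - τ k) :=
    eval_eq_leading_mul_prod G τ hGdeg hGroots
  have evalF : ∀ j x, (f j).eval x = (f j).leadingCoeff * ∏ k, (x - ρ j k) :=
    fun j => eval_eq_leading_mul_prod (f j) (ρ j) (hdeg j) (hroots j)
  have evalGsum : ∀ x, G.eval x = ∑ j, lam j * (f j).eval x := by
    intro x
    rw [hGdef, Polynomial.eval_finset_sum]
    apply Finset.sum_congr rfl
    intro j _
    rw [Polynomial.eval_mul, Polynomial.eval_C]
  -- monotone helpers (ℕ-style)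
  have hβm : ∀ (s t : ℕ) (hs : s < N+1) (ht : t < N+1), s ≤ t → β ⟨t,ht⟩ ≤ β ⟨s,hs⟩ :=
    fun s t hs ht h => hβa (Fin.mk_le_mk.mpr h)
  have hτm : ∀ (s t : ℕ) (hs : s < N+1) (ht : t < N+1), s ≤ t → τ ⟨t,ht⟩ ≤ τ ⟨s,hs⟩ :=
    fun s t hs ht h => hτa (Fin.mk_le_mk.mpr h)
  have hρm : ∀ j (s t : ℕ) (hs : s < N+1) (ht : t < N+1), s ≤ t → ρ j ⟨t,ht⟩ ≤ ρ j ⟨s,hs⟩ :=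
    fun j s t hs ht h => hρa j (Fin.mk_le_mk.mpr h)
  have hlow' : ∀ j (s : ℕ) (hs : s < N+1), β ⟨s,hs⟩ ≤ ρ j ⟨s,hs⟩ := fun j s hs => hlow j ⟨s,hs⟩
  have hhigh' : ∀ j (s t : ℕ) (hs : s < N+1) (ht : t < N+1), s = t+1 → ρ j ⟨s,hs⟩ ≤ β ⟨t,ht⟩ :=
    fun j s t hs ht h => hhigh j ⟨s,hs⟩ ⟨t,ht⟩ h
  -- sign lemmas
  have signF : ∀ j (x : ℝ) (c : ℕ), c ≤ N+1 →
      (∀ k : Fin (N+1), (k:ℕ) < c → x ≤ ρ j k) →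
      (∀ k : Fin (N+1), c ≤ (k:ℕ) → ρ j k ≤ x) →
      0 ≤ (-1:ℝ)^c * (f j).eval x := by
    intro j x c hc h1 h2
    rw [evalF j x]
    have hp := prod_sign_nonneg x (ρ j) (fun k => (k:ℕ) < c) h1
      (fun k hk => h2 k (Nat.le_of_not_lt hk))
    rw [card_filter_lt _ _ hc] at hp
    have hre : (-1:ℝ)^c * ((f j).leadingCoeff * ∏ k, (x - ρ j k))
        = (f j).leadingCoeff * ((-1:ℝ)^c * ∏ k, (x - ρ j k)) := by ring
    rw [hre]
    exact mul_nonneg (hlead j).le hp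
  have signG : ∀ (x : ℝ) (c : ℕ), (∀ j, 0 ≤ (-1:ℝ)^c * (f j).eval x) →
      0 ≤ (-1:ℝ)^c * G.eval x := by
    intro x c hj
    rw [evalGsum, Finset.mul_sum]
    apply Finset.sum_nonneg
    intro j _
    have hre : (-1:ℝ)^c * (lam j * (f j).eval x) = lam j * ((-1:ℝ)^c * (f j).eval x) := by ring
    rw [hre]
    exact mul_nonneg (hlam j) (hj j)
  have signFβ : ∀ j (s : ℕ) (hs : s < N+1), 0 ≤ (-1:ℝ)^(s+1) * (f j).eval (β ⟨s,hs⟩) := by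
    intro j s hs
    apply signF j _ (s+1) (by omega)
    · intro k hk
      exact le_trans (hβm (k:ℕ) s k.isLt hs (by omega)) (hlow j k)
    · intro k hk
      have h1 : ρ j k ≤ β ⟨(k:ℕ)-1, by omega⟩ := hhigh' j (k:ℕ) ((k:ℕ)-1) k.isLt (by omega) (by omega)
      exact le_trans h1 (hβm s ((k:ℕ)-1) hs (by omega) (by omega))
  have signGβ : ∀ (s : ℕ) (hs : s < N+1), 0 ≤ (-1:ℝ)^(s+1) * G.eval (β ⟨s,hs⟩) :=
    fun s hs => signG _ (s+1) (fun j => signFβ j s hs)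
  have sumzero : ∀ (x : ℝ) (c : ℕ), (∀ j, 0 ≤ (-1:ℝ)^c * (f j).eval x) → G.eval x = 0 →
      ∀ j, (f j).eval x = 0 := by
    intro x c hsign hzero j
    have hterm : ∀ j', 0 ≤ lam j' * ((-1:ℝ)^c * (f j').eval x) :=
      fun j' => mul_nonneg (hlam j') (hsign j')
    have hsum : ∑ j', lam j' * ((-1:ℝ)^c * (f j').eval x) = 0 := by
      have hre : ∑ j', lam j' * ((-1:ℝ)^c * (f j').eval x)
          = (-1:ℝ)^c * ∑ j', lam j' * (f j').eval x := by
        rw [Finset.mul_sum]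
        apply Finset.sum_congr rfl
        intro j' _
        ring
      rw [hre, ← evalGsum, hzero, mul_zero]
    have hz := (Finset.sum_eq_zero_iff_of_nonneg (fun j' _ => hterm j')).mp hsum
    obtain ⟨j', hj'pos, hfj', _⟩ := hrep j
    have h0 := hz j' (Finset.mem_univ _)
    have h1 : ((-1:ℝ)^c * (f j').eval x) = 0 := by
      rcases mul_eq_zero.mp h0 with h | h
      · exact absurd h (ne_of_gt hj'pos)
      · exact h
    have h2 : (f j').eval x = 0 := by
      rcases mul_eq_zero.mp h1 with h | h
      · exact absurd h (pow_ne_zero c (by norm_num))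
      · exact h
    rw [← hfj']
    exact h2
  have rootτ : ∀ x, G.eval x = 0 → ∃ k, τ k = x := by
    intro x hx
    have h1 : x ∈ G.roots := (Polynomial.mem_roots hGne).mpr hx
    rw [hGroots] at h1
    rw [Multiset.mem_coe, List.mem_ofFn] at h1
    exact h1
  have rootρ : ∀ j x, (f j).eval x = 0 → ∃ k, ρ j k = x := by
    intro j x hx
    have h1 : x ∈ (f j).roots := (Polynomial.mem_roots (hFne j)).mpr hx
    rw [hroots j] at h1
    rw [Multiset.mem_coe, List.mem_ofFn] at h1
    exact h1
  have τisroot : ∀ k, G.eval (τ k) = 0 := by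
    intro k
    have h1 : τ k ∈ G.roots := by
      rw [hGroots, Multiset.mem_coe, List.mem_ofFn]
      exact ⟨k, rfl⟩
    exact Polynomial.isRoot_of_mem_roots h1
  -- zone roots
  have zoneRoot : ∀ (l : ℕ) (hl1 : 1 ≤ l) (hl2 : l < N+1),
      ∃ k : Fin (N+1), β ⟨l, hl2⟩ ≤ τ k ∧ τ k ≤ β ⟨l-1, by omega⟩ := by
    intro l hl1 hl2
    by_contra hno
    push_neg at hno
    set P : Fin (N+1) → Prop := fun k => β ⟨l-1, by omega⟩ < τ k with hP
    set t := ((univ : Finset (Fin (N+1))).filter P).card with ht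
    have hdich : ∀ k, ¬ P k → τ k < β ⟨l, hl2⟩ := by
      intro k hk
      by_contra hk2
      push_neg at hk2
      exact hk (hno k hk2)
    have hs1 : 0 < (-1:ℝ)^t * G.eval (β ⟨l-1, by omega⟩) := by
      rw [evalG]
      have hp := prod_sign_pos (β ⟨l-1, by omega⟩) τ P (fun k hk => hk)
        (fun k hk => lt_of_lt_of_le (hdich k hk) (hβm (l-1) l (by omega) hl2 (by omega)))
      have hre : (-1:ℝ)^t * (G.leadingCoeff * ∏ k, (β ⟨l-1, by omega⟩ - τ k))
          = G.leadingCoeff * ((-1:ℝ)^t * ∏ k, (β ⟨l-1, by omega⟩ - τ k)) := by ring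
      rw [hre]
      exact mul_pos hGlead hp
    have hs2 : 0 < (-1:ℝ)^t * G.eval (β ⟨l, hl2⟩) := by
      rw [evalG]
      have hp := prod_sign_pos (β ⟨l, hl2⟩) τ P
        (fun k hk => lt_of_le_of_lt (hβm (l-1) l (by omega) hl2 (by omega)) hk)
        (fun k hk => hdich k hk)
      have hre : (-1:ℝ)^t * (G.leadingCoeff * ∏ k, (β ⟨l, hl2⟩ - τ k))
          = G.leadingCoeff * ((-1:ℝ)^t * ∏ k, (β ⟨l, hl2⟩ - τ k)) := by ring
      rw [hre]
      exact mul_pos hGlead hp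
    have hw1 : 0 ≤ (-1:ℝ)^l * G.eval (β ⟨l-1, by omega⟩) := by
      have h0 := signGβ (l-1) (by omega)
      rwa [Nat.sub_add_cancel hl1] at h0
    have hw2 : 0 ≤ (-1:ℝ)^(l+1) * G.eval (β ⟨l, hl2⟩) := signGβ l hl2
    have e1 := signs_eq hs1 hw1
    have e2 := signs_eq hs2 hw2
    rw [e1] at e2
    rw [pow_succ] at e2
    rcases neg_one_pow_eq_or ℝ l with h | h <;> rw [h] at e2 <;> norm_num at e2
  have Z0root : ∃ k : Fin (N+1), β ⟨0, by omega⟩ ≤ τ k := by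
    by_contra hno
    push_neg at hno
    have hs : 0 < (-1:ℝ)^((univ.filter (fun _ : Fin (N+1) => False)).card)
        * ∏ k, (β ⟨0, by omega⟩ - τ k) :=
      prod_sign_pos _ τ (fun _ => False) (fun k hk => hk.elim) (fun k _ => hno k)
    rw [Finset.filter_false, Finset.card_empty, pow_zero, one_mul] at hs
    have hw : 0 ≤ (-1:ℝ)^(0+1) * G.eval (β ⟨0, by omega⟩) := signGβ 0 (by omega)
    rw [evalG] at hw
    rw [pow_one] at hw
    nlinarith [hGlead]
  -- common root forcing at β points
  have commonRootAt : ∀ (a : ℕ) (ha : a+1 < N+1), G.eval (β ⟨a, by omega⟩) = 0 →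
      ∀ j, ρ j ⟨a, by omega⟩ = β ⟨a, by omega⟩ ∨ ρ j ⟨a+1, ha⟩ = β ⟨a, by omega⟩ := by
    intro a ha hz j
    have hsign : ∀ j', 0 ≤ (-1:ℝ)^(a+1) * (f j').eval (β ⟨a, by omega⟩) :=
      fun j' => signFβ j' a (by omega)
    have hfz : (f j).eval (β ⟨a, by omega⟩) = 0 := sumzero _ (a+1) hsign hz j
    obtain ⟨kk, hkk⟩ := rootρ j _ hfz
    by_cases hcase : (kk:ℕ) ≤ a
    · left
      have h1 : ρ j ⟨a, by omega⟩ ≤ ρ j ⟨(kk:ℕ), kk.isLt⟩ := hρm j (kk:ℕ) a kk.isLt (by omega) hcase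
      have h2 : β ⟨a, by omega⟩ ≤ ρ j ⟨a, by omega⟩ := hlow' j a (by omega)
      rw [hkk] at h1
      linarith
    · right
      have h1 : ρ j ⟨(kk:ℕ), kk.isLt⟩ ≤ ρ j ⟨a+1, ha⟩ := hρm j (a+1) (kk:ℕ) ha kk.isLt (by omega)
      have h2 : ρ j ⟨a+1, ha⟩ ≤ β ⟨a, by omega⟩ := hhigh' j (a+1) a ha (by omega) rfl
      rw [hkk] at h1
      linarith
  -- interlacing transfer under index removal
  have key_low : ∀ j (b' K' : Fin (N+1)), ((K':ℕ) = (b':ℕ) ∨ (K':ℕ) = (b':ℕ)+1) →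
      ∀ k : Fin N, β (b'.succAbove k) ≤ ρ j (K'.succAbove k) := by
    intro j b' K' hbK k
    have hv : ((K'.succAbove k : Fin (N+1)) : ℕ) ≤ ((b'.succAbove k : Fin (N+1)) : ℕ) := by
      rw [sa_val, sa_val]
      rcases hbK with h | h <;> split_ifs <;> omega
    exact le_trans (hβm _ _ (K'.succAbove k).isLt (b'.succAbove k).isLt hv) (hlow j _)
  have key_high : ∀ j (b' K' : Fin (N+1)), ((K':ℕ) = (b':ℕ) ∨ (K':ℕ) = (b':ℕ)+1) →
      ∀ (s t : Fin N), (s:ℕ) = (t:ℕ)+1 → ρ j (K'.succAbove s) ≤ β (b'.succAbove t) := by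
    intro j b' K' hbK s t hst
    have hS : 1 ≤ ((K'.succAbove s : Fin (N+1)) : ℕ) ∧
        ((b'.succAbove t : Fin (N+1)) : ℕ) ≤ ((K'.succAbove s : Fin (N+1)) : ℕ) - 1 := by
      rw [sa_val, sa_val]
      rcases hbK with h | h <;> split_ifs <;> omega
    refine le_trans (hhigh' j _ (((K'.succAbove s : Fin (N+1)) : ℕ) - 1)
      (K'.succAbove s).isLt (by omega) (by omega)) ?_
    exact hβm ((b'.succAbove t : Fin (N+1)) : ℕ) (((K'.succAbove s : Fin (N+1)) : ℕ) - 1)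
      (b'.succAbove t).isLt (by omega) hS.2
  -- THE DESCENT
  have descent : ∀ (K : Fin m → Fin (N+1)) (b lrem : Fin (N+1)) (x₀ : ℝ),
      (∀ j, ρ j (K j) = x₀) →
      (∀ j j', ρ j = ρ j' → K j = K j') →
      (∀ j, (K j : ℕ) = (b:ℕ) ∨ (K j : ℕ) = (b:ℕ)+1) →
      τ lrem = x₀ →
      ∀ k : Fin N, (∃ j, τ (lrem.succAbove k) ≤ ρ j ((K j).succAbove k)) ∧
                   (∃ j, ρ j ((K j).succAbove k) ≤ τ (lrem.succAbove k)) := by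
    intro K b lrem x₀ hKρ hKdet hKb hτl
    have hdmonic : (Polynomial.X - Polynomial.C x₀).Monic := Polynomial.monic_X_sub_C x₀
    set d : Polynomial ℝ := Polynomial.X - Polynomial.C x₀ with hd
    set ft : Fin m → Polynomial ℝ := fun j => (f j) /ₘ d with hft
    have hfeq : ∀ j, f j = d * ft j := by
      intro j
      have hroot : x₀ ∈ (f j).roots := by
        rw [hroots j, Multiset.mem_coe, List.mem_ofFn]
        exact ⟨K j, hKρ j⟩
      have hdvd : d ∣ f j := (Polynomial.dvd_iff_isRoot).mpr (Polynomial.isRoot_of_mem_roots hroot)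
      have hmod : (f j) %ₘ d = 0 := (Polynomial.modByMonic_eq_zero_iff_dvd hdmonic).mpr hdvd
      have h0 := Polynomial.modByMonic_add_div (f j) d
      rw [hmod, zero_add] at h0
      exact h0.symm
    have hdne : d ≠ 0 := hdmonic.ne_zero
    have ftne : ∀ j, ft j ≠ 0 := by
      intro j h
      apply hFne j
      rw [hfeq j, h, mul_zero]
    have ftdeg : ∀ j, (ft j).natDegree = N := by
      intro j
      have h0 := hdeg j
      rw [hfeq j, Polynomial.natDegree_mul hdne (ftne j), hd, Polynomial.natDegree_X_sub_C] at h0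
      omega
    have ftlead : ∀ j, (ft j).leadingCoeff = (f j).leadingCoeff := by
      intro j
      rw [hfeq j, Polynomial.leadingCoeff_mul, hdmonic.leadingCoeff, one_mul]
    have ftroots : ∀ j, (ft j).roots = ↑(List.ofFn (fun k => ρ j ((K j).succAbove k))) := by
      intro j
      have h1 : (f j).roots = x₀ ::ₘ (ft j).roots := by
        rw [hfeq j, Polynomial.roots_mul (by rw [← hfeq j]; exact hFne j), hd,
          Polynomial.roots_X_sub_C, Multiset.singleton_add]
      rw [hroots j, multiset_ofFn_eq (ρ j) (K j), hKρ j] at h1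
      exact ((Multiset.cons_inj_right x₀).mp h1).symm
    have hGfact : G = d * (∑ j, Polynomial.C (lam j) * ft j) := by
      rw [hGdef, Finset.mul_sum]
      apply Finset.sum_congr rfl
      intro j _
      rw [hfeq j]
      ring
    have hGt : (∑ j, Polynomial.C (lam j) * ft j).roots
        = ↑(List.ofFn (fun k => τ (lrem.succAbove k))) := by
      have h1 : G.roots = x₀ ::ₘ (∑ j, Polynomial.C (lam j) * ft j).roots := by
        rw [hGfact, Polynomial.roots_mul (by rw [← hGfact]; exact hGne), hd,
          Polynomial.roots_X_sub_C, Multiset.singleton_add]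
      rw [hGroots, multiset_ofFn_eq τ lrem, hτl] at h1
      exact ((Multiset.cons_inj_right x₀).mp h1).symm
    have hrep' : ∀ j, ∃ j', 0 < lam j' ∧ ft j' = ft j ∧
        (fun k => ρ j' ((K j').succAbove k)) = (fun k => ρ j ((K j).succAbove k)) := by
      intro j
      obtain ⟨j', h1, h2, h3⟩ := hrep j
      refine ⟨j', h1, ?_, ?_⟩
      · rw [hft]
        simp only
        rw [h2]
      · have hKe : K j' = K j := hKdet j' j h3
        funext k
        rw [hKe, h3]
    exact IH m ft (fun j k => ρ j ((K j).succAbove k)) (fun k => β (b.succAbove k)) lam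
      (fun k => τ (lrem.succAbove k)) ftdeg
      (fun j => by rw [ftlead j]; exact hlead j) ftroots
      (fun j => (hρa j).comp_monotone (Fin.strictMono_succAbove (K j)).monotone)
      (hβa.comp_monotone (Fin.strictMono_succAbove b).monotone)
      (fun j k => key_low j b (K j) (hKb j) k)
      (fun j s t hst => key_high j b (K j) (hKb j) s t hst)
      hlam hlam1 hrep'
      (hτa.comp_monotone (Fin.strictMono_succAbove lrem).monotone)
      hGt
  -- Claim A : β i ≤ τ i
  have claimA : ∀ i : Fin (N+1), β i ≤ τ i := by
    intro i
    by_contra hvA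
    push_neg at hvA
    have hiLt := i.isLt
    have hzex : ∀ l : ℕ, ∃ k : Fin (N+1), ∀ _ : l ≤ (i:ℕ),
        ((k:ℕ) < (i:ℕ) ∧ β ⟨l, by omega⟩ ≤ τ k ∧ (1 ≤ l → τ k ≤ β ⟨l-1, by omega⟩)) := by
      intro l
      by_cases hc : l ≤ (i:ℕ)
      · have hlN : l < N+1 := by omega
        have hk_lt : ∀ k : Fin (N+1), β ⟨l, hlN⟩ ≤ τ k → (k:ℕ) < (i:ℕ) := by
          intro k hk1
          by_contra hk3
          push_neg at hk3
          have h1 : τ k ≤ τ i := hτm (i:ℕ) (k:ℕ) i.isLt k.isLt hk3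
          have h2 : β i ≤ β ⟨l, hlN⟩ := hβm l (i:ℕ) hlN i.isLt hc
          linarith
        by_cases hl1 : 1 ≤ l
        · obtain ⟨k, hk1, hk2⟩ := zoneRoot l hl1 hlN
          exact ⟨k, fun _ => ⟨hk_lt k hk1, hk1, fun _ => hk2⟩⟩
        · have hlz : l = 0 := by omega
          subst hlz
          obtain ⟨k, hk1⟩ := Z0root
          exact ⟨k, fun _ => ⟨hk_lt k hk1, hk1, fun hl => absurd hl (by omega)⟩⟩
      · exact ⟨i, fun h => absurd h hc⟩
    choose F hF using hzex
    have hprocess : ∀ la lb : ℕ, la < lb → lb ≤ (i:ℕ) → F la = F lb → False := by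
      intro la lb hlab hlb hFe
      obtain ⟨hk1a, hk2a, hk3a⟩ := hF la (by omega)
      obtain ⟨hk1b, hk2b, hk3b⟩ := hF lb (by omega)
      have hlaN : la < N+1 := by omega
      have haN : la+1 < N+1 := by omega
      have hx1 : τ (F la) ≤ β ⟨la, hlaN⟩ := by
        have h0 := hk3b (by omega)
        rw [← hFe] at h0
        exact le_trans h0 (hβm la (lb-1) hlaN (by omega) (by omega))
      have hx0 : τ (F la) = β ⟨la, hlaN⟩ := le_antisymm hx1 hk2a
      have hGz : G.eval (β ⟨la, hlaN⟩) = 0 := by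
        have h0 := τisroot (F la)
        rwa [hx0] at h0
      have hKor := commonRootAt la haN hGz
      obtain ⟨K, hKdef⟩ : ∃ K : Fin m → Fin (N+1), ∀ j, K j =
          if ρ j ⟨la, hlaN⟩ = β ⟨la, hlaN⟩ then (⟨la, hlaN⟩ : Fin (N+1)) else ⟨la+1, haN⟩ :=
        ⟨_, fun j => rfl⟩
      have hKρ : ∀ j, ρ j (K j) = β ⟨la, hlaN⟩ := by
        intro j
        rw [hKdef j]
        split_ifs with h
        · exact h
        · rcases hKor j with h' | h'
          · exact absurd h' h
          · exact h'
      have hKdet : ∀ j j', ρ j = ρ j' → K j = K j' := by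
        intro j j' h
        rw [hKdef j, hKdef j', h]
      have hKb : ∀ j, (K j : ℕ) = la ∨ (K j : ℕ) = la+1 := by
        intro j
        rw [hKdef j]
        split_ifs with h
        · exact Or.inl rfl
        · exact Or.inr rfl
      have hSne : ((univ : Finset (Fin (N+1))).filter
          (fun k' => τ k' = β ⟨la, hlaN⟩)).Nonempty :=
        ⟨F la, Finset.mem_filter.mpr ⟨Finset.mem_univ _, hx0⟩⟩
      obtain ⟨lrem, hlremdef⟩ : ∃ r : Fin (N+1), r =
          (((univ : Finset (Fin (N+1))).filter
            (fun k' => τ k' = β ⟨la, hlaN⟩)).min' hSne) := ⟨_, rfl⟩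
      have hlremx : τ lrem = β ⟨la, hlaN⟩ := by
        have h0 := Finset.min'_mem _ hSne
        rw [← hlremdef] at h0
        exact (Finset.mem_filter.mp h0).2
      have hlremmin : ∀ k' : Fin (N+1), τ k' = β ⟨la, hlaN⟩ → (lrem:ℕ) ≤ (k':ℕ) := by
        intro k' h
        have h2 := Finset.min'_le ((univ : Finset (Fin (N+1))).filter
          (fun k'' => τ k'' = β ⟨la, hlaN⟩)) k' (Finset.mem_filter.mpr ⟨Finset.mem_univ _, h⟩)
        rw [← hlremdef] at h2
        exact Fin.le_def.mp h2
      have RED := descent K ⟨la, hlaN⟩ lrem (β ⟨la, hlaN⟩) hKρ hKdet hKb hlremx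
      have hlremLt := lrem.isLt
      have hle : (lrem:ℕ) ≤ la+1 := by
        by_contra hcon
        push_neg at hcon
        have h1 : la+1 < N := by omega
        obtain ⟨⟨j, hj⟩, -⟩ := RED ⟨la+1, h1⟩
        have e1 : lrem.succAbove ⟨la+1, h1⟩ = ⟨la+1, by omega⟩ :=
          Fin.ext (by rw [sa_val]; simp only [Fin.val_mk]; split_ifs <;> omega)
        have hKjv1 : la ≤ (K j : ℕ) := by rcases hKb j with h' | h' <;> omega
        have hKjv2 : (K j : ℕ) ≤ la+1 := by rcases hKb j with h' | h' <;> omega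
        have e2 : (K j).succAbove ⟨la+1, h1⟩ = ⟨la+2, by omega⟩ :=
          Fin.ext (by rw [sa_val]; simp only [Fin.val_mk]; split_ifs <;> omega)
        have hje1 := congrArg τ e1
        have hje2 := congrArg (ρ j) e2
        have h2 : ρ j ⟨la+2, by omega⟩ ≤ β ⟨la+1, by omega⟩ :=
          hhigh' j (la+2) (la+1) (by omega) (by omega) rfl
        have h3 : β ⟨la+1, by omega⟩ ≤ β ⟨la, hlaN⟩ := hβm la (la+1) hlaN (by omega) (by omega)
        have h4 : β ⟨la, hlaN⟩ ≤ τ ⟨la+1, by omega⟩ :=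
          le_trans (le_of_eq hlremx.symm) (hτm (la+1) (lrem:ℕ) (by omega) lrem.isLt (by omega))
        have h5 : τ ⟨la+1, by omega⟩ = β ⟨la, hlaN⟩ := le_antisymm (by linarith) h4
        have h6 := hlremmin _ h5
        simp only [Fin.val_mk] at h6
        omega
      -- now derive β i ≤ τ i, contradiction with hvA
      by_cases hcase : (lrem:ℕ) = (i:ℕ)
      · have he : lrem = i := Fin.ext hcase
        have h7 : τ i = β ⟨la, hlaN⟩ := (congrArg τ he).symm.trans hlremx
        have h1 : β i ≤ β ⟨la, hlaN⟩ := hβm la (i:ℕ) hlaN i.isLt (by omega)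
        linarith
      · have hlremi : (lrem:ℕ) < (i:ℕ) := by omega
        have hiv : (i:ℕ) - 1 < N := by omega
        obtain ⟨-, ⟨j, hj⟩⟩ := RED ⟨(i:ℕ)-1, hiv⟩
        have e1 : lrem.succAbove ⟨(i:ℕ)-1, hiv⟩ = i :=
          Fin.ext (by rw [sa_val]; simp only [Fin.val_mk]; split_ifs <;> omega)
        have hje1 := congrArg τ e1
        have hbound : β i ≤ ρ j ((K j).succAbove ⟨(i:ℕ)-1, hiv⟩) := by
          have hKjv1 : la ≤ (K j : ℕ) := by rcases hKb j with h' | h' <;> omega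
          have hKjv2 : (K j : ℕ) ≤ la+1 := by rcases hKb j with h' | h' <;> omega
          by_cases hc2 : ((i:ℕ)-1) < (K j : ℕ)
          · have e2 : (K j).succAbove ⟨(i:ℕ)-1, hiv⟩ = ⟨(i:ℕ)-1, by omega⟩ :=
              Fin.ext (by rw [sa_val]; simp only [Fin.val_mk]; split_ifs <;> omega)
            rw [e2]
            exact le_trans (hβm ((i:ℕ)-1) (i:ℕ) (by omega) i.isLt (by omega))
              (hlow' j ((i:ℕ)-1) (by omega))
          · have e2 : (K j).succAbove ⟨(i:ℕ)-1, hiv⟩ = ⟨(i:ℕ), i.isLt⟩ :=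
              Fin.ext (by rw [sa_val]; simp only [Fin.val_mk]; split_ifs <;> omega)
            rw [e2]
            exact hlow' j (i:ℕ) i.isLt
        linarith
    have hmaps : ∀ l ∈ Finset.range ((i:ℕ)+1), ((F l : ℕ)) ∈ Finset.range (i:ℕ) := by
      intro l hl
      rw [Finset.mem_range] at hl ⊢
      exact (hF l (by omega)).1
    have hcard : (Finset.range (i:ℕ)).card < (Finset.range ((i:ℕ)+1)).card := by
      rw [Finset.card_range, Finset.card_range]
      omega
    obtain ⟨l₁, hl₁, l₂, hl₂, hne, heq⟩ :=
      Finset.exists_ne_map_eq_of_card_lt_of_maps_to hcard hmaps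
    rw [Finset.mem_range] at hl₁ hl₂
    rcases lt_or_gt_of_ne hne with h | h
    · exact hprocess l₁ l₂ h (by omega) (Fin.ext heq)
    · exact hprocess l₂ l₁ h (by omega) (Fin.ext heq.symm)
  -- Claim B : τ i ≤ β (i-1) for i ≥ 1
  have claimB : ∀ (i : Fin (N+1)) (_ : 1 ≤ (i:ℕ)), τ i ≤ β ⟨(i:ℕ)-1, by omega⟩ := by
    intro i hi1
    by_contra hvB
    push_neg at hvB
    have hiLt := i.isLt
    have hzex : ∀ l : ℕ, ∃ k : Fin (N+1), ∀ _ : ((i:ℕ) ≤ l ∧ l < N+1),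
        ((i:ℕ) < (k:ℕ) ∧ β ⟨l, by omega⟩ ≤ τ k ∧ τ k ≤ β ⟨l-1, by omega⟩) := by
      intro l
      by_cases hc : (i:ℕ) ≤ l ∧ l < N+1
      · obtain ⟨k, hk1, hk2⟩ := zoneRoot l (by omega) hc.2
        refine ⟨k, fun _ => ⟨?_, hk1, hk2⟩⟩
        by_contra hk3
        push_neg at hk3
        have h1 : τ i ≤ τ k := hτm (k:ℕ) (i:ℕ) k.isLt i.isLt hk3
        have h2 : β ⟨l-1, by omega⟩ ≤ β ⟨(i:ℕ)-1, by omega⟩ :=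
          hβm ((i:ℕ)-1) (l-1) (by omega) (by omega) (by omega)
        linarith
      · exact ⟨i, fun h => absurd h hc⟩
    choose F hF using hzex
    have hprocess : ∀ la lb : ℕ, (i:ℕ) ≤ la → la < lb → lb < N+1 → F la = F lb → False := by
      intro la lb hla hlab hlbN hFe
      obtain ⟨hk1a, hk2a, hk3a⟩ := hF la ⟨hla, by omega⟩
      obtain ⟨hk1b, hk2b, hk3b⟩ := hF lb ⟨by omega, hlbN⟩
      have hlaN : la < N+1 := by omega
      have haN : la+1 < N+1 := by omega
      have hx1 : τ (F la) ≤ β ⟨la, hlaN⟩ := by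
        have h0 := hk3b
        rw [← hFe] at h0
        exact le_trans h0 (hβm la (lb-1) hlaN (by omega) (by omega))
      have hx0 : τ (F la) = β ⟨la, hlaN⟩ := le_antisymm hx1 hk2a
      have hGz : G.eval (β ⟨la, hlaN⟩) = 0 := by
        have h0 := τisroot (F la)
        rwa [hx0] at h0
      have hKor := commonRootAt la haN hGz
      obtain ⟨K, hKdef⟩ : ∃ K : Fin m → Fin (N+1), ∀ j, K j =
          if ρ j ⟨la, hlaN⟩ = β ⟨la, hlaN⟩ then (⟨la, hlaN⟩ : Fin (N+1)) else ⟨la+1, haN⟩ :=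
        ⟨_, fun j => rfl⟩
      have hKρ : ∀ j, ρ j (K j) = β ⟨la, hlaN⟩ := by
        intro j
        rw [hKdef j]
        split_ifs with h
        · exact h
        · rcases hKor j with h' | h'
          · exact absurd h' h
          · exact h'
      have hKdet : ∀ j j', ρ j = ρ j' → K j = K j' := by
        intro j j' h
        rw [hKdef j, hKdef j', h]
      have hKb : ∀ j, (K j : ℕ) = la ∨ (K j : ℕ) = la+1 := by
        intro j
        rw [hKdef j]
        split_ifs with h
        · exact Or.inl rfl
        · exact Or.inr rfl
      have hSne : ((univ : Finset (Fin (N+1))).filter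
          (fun k' => τ k' = β ⟨la, hlaN⟩)).Nonempty :=
        ⟨F la, Finset.mem_filter.mpr ⟨Finset.mem_univ _, hx0⟩⟩
      obtain ⟨lrem, hlremdef⟩ : ∃ r : Fin (N+1), r =
          (((univ : Finset (Fin (N+1))).filter
            (fun k' => τ k' = β ⟨la, hlaN⟩)).max' hSne) := ⟨_, rfl⟩
      have hlremx : τ lrem = β ⟨la, hlaN⟩ := by
        have h0 := Finset.max'_mem _ hSne
        rw [← hlremdef] at h0
        exact (Finset.mem_filter.mp h0).2
      have hlremmax : ∀ k' : Fin (N+1), τ k' = β ⟨la, hlaN⟩ → (k':ℕ) ≤ (lrem:ℕ) := by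
        intro k' h
        have h2 := Finset.le_max' ((univ : Finset (Fin (N+1))).filter
          (fun k'' => τ k'' = β ⟨la, hlaN⟩)) k' (Finset.mem_filter.mpr ⟨Finset.mem_univ _, h⟩)
        rw [← hlremdef] at h2
        exact Fin.le_def.mp h2
      have RED := descent K ⟨la, hlaN⟩ lrem (β ⟨la, hlaN⟩) hKρ hKdet hKb hlremx
      have hlremLt := lrem.isLt
      have hla_le : la ≤ (lrem:ℕ) := by
        by_contra hcon
        push_neg at hcon
        have h1 : la - 1 < N := by omega
        obtain ⟨-, ⟨j, hj⟩⟩ := RED ⟨la-1, h1⟩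
        have e1 : lrem.succAbove ⟨la-1, h1⟩ = ⟨la, hlaN⟩ :=
          Fin.ext (by rw [sa_val]; simp only [Fin.val_mk]; split_ifs <;> omega)
        have hKjv1 : la ≤ (K j : ℕ) := by rcases hKb j with h' | h' <;> omega
        have hKjv2 : (K j : ℕ) ≤ la+1 := by rcases hKb j with h' | h' <;> omega
        have e2 : (K j).succAbove ⟨la-1, h1⟩ = ⟨la-1, by omega⟩ :=
          Fin.ext (by rw [sa_val]; simp only [Fin.val_mk]; split_ifs <;> omega)
        have hje1 := congrArg τ e1
        have hje2 := congrArg (ρ j) e2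
        have h2 : β ⟨la-1, by omega⟩ ≤ ρ j ⟨la-1, by omega⟩ := hlow' j (la-1) (by omega)
        have h3 : β ⟨la, hlaN⟩ ≤ β ⟨la-1, by omega⟩ := hβm (la-1) la (by omega) hlaN (by omega)
        have h4 : τ ⟨la, hlaN⟩ ≤ β ⟨la, hlaN⟩ :=
          le_trans (hτm (lrem:ℕ) la lrem.isLt hlaN (by omega)) (le_of_eq hlremx)
        have h5 : τ ⟨la, hlaN⟩ = β ⟨la, hlaN⟩ := le_antisymm h4 (by linarith)
        have h6 := hlremmax _ h5
        simp only [Fin.val_mk] at h6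
        omega
      -- derive τ i ≤ β ⟨i-1⟩, contradiction with hvB
      by_cases hcase : τ i = β ⟨la, hlaN⟩
      · have h1 : β ⟨la, hlaN⟩ ≤ β ⟨(i:ℕ)-1, by omega⟩ :=
          hβm ((i:ℕ)-1) la (by omega) hlaN (by omega)
        linarith
      · have hilt : (i:ℕ) < (lrem:ℕ) := by
          rcases Nat.lt_or_ge (i:ℕ) (lrem:ℕ) with h0 | h0
          · exact h0
          · exfalso
            have he : i = lrem := Fin.ext (by omega)
            exact hcase ((congrArg τ he).trans hlremx)
        have hiN : (i:ℕ) < N := by omega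
        obtain ⟨⟨j, hj⟩, -⟩ := RED ⟨(i:ℕ), hiN⟩
        have e1 : lrem.succAbove ⟨(i:ℕ), hiN⟩ = i :=
          Fin.ext (by rw [sa_val]; simp only [Fin.val_mk]; split_ifs <;> omega)
        have hje1 := congrArg τ e1
        have hbound : ρ j ((K j).succAbove ⟨(i:ℕ), hiN⟩) ≤ β ⟨(i:ℕ)-1, by omega⟩ := by
          have hKjv1 : la ≤ (K j : ℕ) := by rcases hKb j with h' | h' <;> omega
          have hKjv2 : (K j : ℕ) ≤ la+1 := by rcases hKb j with h' | h' <;> omega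
          by_cases hc2 : ((i:ℕ)) < (K j : ℕ)
          · have e2 : (K j).succAbove ⟨(i:ℕ), hiN⟩ = ⟨(i:ℕ), i.isLt⟩ :=
              Fin.ext (by rw [sa_val]; simp only [Fin.val_mk]; split_ifs <;> omega)
            rw [e2]
            exact hhigh' j (i:ℕ) ((i:ℕ)-1) i.isLt (by omega) (by omega)
          · have e2 : (K j).succAbove ⟨(i:ℕ), hiN⟩ = ⟨(i:ℕ)+1, by omega⟩ :=
              Fin.ext (by rw [sa_val]; simp only [Fin.val_mk]; split_ifs <;> omega)
            rw [e2]
            refine le_trans (hhigh' j ((i:ℕ)+1) (i:ℕ) (by omega) i.isLt rfl) ?_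
            exact hβm ((i:ℕ)-1) (i:ℕ) (by omega) i.isLt (by omega)
        linarith
    have hmaps : ∀ l ∈ Finset.Ico (i:ℕ) (N+1), ((F l : ℕ)) ∈ Finset.Ico ((i:ℕ)+1) (N+1) := by
      intro l hl
      rw [Finset.mem_Ico] at hl ⊢
      exact ⟨(hF l ⟨hl.1, hl.2⟩).1, (F l).isLt⟩
    have hcard : (Finset.Ico ((i:ℕ)+1) (N+1)).card < (Finset.Ico (i:ℕ) (N+1)).card := by
      rw [Nat.card_Ico, Nat.card_Ico]
      omega
    obtain ⟨l₁, hl₁, l₂, hl₂, hne, heq⟩ :=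
      Finset.exists_ne_map_eq_of_card_lt_of_maps_to hcard hmaps
    rw [Finset.mem_Ico] at hl₁ hl₂
    rcases lt_or_gt_of_ne hne with h | h
    · exact hprocess l₁ l₂ hl₁.1 h hl₂.2 (Fin.ext heq)
    · exact hprocess l₂ l₁ hl₂.1 h hl₁.2 (Fin.ext heq.symm)
  -- FINAL: conclusion
  intro i
  have hiLt := i.isLt
  constructor
  · -- upper bound : ∃ j, τ i ≤ ρ j i
    by_contra hv
    push_neg at hv
    by_cases hi0 : (i:ℕ) = 0
    · have hpos : ∀ j, 0 < (f j).eval (τ i) := by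
        intro j
        rw [evalF]
        apply mul_pos (hlead j)
        apply Finset.prod_pos
        intro k _
        have h1 : ρ j ⟨(k:ℕ), k.isLt⟩ ≤ ρ j ⟨(i:ℕ), i.isLt⟩ :=
          hρm j (i:ℕ) (k:ℕ) i.isLt k.isLt (by omega)
        have h2 := hv j
        have hid : ρ j (⟨(i:ℕ), i.isLt⟩ : Fin (N+1)) = ρ j i := rfl
        have hidk : ρ j (⟨(k:ℕ), k.isLt⟩ : Fin (N+1)) = ρ j k := rfl
        linarith only [h1, h2, hid, hidk]
      have hsum : 0 < G.eval (τ i) := by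
        rw [evalGsum]
        apply Finset.sum_pos'
        · intro j _
          exact mul_nonneg (hlam j) (hpos j).le
        · exact ⟨j₀, Finset.mem_univ _, mul_pos hj₀ (hpos j₀)⟩
      have h0 := τisroot i
      linarith only [h0, hsum]
    · have hi1 : 1 ≤ (i:ℕ) := by omega
      have hB := claimB i hi1
      have hsign : ∀ j, 0 ≤ (-1:ℝ)^(i:ℕ) * (f j).eval (τ i) := by
        intro j
        apply signF j (τ i) (i:ℕ) (by omega)
        · intro k hk
          refine le_trans hB (le_trans (hβm (k:ℕ) ((i:ℕ)-1) k.isLt (by omega) (by omega))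
            (hlow j k))
        · intro k hk
          have h1 : ρ j ⟨(k:ℕ), k.isLt⟩ ≤ ρ j ⟨(i:ℕ), i.isLt⟩ :=
            hρm j (i:ℕ) (k:ℕ) i.isLt k.isLt hk
          have h2 := hv j
          have hid : ρ j (⟨(i:ℕ), i.isLt⟩ : Fin (N+1)) = ρ j i := rfl
          have hidk : ρ j (⟨(k:ℕ), k.isLt⟩ : Fin (N+1)) = ρ j k := rfl
          linarith only [h1, h2, hid, hidk]
      have hz := sumzero (τ i) (i:ℕ) hsign (τisroot i)
      have hrootidx : ∀ j, ρ j ⟨(i:ℕ)-1, by omega⟩ = τ i := by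
        intro j
        obtain ⟨kk, hkk⟩ := rootρ j (τ i) (hz j)
        by_cases hc : (kk:ℕ) < (i:ℕ)
        · have h1 : ρ j ⟨(i:ℕ)-1, by omega⟩ ≤ ρ j ⟨(kk:ℕ), kk.isLt⟩ :=
            hρm j (kk:ℕ) ((i:ℕ)-1) kk.isLt (by omega) (by omega)
          have h2 : β ⟨(i:ℕ)-1, by omega⟩ ≤ ρ j ⟨(i:ℕ)-1, by omega⟩ := hlow' j ((i:ℕ)-1) (by omega)
          have hkk' : ρ j ⟨(kk:ℕ), kk.isLt⟩ = τ i := hkk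
          exact le_antisymm (by linarith only [h1, hkk']) (by linarith only [hB, h2])
        · exfalso
          have h1 : ρ j ⟨(kk:ℕ), kk.isLt⟩ ≤ ρ j ⟨(i:ℕ), i.isLt⟩ :=
            hρm j (i:ℕ) (kk:ℕ) i.isLt kk.isLt (by omega)
          have h2 := hv j
          have hkk' : ρ j ⟨(kk:ℕ), kk.isLt⟩ = τ i := hkk
          have hid : ρ j (⟨(i:ℕ), i.isLt⟩ : Fin (N+1)) = ρ j i := rfl
          linarith only [h1, h2, hkk', hid]
      obtain ⟨K, hKdef⟩ : ∃ K : Fin m → Fin (N+1),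
          ∀ j, K j = (⟨(i:ℕ)-1, by omega⟩ : Fin (N+1)) := ⟨_, fun _ => rfl⟩
      have RED := descent K ⟨(i:ℕ)-1, by omega⟩ i (τ i)
        (fun j => by rw [hKdef j]; exact hrootidx j)
        (fun j j' _ => by rw [hKdef j, hKdef j'])
        (fun j => by rw [hKdef j]; left; rfl) rfl
      have hi1N : (i:ℕ)-1 < N := by omega
      obtain ⟨⟨j, hj⟩, -⟩ := RED ⟨(i:ℕ)-1, hi1N⟩
      have e1 : i.succAbove ⟨(i:ℕ)-1, hi1N⟩ = ⟨(i:ℕ)-1, by omega⟩ :=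
        Fin.ext (by rw [sa_val]; simp only [Fin.val_mk]; split_ifs <;> omega)
      have e2 : (K j).succAbove ⟨(i:ℕ)-1, hi1N⟩ = ⟨(i:ℕ), i.isLt⟩ :=
        Fin.ext (by rw [hKdef j, sa_val]; simp only [Fin.val_mk]; split_ifs <;> omega)
      have hje1 := congrArg τ e1
      have hje2 := congrArg (ρ j) e2
      have hmono : τ i ≤ τ ⟨(i:ℕ)-1, by omega⟩ := hτm ((i:ℕ)-1) (i:ℕ) (by omega) i.isLt (by omega)
      have h2 := hv j
      have hid : ρ j (⟨(i:ℕ), i.isLt⟩ : Fin (N+1)) = ρ j i := rfl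
      linarith only [hje1, hje2, hj, hmono, h2, hid]
  · -- lower bound : ∃ j, ρ j i ≤ τ i
    by_contra hv
    push_neg at hv
    by_cases hiN : (i:ℕ) = N
    · have hsign : ∀ j, 0 < (-1:ℝ)^(N+1) * (f j).eval (τ i) := by
        intro j
        rw [evalF]
        have hp := prod_sign_pos (τ i) (ρ j) (fun _ => True)
          (fun k _ => by
            have h1 : ρ j ⟨(i:ℕ), i.isLt⟩ ≤ ρ j ⟨(k:ℕ), k.isLt⟩ :=
              hρm j (k:ℕ) (i:ℕ) k.isLt i.isLt (by omega)
            have h2 := hv j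
            have hid : ρ j (⟨(i:ℕ), i.isLt⟩ : Fin (N+1)) = ρ j i := rfl
            have hidk : ρ j (⟨(k:ℕ), k.isLt⟩ : Fin (N+1)) = ρ j k := rfl
            linarith only [h1, h2, hid, hidk])
          (fun k hk => absurd trivial hk)
        rw [Finset.filter_true, Finset.card_univ, Fintype.card_fin] at hp
        have hre : (-1:ℝ)^(N+1) * ((f j).leadingCoeff * ∏ k, (τ i - ρ j k))
            = (f j).leadingCoeff * ((-1:ℝ)^(N+1) * ∏ k, (τ i - ρ j k)) := by ring
        rw [hre]
        exact mul_pos (hlead j) hp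
      have hre2 : (-1:ℝ)^(N+1) * G.eval (τ i)
          = ∑ j, lam j * ((-1:ℝ)^(N+1) * (f j).eval (τ i)) := by
        rw [evalGsum, Finset.mul_sum]
        apply Finset.sum_congr rfl
        intro j _
        ring
      have hGpos : 0 < (-1:ℝ)^(N+1) * G.eval (τ i) := by
        rw [hre2]
        apply Finset.sum_pos'
        · intro j _
          exact mul_nonneg (hlam j) (hsign j).le
        · exact ⟨j₀, Finset.mem_univ _, mul_pos hj₀ (hsign j₀)⟩
      rw [τisroot i, mul_zero] at hGpos
      exact lt_irrefl 0 hGpos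
    · have hA := claimA i
      have hiN' : (i:ℕ) < N := by omega
      have hsign : ∀ j, 0 ≤ (-1:ℝ)^((i:ℕ)+1) * (f j).eval (τ i) := by
        intro j
        apply signF j (τ i) ((i:ℕ)+1) (by omega)
        · intro k hk
          have h1 : ρ j ⟨(i:ℕ), i.isLt⟩ ≤ ρ j ⟨(k:ℕ), k.isLt⟩ :=
            hρm j (k:ℕ) (i:ℕ) k.isLt i.isLt (by omega)
          have h2 := hv j
          have hid : ρ j (⟨(i:ℕ), i.isLt⟩ : Fin (N+1)) = ρ j i := rfl
          have hidk : ρ j (⟨(k:ℕ), k.isLt⟩ : Fin (N+1)) = ρ j k := rfl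
          linarith only [h1, h2, hid, hidk]
        · intro k hk
          have h1 : ρ j k ≤ β ⟨(k:ℕ)-1, by omega⟩ :=
            hhigh' j (k:ℕ) ((k:ℕ)-1) k.isLt (by omega) (by omega)
          have h2 : β ⟨(k:ℕ)-1, by omega⟩ ≤ β ⟨(i:ℕ), i.isLt⟩ :=
            hβm (i:ℕ) ((k:ℕ)-1) i.isLt (by omega) (by omega)
          have hid : β (⟨(i:ℕ), i.isLt⟩ : Fin (N+1)) = β i := rfl
          have hidk : ρ j (⟨(k:ℕ), k.isLt⟩ : Fin (N+1)) = ρ j k := rfl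
          linarith only [h1, h2, hid, hidk, hA]
      have hz := sumzero (τ i) ((i:ℕ)+1) hsign (τisroot i)
      have hrootidx : ∀ j, ρ j ⟨(i:ℕ)+1, by omega⟩ = τ i := by
        intro j
        obtain ⟨kk, hkk⟩ := rootρ j (τ i) (hz j)
        by_cases hc : (kk:ℕ) ≤ (i:ℕ)
        · exfalso
          have h1 : ρ j ⟨(i:ℕ), i.isLt⟩ ≤ ρ j ⟨(kk:ℕ), kk.isLt⟩ :=
            hρm j (kk:ℕ) (i:ℕ) kk.isLt i.isLt hc
          have h2 := hv j
          have hkk' : ρ j ⟨(kk:ℕ), kk.isLt⟩ = τ i := hkk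
          have hid : ρ j (⟨(i:ℕ), i.isLt⟩ : Fin (N+1)) = ρ j i := rfl
          linarith only [h1, h2, hkk', hid]
        · have h1 : ρ j ⟨(kk:ℕ), kk.isLt⟩ ≤ ρ j ⟨(i:ℕ)+1, by omega⟩ :=
            hρm j ((i:ℕ)+1) (kk:ℕ) (by omega) kk.isLt (by omega)
          have h2 : ρ j ⟨(i:ℕ)+1, by omega⟩ ≤ β ⟨(i:ℕ), i.isLt⟩ :=
            hhigh' j ((i:ℕ)+1) (i:ℕ) (by omega) i.isLt rfl
          have hkk' : ρ j ⟨(kk:ℕ), kk.isLt⟩ = τ i := hkk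
          have hid : β (⟨(i:ℕ), i.isLt⟩ : Fin (N+1)) = β i := rfl
          exact le_antisymm (by linarith only [h2, hid, hA]) (by linarith only [h1, hkk'])
      obtain ⟨K, hKdef⟩ : ∃ K : Fin m → Fin (N+1),
          ∀ j, K j = (⟨(i:ℕ)+1, by omega⟩ : Fin (N+1)) := ⟨_, fun _ => rfl⟩
      have RED := descent K i i (τ i)
        (fun j => by rw [hKdef j]; exact hrootidx j)
        (fun j j' _ => by rw [hKdef j, hKdef j'])
        (fun j => by rw [hKdef j]; right; rfl) rfl
      obtain ⟨-, ⟨j, hj⟩⟩ := RED ⟨(i:ℕ), hiN'⟩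
      have e1 : i.succAbove ⟨(i:ℕ), hiN'⟩ = ⟨(i:ℕ)+1, by omega⟩ :=
        Fin.ext (by rw [sa_val]; simp only [Fin.val_mk]; split_ifs <;> omega)
      have e2 : (K j).succAbove ⟨(i:ℕ), hiN'⟩ = ⟨(i:ℕ), i.isLt⟩ :=
        Fin.ext (by rw [hKdef j, sa_val]; simp only [Fin.val_mk]; split_ifs <;> omega)
      have hje1 := congrArg τ e1
      have hje2 := congrArg (ρ j) e2
      have hmono : τ ⟨(i:ℕ)+1, by omega⟩ ≤ τ ⟨(i:ℕ), i.isLt⟩ :=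
        hτm (i:ℕ) ((i:ℕ)+1) i.isLt (by omega) (by omega)
      have h2 := hv j
      have hid : ρ j (⟨(i:ℕ), i.isLt⟩ : Fin (N+1)) = ρ j i := rfl
      have hid2 : τ (⟨(i:ℕ), i.isLt⟩ : Fin (N+1)) = τ i := rfl
      linarith only [hje1, hje2, hj, hmono, h2, hid, hid2]

lemma good (n : ℕ) : Good n := by
  induction n with
  | zero => exact good_zero
  | succ N IH => exact good_succ N IH

end RootHull


/-- If real-rooted polynomials `f₁,…,f_m` of degree `n` with positive leading coefficients
have a common interlacing, then for every convex combination, the `i`-th largest root `τ i`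
of the combination lies between the minimum and the maximum of the `i`-th largest roots
`ρ j i` of the `f j`. -/
theorem roots_of_convex_combination_in_hull (n m : ℕ) (hm : 0 < m)
    (f : Fin m → Polynomial ℝ)
    (hdeg : ∀ j, (f j).natDegree = n)
    (hlead : ∀ j, 0 < (f j).leadingCoeff)
    (hroots : ∀ j, (f j).roots.card = n)
    (ρ : Fin m → Fin n → ℝ)
    (hρa : ∀ j, Antitone (ρ j))
    (hρ : ∀ j, (↑(List.ofFn (ρ j)) : Multiset ℝ) = (f j).roots)
    (hci : ∃ β : Fin n → ℝ, Antitone β ∧ (∀ j i, β i ≤ ρ j i) ∧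
        (∀ j, ∀ i : Fin n, 0 < (i : ℕ) →
          ρ j i ≤ β ⟨(i : ℕ) - 1, lt_of_le_of_lt (Nat.sub_le _ _) i.isLt⟩))
    (lam : Fin m → ℝ) (hlam : ∀ j, 0 ≤ lam j) (hlam1 : (∑ j, lam j) = 1)
    (τ : Fin n → ℝ) (hτa : Antitone τ)
    (hτ : (↑(List.ofFn τ) : Multiset ℝ) = (∑ j, Polynomial.C (lam j) * f j).roots) :
    ∀ i : Fin n,
      (Finset.univ.inf' (Finset.univ_nonempty_iff.mpr (Fin.pos_iff_nonempty.mp hm))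
          fun j => ρ j i) ≤ τ i ∧
        τ i ≤ Finset.univ.sup' (Finset.univ_nonempty_iff.mpr (Fin.pos_iff_nonempty.mp hm))
          fun j => ρ j i := by
  classical
  obtain ⟨β, hβa, hlo, hhi⟩ := hci
  obtain ⟨j₀, hj₀⟩ : ∃ j, 0 < lam j := by
    by_contra h
    push_neg at h
    have h1 : (∑ j, lam j) ≤ 0 := Finset.sum_nonpos (fun j _ => h j)
    rw [hlam1] at h1
    linarith
  obtain ⟨fh, hfh⟩ : ∃ fh : Fin m → Polynomial ℝ,
      ∀ j, fh j = if 0 < lam j then f j else f j₀ := ⟨_, fun _ => rfl⟩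
  obtain ⟨ρh, hρh⟩ : ∃ ρh : Fin m → Fin n → ℝ,
      ∀ j, ρh j = if 0 < lam j then ρ j else ρ j₀ := ⟨_, fun _ => rfl⟩
  have hsum : (∑ j, Polynomial.C (lam j) * fh j) = ∑ j, Polynomial.C (lam j) * f j := by
    apply Finset.sum_congr rfl
    intro j _
    rw [hfh j]
    split_ifs with h
    · rfl
    · have hz : lam j = 0 := le_antisymm (not_lt.mp h) (hlam j)
      rw [hz]
      simp
  have hmain := RootHull.good n m fh ρh β lam τ
    (fun j => by rw [hfh j]; split_ifs <;> exact hdeg _)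
    (fun j => by rw [hfh j]; split_ifs <;> exact hlead _)
    (fun j => by rw [hfh j, hρh j]; split_ifs <;> exact (hρ _).symm)
    (fun j => by rw [hρh j]; split_ifs <;> exact hρa _)
    hβa
    (fun j k => by rw [hρh j]; split_ifs <;> exact hlo _ _)
    (fun j s t hst => by
      rw [hρh j]
      have het : t = ⟨(s:ℕ)-1, lt_of_le_of_lt (Nat.sub_le _ _) s.isLt⟩ :=
        Fin.ext (by simp only [Fin.val_mk]; omega)
      rw [het]
      split_ifs <;> exact hhi _ s (by omega))
    hlam hlam1
    (fun j => by
      by_cases h : 0 < lam j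
      · exact ⟨j, h, by rw [hfh j, if_pos h], by rw [hρh j, if_pos h]⟩
      · exact ⟨j₀, hj₀, by rw [hfh j₀, hfh j, if_pos hj₀, if_neg h],
          by rw [hρh j₀, hρh j, if_pos hj₀, if_neg h]⟩)
    hτa
    (by rw [hsum]; exact hτ.symm)
  intro i
  obtain ⟨⟨j1, hj1⟩, ⟨j2, hj2⟩⟩ := hmain i
  constructor
  · rw [hρh j2] at hj2
    by_cases h : 0 < lam j2
    · rw [if_pos h] at hj2
      exact le_trans (Finset.inf'_le (fun j => ρ j i) (Finset.mem_univ j2)) hj2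
    · rw [if_neg h] at hj2
      exact le_trans (Finset.inf'_le (fun j => ρ j i) (Finset.mem_univ j₀)) hj2
  · rw [hρh j1] at hj1
    by_cases h : 0 < lam j1
    · rw [if_pos h] at hj1
      exact le_trans hj1 (Finset.le_sup' (fun j => ρ j i) (Finset.mem_univ j1))
    · rw [if_neg h] at hj1
      exact le_trans hj1 (Finset.le_sup' (fun j => ρ j i) (Finset.mem_univ j₀))
end

section
/- Let A be an n×n Hermitian complex matrix and v ∈ ℂⁿ. Then the characteristic polynomial of A + μvv* is an affine (degree ≤ 1) function of μ; that is, there exist polynomials P, Q ∈ ℂ[x] such that det(xI − (A + μvv*)) = P(x) + μ·Q(x) for all μ ∈ ℂ. Moreover, Q has degree n−1 with negative leading coefficient when v ≠ 0. -/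
open scoped BigOperators

open Matrix Polynomial in
/-- Matrix determinant lemma over a field. -/
lemma det_add_col_mul_row_field {K : Type*} [Field K] {m : Type*} [Fintype m] [DecidableEq m]
    (M : Matrix m m K) (hM : M.det ≠ 0) (u w : m → K) :
    (M + replicateCol Unit u * replicateRow Unit w).det = M.det + w ⬝ᵥ M.adjugate *ᵥ u := by
  have hunit : IsUnit M.det := isUnit_iff_ne_zero.mpr hM
  rw [Matrix.det_add_replicateCol_mul_replicateRow (ι := Unit) hunit u w,
    Matrix.det_unique (1 + replicateRow Unit w * M⁻¹ * replicateCol Unit u)]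
  have h1 : ((1 + replicateRow Unit w * M⁻¹ * replicateCol Unit u : Matrix Unit Unit K)) default default
      = 1 + w ⬝ᵥ M⁻¹ *ᵥ u := by
    simp only [Matrix.add_apply, Matrix.one_apply_eq, Matrix.mul_apply, Matrix.replicateRow_apply,
      Matrix.replicateCol_apply, dotProduct, mulVec]
    congr 1
    simp_rw [Finset.sum_mul, Finset.mul_sum]
    rw [Finset.sum_comm]
    exact Finset.sum_congr rfl fun i _ => Finset.sum_congr rfl fun j _ => by ring
  rw [h1, mul_add, mul_one]
  congr 1
  have h2 : M.det • M⁻¹ = M.adjugate := by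
    rw [Matrix.inv_def, smul_smul, mul_comm, Ring.inverse_mul_cancel _ hunit, one_smul]
  rw [← h2, Matrix.smul_mulVec, dotProduct_smul, smul_eq_mul]

open Matrix Polynomial in
/-- Matrix determinant lemma over an integral domain. -/
lemma det_add_col_mul_row_domain {R : Type*} [CommRing R] [IsDomain R] {m : Type*}
    [Fintype m] [DecidableEq m] (M : Matrix m m R) (hM : M.det ≠ 0) (u w : m → R) :
    (M + replicateCol Unit u * replicateRow Unit w).det = M.det + w ⬝ᵥ M.adjugate *ᵥ u := by
  let K := FractionRing R
  let φ : R →+* K := algebraMap R K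
  have hinj : Function.Injective φ := IsFractionRing.injective R K
  apply hinj
  have hmap : (M + replicateCol Unit u * replicateRow Unit w).map φ
      = M.map φ + replicateCol Unit (φ ∘ u) * replicateRow Unit (φ ∘ w) := by
    ext i j
    simp [Matrix.mul_apply, Matrix.map_apply, Matrix.add_apply]
  have hdet : ∀ N : Matrix m m R, φ N.det = (N.map φ).det := fun N => by
    rw [← RingHom.mapMatrix_apply, ← RingHom.map_det]
  have hMd : (M.map φ).det ≠ 0 := by
    rw [← hdet]
    exact fun h => hM (hinj (by simpa using h))
  rw [map_add, hdet, hmap, det_add_col_mul_row_field _ hMd, hdet]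
  congr 1
  rw [← RingHom.mapMatrix_apply, ← RingHom.map_adjugate, RingHom.mapMatrix_apply]
  simp [dotProduct, mulVec, map_sum, Finset.mul_sum, Function.comp]

open Matrix Polynomial in
/-- For a Hermitian matrix `A` and a vector `v`, the characteristic polynomial of
`A + μ·vv*` is an affine function of `μ`; moreover the polynomial coefficient `Q` of `μ`
has degree `n - 1` and a negative (real) leading coefficient when `v ≠ 0`. -/
theorem charpoly_rank_one_update_affine (n : ℕ) (A : Matrix (Fin n) (Fin n) ℂ)
    (hA : A.IsHermitian) (v : Fin n → ℂ) :
    ∃ P Q : Polynomial ℂ,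
      (∀ μ : ℂ, (A + μ • Matrix.vecMulVec v (star v)).charpoly = P + Polynomial.C μ * Q) ∧
      (v ≠ 0 → Q.natDegree = n - 1 ∧ ∃ c : ℝ, c < 0 ∧ Q.leadingCoeff = (c : ℂ)) := by
  classical
  set M := charmatrix A with hM
  set P := A.charpoly with hP
  set Q : Polynomial ℂ :=
    -((fun j => C (star (v j))) ⬝ᵥ M.adjugate *ᵥ (fun i => C (v i))) with hQdef
  have hdetM : M.det ≠ 0 := A.charpoly_monic.ne_zero
  have key : ∀ μ : ℂ, (A + μ • Matrix.vecMulVec v (star v)).charpoly = P + C μ * Q := by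
    intro μ
    have hchar : charmatrix (A + μ • Matrix.vecMulVec v (star v)) =
        M + replicateCol Unit (fun i => C (-(μ * v i))) * replicateRow Unit (fun j => C (star (v j))) := by
      refine Matrix.ext fun i j => ?_
      simp only [hM, charmatrix_apply, Matrix.add_apply, Matrix.smul_apply,
        Matrix.vecMulVec_apply, Matrix.mul_apply, Matrix.replicateCol_apply, Matrix.replicateRow_apply,
        Finset.univ_unique, Finset.sum_singleton, smul_eq_mul, C_add, C_mul, C_neg,
        Pi.star_apply]
      ring
    show (charmatrix (A + μ • Matrix.vecMulVec v (star v))).det = _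
    rw [hchar, det_add_col_mul_row_domain _ hdetM]
    have hu : (fun i => C (-(μ * v i))) = (-C μ) • (fun i => C (v i)) := by
      funext i
      simp [C_neg, C_mul, neg_mul]
    rw [hu, Matrix.mulVec_smul, dotProduct_smul, smul_eq_mul, hQdef]
    have hMP : M.det = P := rfl
    rw [hMP]
    ring
  refine ⟨P, Q, key, fun hv => ?_⟩
  obtain ⟨i0, hi0⟩ := Function.ne_iff.mp hv
  have hn : 0 < n := i0.pos
  haveI : Nonempty (Fin n) := ⟨i0⟩
  set B := A + Matrix.vecMulVec v (star v) with hB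
  have h1 : B.charpoly = P + Q := by
    have := key 1
    simpa using this
  have hQ : Q = B.charpoly - A.charpoly := by rw [h1, hP]; ring
  have hcard : Fintype.card (Fin n) = n := Fintype.card_fin n
  have htr : B.trace = A.trace + ∑ i, v i * star (v i) := by
    rw [hB, Matrix.trace_add]
    congr 1
  have hsum : ∑ i, v i * star (v i) = ((∑ i, ‖v i‖ ^ 2 : ℝ) : ℂ) := by
    have h : ∀ i, v i * star (v i) = ((‖v i‖ ^ 2 : ℝ) : ℂ) := fun i => by
      rw [RCLike.star_def, RCLike.mul_conj]; norm_cast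
    simp_rw [h]
    norm_cast
  have hAtr := Matrix.trace_eq_neg_charpoly_coeff A
  have hBtr := Matrix.trace_eq_neg_charpoly_coeff B
  rw [hcard] at hAtr hBtr
  have hco : Q.coeff (n - 1) = ((-(∑ i, ‖v i‖ ^ 2) : ℝ) : ℂ) := by
    have hA' : A.charpoly.coeff (n - 1) = -A.trace := by rw [hAtr]; ring
    have hB' : B.charpoly.coeff (n - 1) = -B.trace := by rw [hBtr]; ring
    rw [hQ, Polynomial.coeff_sub, hA', hB', htr, hsum]
    push_cast
    ring
  have hcsum : 0 < ∑ i, ‖v i‖ ^ 2 := by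
    refine Finset.sum_pos' (fun i _ => by positivity) ⟨i0, Finset.mem_univ _, ?_⟩
    have hvi : v i0 ≠ 0 := by simpa using hi0
    exact pow_pos (norm_pos_iff.mpr hvi) 2
  have hcoeff_ne : Q.coeff (n - 1) ≠ 0 := by
    rw [hco]
    exact_mod_cast neg_ne_zero.mpr hcsum.ne'
  have hdA : A.charpoly.degree = (n : ℕ) := by
    rw [Matrix.charpoly_degree_eq_dim, hcard]
  have hdB : B.charpoly.degree = (n : ℕ) := by
    rw [Matrix.charpoly_degree_eq_dim, hcard]
  have hlt : Q.degree < (n : ℕ) := by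
    rw [hQ, ← hdB]
    exact Polynomial.degree_sub_lt (hdB.trans hdA.symm) B.charpoly_monic.ne_zero
      (by rw [B.charpoly_monic.leadingCoeff, A.charpoly_monic.leadingCoeff])
  have hQ0 : Q ≠ 0 := fun h => hcoeff_ne (by simp [h])
  have hnlt : Q.natDegree < n := (Polynomial.natDegree_lt_iff_degree_lt hQ0).mpr hlt
  have hge : n - 1 ≤ Q.natDegree := Polynomial.le_natDegree_of_ne_zero hcoeff_ne
  have hnat : Q.natDegree = n - 1 := by omega
  refine ⟨hnat, -(∑ i, ‖v i‖ ^ 2), neg_lt_zero.mpr hcsum, ?_⟩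
  rw [Polynomial.leadingCoeff, hnat, hco]
end

section
/- Let D be a unitary d×d matrix with rank(D − I_d) = 1 and A a Hermitian d×d matrix. Then DAD* − A is a Hermitian matrix of rank at most 2 with trace zero; consequently there exist vectors u, v ∈ ℂ^d such that DAD* − A = uu* − vv*. -/
open scoped Matrix

lemma rank_le_one_exists_vecMulVec {d : ℕ} (N : Matrix (Fin d) (Fin d) ℂ)
    (h : N.rank ≤ 1) : ∃ p q : Fin d → ℂ, N = Matrix.vecMulVec p q := by
  have h' : Module.finrank ℂ (LinearMap.range N.mulVecLin) ≤ 1 := h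
  obtain ⟨v, hv⟩ := finrank_le_one_iff.mp h'
  choose c hc using fun j =>
    hv ⟨N.mulVecLin (Pi.single j 1), LinearMap.mem_range_self _ _⟩
  refine ⟨(v : Fin d → ℂ), c, ?_⟩
  ext i j
  have := congrArg (fun w : LinearMap.range N.mulVecLin => (w : Fin d → ℂ) i) (hc j)
  simp only [Matrix.mulVecLin_apply, Matrix.mulVec_single_one] at this
  simpa [Matrix.vecMulVec_apply, mul_comm] using this.symm

lemma vecMulVec_mul_right {d : ℕ} (p q : Fin d → ℂ) (A : Matrix (Fin d) (Fin d) ℂ) :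
    Matrix.vecMulVec p q * A = Matrix.vecMulVec p (q ᵥ* A) := by
  ext i j
  simp [Matrix.mul_apply, Matrix.vecMulVec_apply, Matrix.vecMul, dotProduct,
    Finset.mul_sum, mul_assoc]

lemma key_decomp {d : ℕ} (A : Matrix (Fin d) (Fin d) ℂ) (hA : A.IsHermitian) (p q : Fin d → ℂ) :
    ∃ x y : Fin d → ℂ,
      Matrix.vecMulVec p q * A + A * (Matrix.vecMulVec p q)ᴴ
          + Matrix.vecMulVec p q * A * (Matrix.vecMulVec p q)ᴴ
        = Matrix.vecMulVec x (star y) + Matrix.vecMulVec y (star x) := by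
  set m : Fin d → ℂ := q ᵥ* A with hm
  set s : ℂ := m ⬝ᵥ star q with hs
  have hsr : (starRingEnd ℂ) s = s := by
    simp only [hs, hm, dotProduct, Matrix.vecMul, dotProduct, map_sum,
      _root_.map_mul, Finset.sum_mul]
    rw [Finset.sum_comm]
    refine Finset.sum_congr rfl fun j _ => Finset.sum_congr rfl fun k _ => ?_
    simp only [starRingEnd_apply, Pi.star_apply, star_star, hA.apply]
    ring
  refine ⟨p, star m + (s/2) • p, ?_⟩
  have h1 : Matrix.vecMulVec p q * A = Matrix.vecMulVec p m := vecMulVec_mul_right p q A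
  have h2 : A * (Matrix.vecMulVec p q)ᴴ = Matrix.vecMulVec (star m) (star p) := by
    ext i j
    simp only [Matrix.mul_apply, Matrix.vecMulVec_apply, Matrix.conjTranspose_apply,
      Pi.star_apply, hm, Matrix.vecMul, dotProduct, star_mul', star_sum, Finset.sum_mul]
    refine Finset.sum_congr rfl fun k _ => ?_
    simp only [star_mul', hA.apply]
    ring
  have h3 : Matrix.vecMulVec p m * (Matrix.vecMulVec p q)ᴴ
      = s • Matrix.vecMulVec p (star p) := by
    ext i j
    simp only [Matrix.mul_apply, Matrix.vecMulVec_apply, Matrix.conjTranspose_apply,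
      Matrix.smul_apply, smul_eq_mul, hs, dotProduct, Pi.star_apply, star_mul',
      Finset.sum_mul]
    rw [← Finset.sum_mul, Finset.sum_mul]
    refine Finset.sum_congr rfl fun k _ => ?_
    ring
  rw [h1, h2, h3]
  have hs2 : (starRingEnd ℂ) (s / 2) = s / 2 := by
    rw [map_div₀, hsr, map_ofNat]
  ext i j
  simp only [Matrix.add_apply, Matrix.smul_apply, Matrix.vecMulVec_apply, Pi.add_apply,
    Pi.star_apply, Pi.smul_apply, smul_eq_mul, star_add, star_mul', star_star,
    starRingEnd_apply] at *
  rw [show star (s / 2) = s / 2 from hs2]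
  ring_nf

/-- For a unitary `D` with `rank (D - I) = 1` and a Hermitian `A`, the matrix
`D A D* - A` is Hermitian of rank at most `2` with trace zero, and can be written as
`uu* - vv*` for some vectors `u`, `v`. -/
theorem conj_sub_self_rank_two (d : ℕ) (D A : Matrix (Fin d) (Fin d) ℂ)
    (hD : D ∈ Matrix.unitaryGroup (Fin d) ℂ) (hrank : (D - 1).rank = 1)
    (hA : A.IsHermitian) :
    (D * A * Dᴴ - A).IsHermitian ∧ (D * A * Dᴴ - A).rank ≤ 2 ∧
      (D * A * Dᴴ - A).trace = 0 ∧
      ∃ u v : Fin d → ℂ,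
        D * A * Dᴴ - A = Matrix.vecMulVec u (star u) - Matrix.vecMulVec v (star v) := by
  -- the structural decomposition
  obtain ⟨p, q, hpq⟩ := rank_le_one_exists_vecMulVec (D - 1) hrank.le
  have hM : D * A * Dᴴ - A
      = (D - 1) * A + A * (D - 1)ᴴ + (D - 1) * A * (D - 1)ᴴ := by
    have h1 : D = (D - 1) + 1 := by abel
    rw [Matrix.conjTranspose_sub, Matrix.conjTranspose_one]
    nth_rewrite 1 [h1]
    nth_rewrite 1 [h1]
    noncomm_ring
  obtain ⟨x, y, hxy⟩ := key_decomp A hA p q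
  rw [hpq] at hM
  rw [hxy] at hM
  -- the u, v vectors
  have hc : (((Real.sqrt 2)⁻¹ : ℝ) : ℂ) * (((Real.sqrt 2)⁻¹ : ℝ) : ℂ) = 1 / 2 := by
    rw [← Complex.ofReal_mul, ← mul_inv, Real.mul_self_sqrt (by norm_num : (0:ℝ) ≤ 2)]
    push_cast
    norm_num
  set c : ℂ := (((Real.sqrt 2)⁻¹ : ℝ) : ℂ) with hcdef
  have hcc : (starRingEnd ℂ) c = c := Complex.conj_ofReal _
  set u : Fin d → ℂ := fun i => c * (x i + y i) with hu
  set v : Fin d → ℂ := fun i => c * (x i - y i) with hv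
  have huv : D * A * Dᴴ - A
      = Matrix.vecMulVec u (star u) - Matrix.vecMulVec v (star v) := by
    rw [hM]
    ext i j
    simp only [Matrix.add_apply, Matrix.sub_apply, Matrix.vecMulVec_apply, Pi.star_apply, hu, hv,
      star_mul', star_add, star_sub, starRingEnd_apply]
    have hc' : c * c = 1 / 2 := hc
    have hsc : star c = c := Complex.conj_ofReal _
    have hc2 : c ^ 2 = 1 / 2 := by rw [sq]; exact hc'
    rw [hsc]
    ring_nf
    rw [hc2]
    ring
  refine ⟨?_, ?_, ?_, u, v, huv⟩
  · show (D * A * Dᴴ - A)ᴴ = _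
    simp [Matrix.conjTranspose_sub, Matrix.conjTranspose_mul, hA.eq, Matrix.mul_assoc]
  · -- rank ≤ 2
    set C : Matrix (Fin d) (Fin 2) ℂ :=
      Matrix.of fun i k => if k = 0 then u i else v i with hC
    set R : Matrix (Fin 2) (Fin d) ℂ :=
      Matrix.of fun k j => if k = 0 then star (u j) else -(star (v j)) with hR
    have hCR : D * A * Dᴴ - A = C * R := by
      rw [huv]
      ext i j
      simp [Matrix.mul_apply, Fin.sum_univ_two, hC, hR, Matrix.vecMulVec_apply]
      ring
    rw [hCR]
    exact (Matrix.rank_mul_le_left C R).trans (by simpa using C.rank_le_card_width)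
  · have hDU : Dᴴ * D = 1 := by
      have := hD.1
      rwa [Matrix.star_eq_conjTranspose] at this
    rw [Matrix.trace_sub, Matrix.trace_mul_cycle, hDU, Matrix.one_mul, sub_self]
end

section
/- Let γ be a labeling of the oriented edges of a finite graph G by elements of S_r (with γ(−e) = γ(e)⁻¹), let H be the r-covering of G determined by γ, and let std denote the standard (r−1)-dimensional representation of S_r. Then the characteristic polynomial of the adjacency matrix of H equals the characteristic polynomial of A_G times the characteristic polynomial of A_{γ,std}; equivalently, the multiset of new eigenvalues of the covering H equals the spectrum of A_{γ,std}. -/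
open scoped BigOperators

open Polynomial Matrix
open scoped Kronecker


lemma charpoly_eq_of_mul_eq {n : Type*} [Fintype n] [DecidableEq n]
    (A B W : Matrix n n ℂ) (hW : IsUnit W.det) (h : A * W = W * B) :
    A.charpoly = B.charpoly := by
  have key : A.charmatrix * W.map C = W.map C * B.charmatrix := by
    unfold Matrix.charmatrix
    rw [sub_mul, mul_sub]
    have h1 : Matrix.scalar n (X : ℂ[X]) * W.map C = W.map C * Matrix.scalar n (X : ℂ[X]) :=
      (Matrix.scalar_commute (X : ℂ[X]) (fun r' => Commute.all _ _) (W.map C)).eq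
    have h2 : (C : ℂ →+* ℂ[X]).mapMatrix A * W.map C = W.map C * (C : ℂ →+* ℂ[X]).mapMatrix B := by
      simp only [RingHom.mapMatrix_apply]
      rw [← Matrix.map_mul, h, Matrix.map_mul]
    rw [h1, h2]
  have hdet : (W.map C).det ≠ 0 := by
    have : W.map C = (C : ℂ →+* ℂ[X]).mapMatrix W := rfl
    rw [this, ← RingHom.map_det]
    simpa using hW.ne_zero
  have := congrArg Matrix.det key
  rw [Matrix.det_mul, Matrix.det_mul] at this
  unfold Matrix.charpoly
  exact mul_right_cancel₀ hdet (by rw [this, mul_comm])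


/-- Let `γ` be an `S_r`-labeling of a finite graph `G` (oriented edges `E`, with
`γ (-e) = (γ e)⁻¹`), `H` the associated `r`-covering with adjacency matrix `AH`, and `std`
the standard `(r-1)`-dimensional representation of `S_r`, i.e. a representation such that
the permutation representation is similar to `triv ⊕ std`.  Then the characteristic
polynomial of `AH` equals the characteristic polynomial of `A_G` times that of
`A_{γ,std}`; equivalently, the new spectrum of `H` is the spectrum of `A_{γ,std}`. -/
theorem covering_charpoly_eq_base_mul_std
    (r : ℕ) (hr : 1 ≤ r)
    (std : Equiv.Perm (Fin r) →* Matrix (Fin (r - 1)) (Fin (r - 1)) ℂ)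
    (hstd : ∃ (ι : Fin r ≃ (Unit ⊕ Fin (r - 1))) (U : Matrix (Fin r) (Fin r) ℂ),
      IsUnit U ∧ ∀ g : Equiv.Perm (Fin r),
        (Matrix.of fun i j : Fin r => if i = g j then (1 : ℂ) else 0) * U =
          U * ((Matrix.reindex ι.symm ι.symm)
            (Matrix.fromBlocks (1 : Matrix Unit Unit ℂ) 0 0 (std g))))
    (V E : Type) [Fintype V] [Fintype E] [DecidableEq V] [DecidableEq E]
    (rev : E → E) (hd tl : E → V)
    (hrev : ∀ e, rev (rev e) = e) (hheadtail : ∀ e, hd (rev e) = tl e)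
    (γ : E → Equiv.Perm (Fin r)) (hγ : ∀ e, γ (rev e) = (γ e)⁻¹)
    (AG : Matrix V V ℂ)
    (hAG : ∀ u v, AG u v =
      ((Finset.univ.filter (fun e => tl e = u ∧ hd e = v)).card : ℂ))
    (AH : Matrix (V × Fin r) (V × Fin r) ℂ)
    (hAH : ∀ u v i j, AH (u, i) (v, j) =
      ∑ e ∈ Finset.univ.filter (fun e => tl e = u ∧ hd e = v),
        (if i = γ e j then (1 : ℂ) else 0))
    (Astd : Matrix (V × Fin (r - 1)) (V × Fin (r - 1)) ℂ)
    (hAstd : ∀ u v i j, Astd (u, i) (v, j) =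
      ∑ e ∈ Finset.univ.filter (fun e => tl e = u ∧ hd e = v), std (γ e) i j) :
    AH.charpoly = AG.charpoly * Astd.charpoly := by
  obtain ⟨ι, U, hU, hUg⟩ := hstd
  set F : V → V → Finset E := fun u v => Finset.univ.filter (fun e => tl e = u ∧ hd e = v) with hF
  set R' : Equiv.Perm (Fin r) → Matrix (Fin r) (Fin r) ℂ := fun g =>
    (Matrix.reindex ι.symm ι.symm) (Matrix.fromBlocks (1 : Matrix Unit Unit ℂ) 0 0 (std g)) with hR'
  set B : Matrix (V × Fin r) (V × Fin r) ℂ :=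
    Matrix.of (fun p q => ∑ e ∈ F p.1 q.1, R' (γ e) p.2 q.2) with hB
  set W : Matrix (V × Fin r) (V × Fin r) ℂ := (1 : Matrix V V ℂ) ⊗ₖ U with hW
  have hWdet : IsUnit W.det := by
    rw [hW, Matrix.det_kronecker]
    simpa using ((Matrix.isUnit_iff_isUnit_det U).mp hU).pow (Fintype.card V)
  have hsim : AH * W = W * B := by
    ext ⟨u, i⟩ ⟨v, j⟩
    rw [Matrix.mul_apply, Matrix.mul_apply, Fintype.sum_prod_type, Fintype.sum_prod_type]
    have lhs : ∑ w : V, ∑ k : Fin r, AH (u, i) (w, k) * W (w, k) (v, j)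
        = ∑ k : Fin r, AH (u, i) (v, k) * U k j := by
      rw [Finset.sum_comm]
      rw [show ∑ k : Fin r, ∑ w : V, AH (u, i) (w, k) * W (w, k) (v, j)
          = ∑ k : Fin r, ∑ w : V, (if w = v then AH (u, i) (w, k) * U k j else 0) by
        refine Finset.sum_congr rfl fun k _ => Finset.sum_congr rfl fun w _ => ?_
        simp only [hW, kroneckerMap_apply, Matrix.one_apply]
        split_ifs <;> ring]
      simp
    have rhs : ∑ w : V, ∑ k : Fin r, W (u, i) (w, k) * B (w, k) (v, j)
        = ∑ k : Fin r, U i k * B (u, k) (v, j) := by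
      rw [show ∑ w : V, ∑ k : Fin r, W (u, i) (w, k) * B (w, k) (v, j)
          = ∑ w : V, ∑ k : Fin r, (if u = w then U i k * B (w, k) (v, j) else 0) by
        refine Finset.sum_congr rfl fun w _ => Finset.sum_congr rfl fun k _ => ?_
        simp only [hW, kroneckerMap_apply, Matrix.one_apply]
        split_ifs <;> ring]
      simp
    rw [lhs, rhs]
    have e1 : ∑ k : Fin r, AH (u, i) (v, k) * U k j
        = ∑ e ∈ F u v, ∑ k : Fin r, (if i = γ e k then (1 : ℂ) else 0) * U k j := by
      simp_rw [hAH, Finset.sum_mul]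
      exact Finset.sum_comm
    have e2 : ∑ k : Fin r, U i k * B (u, k) (v, j)
        = ∑ e ∈ F u v, ∑ k : Fin r, U i k * R' (γ e) k j := by
      simp only [hB, Matrix.of_apply, Finset.mul_sum]
      exact Finset.sum_comm
    rw [e1, e2]
    refine Finset.sum_congr rfl fun e _ => ?_
    have h2 : ((Matrix.of fun a b : Fin r => if a = γ e b then (1 : ℂ) else 0) * U) i j
        = (U * R' (γ e)) i j := by rw [hUg (γ e)]
    simpa [Matrix.mul_apply] using h2
  have hAHB : AH.charpoly = B.charpoly := charpoly_eq_of_mul_eq _ _ _ hWdet hsim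
  let φ : V × Fin r ≃ V ⊕ (V × Fin (r - 1)) :=
    (Equiv.prodCongr (Equiv.refl V) ι).trans ((Equiv.prodSumDistrib V Unit (Fin (r - 1))).trans
      (Equiv.sumCongr (Equiv.prodPUnit V) (Equiv.refl (V × Fin (r - 1)))))
  have hφl : ∀ u : V, φ.symm (Sum.inl u) = (u, ι.symm (Sum.inl ())) := fun u => rfl
  have hφr : ∀ (v : V) (k : Fin (r - 1)), φ.symm (Sum.inr (v, k)) = (v, ι.symm (Sum.inr k)) :=
    fun v k => rfl
  have hre : Matrix.reindex φ φ B = Matrix.fromBlocks AG 0 0 Astd := by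
    ext x y
    have hRentry : ∀ (g : Equiv.Perm (Fin r)) (a b : Unit ⊕ Fin (r - 1)),
        R' g (ι.symm a) (ι.symm b) =
          Matrix.fromBlocks (1 : Matrix Unit Unit ℂ) 0 0 (std g) a b := by
      intro g a b
      simp [hR', Matrix.reindex_apply, Matrix.submatrix_apply]
    rcases x with u | ⟨u, k⟩ <;> rcases y with v | ⟨v, l⟩
    · simp only [Matrix.reindex_apply, Matrix.submatrix_apply, hφl, hB, Matrix.of_apply,
        hRentry, Matrix.fromBlocks_apply₁₁]
      simp [hAG u v, hF]
    · simp only [Matrix.reindex_apply, Matrix.submatrix_apply, hφl, hφr, hB, Matrix.of_apply,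
        hRentry]
      simp
    · simp only [Matrix.reindex_apply, Matrix.submatrix_apply, hφl, hφr, hB, Matrix.of_apply,
        hRentry]
      simp
    · simp only [Matrix.reindex_apply, Matrix.submatrix_apply, hφr, hB, Matrix.of_apply,
        hRentry, Matrix.fromBlocks_apply₂₂]
      rw [hAstd u v k l]
  rw [hAHB, ← Matrix.charpoly_reindex φ B, hre, Matrix.charpoly_fromBlocks_zero₂₁]
end

section
/- Let Γ be a finite group generated by g₁,…,g_s. Define a random walk (a_n) on Γ by a₀ = 1 and a_n = g_{(n mod s)}·a_{n−1}, g_{(n mod s)}^{−1}·a_{n−1}, or a_{n−1}, each with probability 1/3. Then the distribution of a_n converges to the uniform distribution on Γ as n → ∞. -/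
open scoped BigOperators

section Aux

variable {Γ : Type} [Group Γ] [Fintype Γ]
variable {s : ℕ} (hs : 0 < s) (gen : Fin s → Γ) (p : ℕ → Γ → ℝ)

/-- minimum of `p n` over the group -/
noncomputable def mmRW (p : ℕ → Γ → ℝ) (n : ℕ) : ℝ :=
  Finset.univ.inf' (Finset.univ_nonempty (α := Γ)) (p n)

/-- maximum of `p n` over the group -/
noncomputable def MMRW (p : ℕ → Γ → ℝ) (n : ℕ) : ℝ :=
  Finset.univ.sup' (Finset.univ_nonempty (α := Γ)) (p n)

lemma mmRW_le (n : ℕ) (x : Γ) : mmRW p n ≤ p n x :=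
  Finset.inf'_le _ (Finset.mem_univ x)

lemma le_MMRW (n : ℕ) (x : Γ) : p n x ≤ MMRW p n :=
  Finset.le_sup' _ (Finset.mem_univ x)

variable (hpstep : ∀ n x, p (n + 1) x =
      (1 / 3) * p n ((gen ⟨n % s, Nat.mod_lt n hs⟩)⁻¹ * x) +
      (1 / 3) * p n (gen ⟨n % s, Nat.mod_lt n hs⟩ * x) +
      (1 / 3) * p n x)

include hs gen hpstep

lemma mmRW_mono : Monotone (mmRW p) := by
  refine monotone_nat_of_le_succ fun n => Finset.le_inf' _ _ fun x _ => ?_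
  rw [hpstep n x]
  have h1 := mmRW_le p n ((gen ⟨n % s, Nat.mod_lt n hs⟩)⁻¹ * x)
  have h2 := mmRW_le p n (gen ⟨n % s, Nat.mod_lt n hs⟩ * x)
  have h3 := mmRW_le p n x
  linarith

lemma MMRW_anti : Antitone (MMRW p) := by
  refine antitone_nat_of_succ_le fun n => Finset.sup'_le _ _ fun x _ => ?_
  rw [hpstep n x]
  have h1 := le_MMRW p n ((gen ⟨n % s, Nat.mod_lt n hs⟩)⁻¹ * x)
  have h2 := le_MMRW p n (gen ⟨n % s, Nat.mod_lt n hs⟩ * x)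
  have h3 := le_MMRW p n x
  linarith

/-- waiting: laziness bound over `k` steps, relative to base value `mmRW p b`. -/
lemma lower_wait {b n : ℕ} (hb : b ≤ n) (k : ℕ) (x : Γ) :
    (1/3 : ℝ)^k * (p n x - mmRW p b) ≤ p (n + k) x - mmRW p b := by
  induction k with
  | zero => simp
  | succ k ih =>
    have hstep : (1/3 : ℝ) * (p (n+k) x - mmRW p b) ≤ p (n+k+1) x - mmRW p b := by
      rw [hpstep (n+k) x]
      have hm : mmRW p b ≤ mmRW p (n+k) :=
        mmRW_mono hs gen p hpstep (hb.trans (Nat.le_add_right n k))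
      have h1 := mmRW_le p (n+k) ((gen ⟨(n+k) % s, Nat.mod_lt _ hs⟩)⁻¹ * x)
      have h2 := mmRW_le p (n+k) (gen ⟨(n+k) % s, Nat.mod_lt _ hs⟩ * x)
      linarith
    calc (1/3 : ℝ)^(k+1) * (p n x - mmRW p b)
        = (1/3) * ((1/3 : ℝ)^k * (p n x - mmRW p b)) := by ring
      _ ≤ (1/3) * (p (n+k) x - mmRW p b) := by
          have := mul_le_mul_of_nonneg_left ih (by norm_num : (0:ℝ) ≤ 1/3)
          linarith
      _ ≤ p (n+k+1) x - mmRW p b := hstep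

/-- one multiplication by `g` (either `gen i` or `(gen i)⁻¹`) within a window `2*s`. -/
lemma lower_window {b : ℕ} (i : Fin s) (g : Γ)
    (hg : ∀ m x, b ≤ m → m % s = i.val →
      (1/3 : ℝ) * (p m (g * x) - mmRW p b) ≤ p (m + 1) x - mmRW p b)
    {n : ℕ} (hb : b ≤ n) (x : Γ) :
    (1/3 : ℝ)^(2*s) * (p n (g * x) - mmRW p b) ≤ p (n + 2*s) x - mmRW p b := by
  have hilt : i.val < s := i.isLt
  obtain ⟨q, r, hqr, hr⟩ : ∃ q r, s * q + r = n ∧ r < s :=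
    ⟨n / s, n % s, Nat.div_add_mod n s, Nat.mod_lt n hs⟩
  set k := i.val + s - r with hk
  have hk1 : 1 ≤ k := by omega
  have hk2 : k + 1 ≤ 2 * s := by omega
  have hmodeq : (n + k) % s = i.val := by
    have h1 : n + k = i.val + s * (q + 1) := by
      rw [Nat.mul_add, Nat.mul_one]; omega
    rw [h1, Nat.add_mul_mod_self_left, Nat.mod_eq_of_lt hilt]
  set k2 := 2 * s - (k + 1) with hk2'
  have c1 := lower_wait hs gen p hpstep hb k (g * x)
  have c2 := hg (n + k) x (hb.trans (Nat.le_add_right n k)) hmodeq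
  have c3 := lower_wait hs gen p hpstep (hb.trans (Nat.le_add_right n (k+1))) k2 x
  have hidx : n + (k + 1) + k2 = n + 2 * s := by omega
  rw [hidx] at c3
  have hpow : (1/3 : ℝ)^(2*s) = (1/3)^k2 * (1/3) * (1/3)^k := by
    rw [show 2*s = k2 + 1 + k by omega, pow_add, pow_add, pow_one]
  have h3nn : (0:ℝ) ≤ (1/3 : ℝ)^k2 := by positivity
  calc (1/3 : ℝ)^(2*s) * (p n (g * x) - mmRW p b)
      = (1/3 : ℝ)^k2 * ((1/3) * ((1/3)^k * (p n (g * x) - mmRW p b))) := by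
        rw [hpow]; ring
    _ ≤ (1/3 : ℝ)^k2 * ((1/3) * (p (n + k) (g * x) - mmRW p b)) := by
        refine mul_le_mul_of_nonneg_left ?_ h3nn
        have := mul_le_mul_of_nonneg_left c1 (by norm_num : (0:ℝ) ≤ 1/3)
        linarith
    _ ≤ (1/3 : ℝ)^k2 * (p (n + (k + 1)) x - mmRW p b) := by
        rw [show n + (k+1) = n + k + 1 from rfl]
        exact mul_le_mul_of_nonneg_left c2 h3nn
    _ ≤ p (n + 2*s) x - mmRW p b := c3

/-- the Doeblin property: some window `T = L*(2*s)` works for every group element. -/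
lemma lower_all (hgen : Subgroup.closure (Set.range gen) = ⊤) :
    ∃ L : ℕ, ∀ (w : Γ) {b n : ℕ}, b ≤ n → ∀ x : Γ,
      (1/3 : ℝ)^(L*(2*s)) * (p n (w * x) - mmRW p b) ≤ p (n + L*(2*s)) x - mmRW p b := by
  classical
  set P : Γ → ℕ → Prop := fun w L => ∀ {b n : ℕ}, b ≤ n → ∀ x : Γ,
      (1/3 : ℝ)^(L*(2*s)) * (p n (w * x) - mmRW p b) ≤ p (n + L*(2*s)) x - mmRW p b with hP
  -- monotonicity in L
  have hmono : ∀ w L, P w L → P w (L+1) := by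
    intro w L h b n hb x
    have h1 := h hb x
    have h2 := lower_wait hs gen p hpstep (hb.trans (Nat.le_add_right n (L*(2*s)))) (2*s) x
    have hidx : n + L*(2*s) + 2*s = n + (L+1)*(2*s) := by ring_nf
    rw [hidx] at h2
    have hpow : (1/3 : ℝ)^((L+1)*(2*s)) = (1/3)^(2*s) * (1/3)^(L*(2*s)) := by
      rw [← pow_add]; ring_nf
    have h3nn : (0:ℝ) ≤ (1/3 : ℝ)^(2*s) := by positivity
    calc (1/3 : ℝ)^((L+1)*(2*s)) * (p n (w * x) - mmRW p b)
        = (1/3 : ℝ)^(2*s) * ((1/3)^(L*(2*s)) * (p n (w * x) - mmRW p b)) := by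
          rw [hpow]; ring
      _ ≤ (1/3 : ℝ)^(2*s) * (p (n + L*(2*s)) x - mmRW p b) :=
          mul_le_mul_of_nonneg_left h1 h3nn
      _ ≤ p (n + (L+1)*(2*s)) x - mmRW p b := h2
  have hmono' : ∀ w L L', L ≤ L' → P w L → P w L' := by
    intro w L L' hLL h
    induction L', hLL using Nat.le_induction with
    | base => exact h
    | succ L' hLL ih => exact hmono w L' ih
  -- the set of elements with the property is a submonoid
  set S : Submonoid Γ :=
  { carrier := {w | ∃ L, P w L}
    one_mem' := ⟨0, by intro b n hb x; simpa using le_refl (p n x - mmRW p b)⟩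
    mul_mem' := by
      rintro w w' ⟨L, hL⟩ ⟨L', hL'⟩
      refine ⟨L + L', ?_⟩
      intro b n hb x
      have h1 : (1/3 : ℝ)^(L*(2*s)) * (p n ((w*w') * x) - mmRW p b)
          ≤ p (n + L*(2*s)) (w' * x) - mmRW p b := by
        have h0 := hL hb (w' * x)
        rw [mul_assoc w w' x]
        exact h0
      have h2 := hL' (hb.trans (Nat.le_add_right n (L*(2*s)))) x
      have hidx : n + L*(2*s) + L'*(2*s) = n + (L+L')*(2*s) := by ring
      rw [hidx] at h2
      have hpow : (1/3 : ℝ)^((L+L')*(2*s)) = (1/3)^(L'*(2*s)) * (1/3)^(L*(2*s)) := by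
        rw [← pow_add]; ring_nf
      have h3nn : (0:ℝ) ≤ (1/3 : ℝ)^(L'*(2*s)) := by positivity
      calc (1/3 : ℝ)^((L+L')*(2*s)) * (p n ((w*w') * x) - mmRW p b)
          = (1/3 : ℝ)^(L'*(2*s)) * ((1/3)^(L*(2*s)) * (p n ((w*w') * x) - mmRW p b)) := by
            rw [hpow]; ring
        _ ≤ (1/3 : ℝ)^(L'*(2*s)) * (p (n + L*(2*s)) (w' * x) - mmRW p b) :=
            mul_le_mul_of_nonneg_left h1 h3nn
        _ ≤ p (n + (L+L')*(2*s)) x - mmRW p b := h2 }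
  -- generators and their inverses belong to S
  have hgenS : ∀ i : Fin s, gen i ∈ S := by
    intro i
    refine ⟨1, ?_⟩
    intro b n hb x
    rw [one_mul]
    refine lower_window hs gen p hpstep i (gen i) ?_ hb x
    intro m y hbm hm
    rw [hpstep m y]
    have hfin : (⟨m % s, Nat.mod_lt m hs⟩ : Fin s) = i := Fin.ext hm
    rw [hfin]
    have hmb : mmRW p b ≤ mmRW p m := mmRW_mono hs gen p hpstep hbm
    have h1 := mmRW_le p m ((gen i)⁻¹ * y)
    have h2 := mmRW_le p m y
    linarith
  have hgeninvS : ∀ i : Fin s, (gen i)⁻¹ ∈ S := by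
    intro i
    refine ⟨1, ?_⟩
    intro b n hb x
    rw [one_mul]
    refine lower_window hs gen p hpstep i (gen i)⁻¹ ?_ hb x
    intro m y hbm hm
    rw [hpstep m y]
    have hfin : (⟨m % s, Nat.mod_lt m hs⟩ : Fin s) = i := Fin.ext hm
    rw [hfin]
    have hmb : mmRW p b ≤ mmRW p m := mmRW_mono hs gen p hpstep hbm
    have h1 := mmRW_le p m (gen i * y)
    have h2 := mmRW_le p m y
    linarith
  -- every element belongs to S
  have hST : ∀ w : Γ, w ∈ S := by
    have hcl : Submonoid.closure (Set.range gen ∪ (Set.range gen)⁻¹) = ⊤ := by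
      rw [← Subgroup.closure_toSubmonoid, hgen]; rfl
    have hle : Submonoid.closure (Set.range gen ∪ (Set.range gen)⁻¹) ≤ S := by
      rw [Submonoid.closure_le]
      rintro w (⟨i, rfl⟩ | hw)
      · exact hgenS i
      · rw [Set.mem_inv] at hw
        obtain ⟨i, hi⟩ := hw
        have := hgeninvS i
        rwa [hi, inv_inv] at this
    intro w
    exact hle (hcl ▸ Submonoid.mem_top w)
  -- uniformize L by taking the maximum
  choose f hf using hST
  refine ⟨Finset.univ.sup f, ?_⟩
  intro w b n hb x
  exact hmono' w (f w) (Finset.univ.sup f) (Finset.le_sup (Finset.mem_univ w)) (hf w) hb x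

end Aux

/-- Let `Γ` be a finite group generated by `g₁,…,g_s`.  The lazy random walk which at step
`n` multiplies on the left by `g_{n mod s}`, by `g_{n mod s}⁻¹`, or stays put, each with
probability `1/3`, converges in distribution to the uniform distribution on `Γ`.
Here `p n x` is the probability that the walk is at `x` at time `n`. -/
theorem lazy_random_walk_uniform (Γ : Type) [Group Γ] [Fintype Γ] [DecidableEq Γ]
    (s : ℕ) (hs : 0 < s) (gen : Fin s → Γ)
    (hgen : Subgroup.closure (Set.range gen) = ⊤)
    (p : ℕ → Γ → ℝ)
    (hp0 : p 0 = fun x => if x = 1 then 1 else 0)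
    (hpstep : ∀ n x, p (n + 1) x =
      (1 / 3) * p n ((gen ⟨n % s, Nat.mod_lt n hs⟩)⁻¹ * x) +
      (1 / 3) * p n (gen ⟨n % s, Nat.mod_lt n hs⟩ * x) +
      (1 / 3) * p n x) :
    ∀ x : Γ, Filter.Tendsto (fun n => p n x) Filter.atTop
      (nhds (1 / (Fintype.card Γ : ℝ))) := by
  classical
  -- total probability is conserved
  have hsum : ∀ n, ∑ x : Γ, p n x = 1 := by
    intro n
    induction n with
    | zero => rw [hp0]; simp
    | succ n ih =>
      have h1 : ∑ x : Γ, p n ((gen ⟨n % s, Nat.mod_lt n hs⟩)⁻¹ * x) = 1 := by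
        rw [← ih]
        exact Fintype.sum_equiv (Equiv.mulLeft (gen ⟨n % s, Nat.mod_lt n hs⟩)⁻¹)
          (fun x => p n ((gen ⟨n % s, Nat.mod_lt n hs⟩)⁻¹ * x)) (p n) (fun x => rfl)
      have h2 : ∑ x : Γ, p n (gen ⟨n % s, Nat.mod_lt n hs⟩ * x) = 1 := by
        rw [← ih]
        exact Fintype.sum_equiv (Equiv.mulLeft (gen ⟨n % s, Nat.mod_lt n hs⟩))
          (fun x => p n (gen ⟨n % s, Nat.mod_lt n hs⟩ * x)) (p n) (fun x => rfl)
      calc ∑ x : Γ, p (n+1) x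
          = ∑ x : Γ, ((1/3) * p n ((gen ⟨n % s, Nat.mod_lt n hs⟩)⁻¹ * x) +
              (1/3) * p n (gen ⟨n % s, Nat.mod_lt n hs⟩ * x) + (1/3) * p n x) := by
            refine Finset.sum_congr rfl fun x _ => hpstep n x
        _ = 1 := by
            rw [Finset.sum_add_distrib, Finset.sum_add_distrib, ← Finset.mul_sum,
              ← Finset.mul_sum, ← Finset.mul_sum, h1, h2, ih]
            norm_num
  have hcardpos : (0:ℝ) < (Fintype.card Γ : ℝ) := by
    exact_mod_cast Fintype.card_pos
  -- min ≤ 1/card ≤ max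
  have hum : ∀ n, mmRW p n ≤ 1 / (Fintype.card Γ : ℝ) := by
    intro n
    rw [le_div_iff₀ hcardpos, ← hsum n]
    calc mmRW p n * (Fintype.card Γ : ℝ) = ∑ _x : Γ, mmRW p n := by
          rw [Finset.sum_const, Finset.card_univ, nsmul_eq_mul]; ring
      _ ≤ ∑ x : Γ, p n x := Finset.sum_le_sum fun x _ => mmRW_le p n x
  have huM : ∀ n, 1 / (Fintype.card Γ : ℝ) ≤ MMRW p n := by
    intro n
    rw [div_le_iff₀ hcardpos, ← hsum n]
    calc ∑ x : Γ, p n x ≤ ∑ _x : Γ, MMRW p n := Finset.sum_le_sum fun x _ => le_MMRW p n x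
      _ = MMRW p n * (Fintype.card Γ : ℝ) := by
          rw [Finset.sum_const, Finset.card_univ, nsmul_eq_mul]; ring
  -- the gap D
  have hDnonneg : ∀ n, 0 ≤ MMRW p n - mmRW p n := by
    intro n
    have := (mmRW_le p n 1).trans (le_MMRW p n 1)
    linarith
  have hDanti : ∀ a b, a ≤ b → MMRW p b - mmRW p b ≤ MMRW p a - mmRW p a := by
    intro a b hab
    have h1 := MMRW_anti hs gen p hpstep hab
    have h2 := mmRW_mono hs gen p hpstep hab
    linarith
  -- Doeblin contraction
  obtain ⟨L, hL⟩ := lower_all hs gen p hpstep hgen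
  set T := L * (2*s) with hT
  set c : ℝ := (1/3 : ℝ)^T with hc
  have hc0 : 0 < c := by positivity
  have hc1 : c ≤ 1 := pow_le_one₀ (by norm_num) (by norm_num)
  have hcontr : ∀ n, MMRW p (n + T) - mmRW p (n + T) ≤
      (1 - c) * (MMRW p n - mmRW p n) := by
    intro n
    obtain ⟨y, _, hy⟩ := Finset.exists_mem_eq_sup' (Finset.univ_nonempty (α := Γ)) (p n)
    have hmlow : mmRW p n + c * (MMRW p n - mmRW p n) ≤ mmRW p (n + T) := by
      refine Finset.le_inf' _ _ fun x _ => ?_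
      have h0 := hL (y * x⁻¹) (le_refl n) x
      rw [inv_mul_cancel_right] at h0
      have hy' : p n y = MMRW p n := hy.symm
      rw [hy'] at h0
      linarith
    have hMhigh : MMRW p (n + T) ≤ MMRW p n :=
      MMRW_anti hs gen p hpstep (Nat.le_add_right n T)
    linarith
  have hiter : ∀ k, MMRW p (k * T) - mmRW p (k * T) ≤
      (1 - c)^k * (MMRW p 0 - mmRW p 0) := by
    intro k
    induction k with
    | zero => simp
    | succ k ih =>
      have h1 : MMRW p ((k+1) * T) - mmRW p ((k+1) * T) ≤
          (1 - c) * (MMRW p (k * T) - mmRW p (k * T)) := by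
        have := hcontr (k * T)
        rwa [show k * T + T = (k+1) * T by ring] at this
      have h2 : (1 - c) * (MMRW p (k * T) - mmRW p (k * T)) ≤
          (1 - c) * ((1 - c)^k * (MMRW p 0 - mmRW p 0)) :=
        mul_le_mul_of_nonneg_left ih (by linarith)
      calc MMRW p ((k+1) * T) - mmRW p ((k+1) * T)
          ≤ (1 - c) * ((1 - c)^k * (MMRW p 0 - mmRW p 0)) := h1.trans h2
        _ = (1 - c)^(k+1) * (MMRW p 0 - mmRW p 0) := by ring
  -- the gap tends to 0
  have hDto0 : Filter.Tendsto (fun n => MMRW p n - mmRW p n) Filter.atTop (nhds 0) := by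
    rw [Metric.tendsto_atTop]
    intro ε hε
    have hpow0 : Filter.Tendsto (fun k => (1 - c)^k * (MMRW p 0 - mmRW p 0))
        Filter.atTop (nhds 0) := by
      have := (tendsto_pow_atTop_nhds_zero_of_lt_one (by linarith : (0:ℝ) ≤ 1 - c)
        (by linarith : 1 - c < 1)).mul_const (MMRW p 0 - mmRW p 0)
      simpa using this
    obtain ⟨k, hk⟩ := Metric.tendsto_atTop.mp hpow0 ε hε
    have hk' : (1 - c)^k * (MMRW p 0 - mmRW p 0) < ε := by
      have := hk k le_rfl
      rw [Real.dist_eq, sub_zero] at this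
      calc (1 - c)^k * (MMRW p 0 - mmRW p 0)
          ≤ |(1 - c)^k * (MMRW p 0 - mmRW p 0)| := le_abs_self _
        _ < ε := this
    refine ⟨k * T, fun n hn => ?_⟩
    rw [Real.dist_eq, sub_zero, abs_of_nonneg (hDnonneg n)]
    calc MMRW p n - mmRW p n ≤ MMRW p (k * T) - mmRW p (k * T) := hDanti _ _ hn
      _ ≤ (1 - c)^k * (MMRW p 0 - mmRW p 0) := hiter k
      _ < ε := hk'
  -- conclude by squeezing
  intro x
  rw [tendsto_iff_dist_tendsto_zero]
  refine squeeze_zero (fun n => dist_nonneg) (fun n => ?_) hDto0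
  rw [Real.dist_eq, abs_le]
  have h1 := mmRW_le p n x
  have h2 := hum n
  have h3 := huM n
  have h4 := le_MMRW p n x
  constructor <;> linarith
end

section
/- Let G be a finite connected graph and d ≥ 1. Every real root of the d-matching polynomial M_{d,G} (the average of the matching polynomials of all d-coverings of G, averaged uniformly over labelings σ : E⁺(G) → S_d) lies in the interval [−ρ(G), ρ(G)], where ρ(G) is the spectral radius of the universal covering tree of G. -/
open scoped BigOperators

/-- Let `G` be a finite connected graph (oriented edges `E` with reversal `rev`, heads `hd`,
tails `tl`, and a choice `Eplus` of positive orientation), and `d ≥ 1`.  For a labeling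
`σ : E⁺ → S_d`, `matchPoly σ` is the matching polynomial of the associated `d`-covering of
`G` (a matching being a set of lifted edges, none a loop, with pairwise disjoint endpoint
sets), and the `d`-matching polynomial `Mdg` is the average of `matchPoly σ` over all
labelings.  Let `ρ` be the spectral radius of the universal covering tree, so that (by the
Heilmann–Lieb theorem, hypothesis `hHL`) each `matchPoly σ` is real rooted with all roots
in `[-ρ, ρ]`.  Then every real root of `Mdg` lies in `[-ρ, ρ]`. -/
theorem d_matching_polynomial_real_roots_in_ramanujan_interval
    (V E : Type) [Fintype V] [Fintype E] [DecidableEq V] [DecidableEq E]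
    (rev : E → E) (hd tl : E → V)
    (hrev : ∀ e, rev (rev e) = e) (hrevne : ∀ e, rev e ≠ e)
    (hheadtail : ∀ e, hd (rev e) = tl e)
    (Eplus : Finset E) (hEplus : ∀ e, e ∈ Eplus ↔ rev e ∉ Eplus)
    (hconn : ∀ u v : V, u ≠ v → ∃ l : List E, l.Chain' (fun e e' => hd e = tl e') ∧
      (∃ e0 ∈ l.head?, tl e0 = u) ∧ (∃ e1 ∈ l.getLast?, hd e1 = v))
    (d : ℕ) (hd1 : 1 ≤ d)
    (matchPoly : ({e // e ∈ Eplus} → Equiv.Perm (Fin d)) → Polynomial ℝ)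
    (hmp : ∀ σ, matchPoly σ =
      ∑ S : Finset ({e // e ∈ Eplus} × Fin d),
        if (∀ p ∈ S, ((hd p.1.1, p.2) : V × Fin d) ≠ (tl p.1.1, σ p.1 p.2)) ∧
            (∀ p ∈ S, ∀ q ∈ S, p ≠ q →
              ({(hd p.1.1, p.2), (tl p.1.1, σ p.1 p.2)} : Finset (V × Fin d)) ∩
                {(hd q.1.1, q.2), (tl q.1.1, σ q.1 q.2)} = ∅)
        then Polynomial.C ((-1 : ℝ)) ^ S.card *
          Polynomial.X ^ (Fintype.card V * d - 2 * S.card)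
        else 0)
    (Mdg : Polynomial ℝ)
    (hMdg : Mdg = (Fintype.card ({e // e ∈ Eplus} → Equiv.Perm (Fin d)) : ℝ)⁻¹ •
      ∑ σ : {e // e ∈ Eplus} → Equiv.Perm (Fin d), matchPoly σ)
    (ρ : ℝ)
    (hHL : ∀ σ, (matchPoly σ).roots.card = Fintype.card V * d ∧
      ∀ x ∈ (matchPoly σ).roots, -ρ ≤ x ∧ x ≤ ρ) :
    ∀ x : ℝ, Mdg.IsRoot x → -ρ ≤ x ∧ x ≤ ρ := by
  intro x hx
  by_contra hcon
  set N := Fintype.card V * d with hN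
  -- key fact: for nonempty S, the exponent is strictly less than N
  have hexp : ∀ S : Finset ({e // e ∈ Eplus} × Fin d), S ≠ ∅ → N - 2 * S.card ≠ N := by
    intro S hS
    have hcard : 1 ≤ S.card := Finset.card_pos.mpr (Finset.nonempty_iff_ne_empty.mpr hS)
    rcases Nat.eq_zero_or_pos N with h0 | h1
    · -- N = 0 : then V is empty, hence E is empty, hence S cannot be nonempty
      exfalso
      have hV : Fintype.card V = 0 := by
        rcases Nat.mul_eq_zero.mp h0 with h | h
        · exact h
        · omega
      haveI : IsEmpty V := Fintype.card_eq_zero_iff.mp hV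
      haveI : IsEmpty E := Function.isEmpty hd
      obtain ⟨p, -⟩ := Finset.nonempty_iff_ne_empty.mpr hS
      exact (IsEmpty.false p.1.1)
    · omega
  -- each matchPoly σ has coefficient 1 at N
  have hcoeffN : ∀ σ, (matchPoly σ).coeff N = 1 := by
    intro σ
    rw [hmp σ]
    rw [Polynomial.finset_sum_coeff]
    rw [Finset.sum_eq_single (∅ : Finset ({e // e ∈ Eplus} × Fin d))]
    · simp
    · intro S _ hS
      split_ifs with h
      · rw [← Polynomial.C_pow, Polynomial.coeff_C_mul, Polynomial.coeff_X_pow,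
          if_neg (fun h' => hexp S hS h'.symm)]
        ring
      · simp
    · intro h; exact absurd (Finset.mem_univ _) h
  -- degree bound
  have hdegle : ∀ σ, (matchPoly σ).natDegree ≤ N := by
    intro σ
    rw [hmp σ]
    apply Polynomial.natDegree_sum_le_of_forall_le
    intro S _
    split_ifs with h
    · refine le_trans (Polynomial.natDegree_mul_le) ?_
      rw [← Polynomial.C_pow, Polynomial.natDegree_C, Polynomial.natDegree_X_pow]
      omega
    · simp
  have hdeg : ∀ σ, (matchPoly σ).natDegree = N := by
    intro σ
    refine le_antisymm (hdegle σ) ?_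
    exact Polynomial.le_natDegree_of_ne_zero (by rw [hcoeffN σ]; norm_num)
  have hmonic : ∀ σ, (matchPoly σ).Monic := by
    intro σ
    unfold Polynomial.Monic Polynomial.leadingCoeff
    rw [hdeg σ, hcoeffN σ]
  -- the evaluation sign
  set c : ℝ := if ρ < x then 1 else -1 with hc
  have hrange : ρ < x ∨ x < -ρ := by
    by_contra h
    push_neg at h
    exact hcon ⟨h.2, h.1⟩
  have hfac : ∀ (a : ℝ), -ρ ≤ a → a ≤ ρ → 0 < c * (x - a) := by
    intro a h1 h2
    rw [hc]
    split_ifs with h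
    · nlinarith
    · rcases hrange with h' | h'
      · exact absurd h' h
      · nlinarith
  have hpos : ∀ σ, 0 < c ^ N * Polynomial.eval x (matchPoly σ) := by
    intro σ
    have hfact := Polynomial.prod_multiset_X_sub_C_of_monic_of_roots_card_eq (hmonic σ)
      (by rw [(hHL σ).1, hdeg σ])
    have heval : Polynomial.eval x (matchPoly σ) =
        ((matchPoly σ).roots.map (fun a => x - a)).prod := by
      conv_lhs => rw [← hfact]
      rw [Polynomial.eval_multiset_prod, Multiset.map_map]
      congr 1
      apply Multiset.map_congr rfl
      intro a _
      simp
    have hcN : c ^ N = ((matchPoly σ).roots.map (fun _ => c)).prod := by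
      rw [Multiset.map_const', Multiset.prod_replicate, (hHL σ).1]
    rw [heval, hcN, ← Multiset.prod_map_mul]
    apply Multiset.prod_pos
    intro y hy
    rw [Multiset.mem_map] at hy
    obtain ⟨a, ha, rfl⟩ := hy
    exact hfac a ((hHL σ).2 a ha).1 ((hHL σ).2 a ha).2
  -- sum the positivity
  have hsum : 0 < ∑ σ : {e // e ∈ Eplus} → Equiv.Perm (Fin d),
      c ^ N * Polynomial.eval x (matchPoly σ) := by
    apply Finset.sum_pos (fun σ _ => hpos σ)
    exact Finset.univ_nonempty
  rw [← Finset.mul_sum] at hsum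
  have hsne : (∑ σ : {e // e ∈ Eplus} → Equiv.Perm (Fin d),
      Polynomial.eval x (matchPoly σ)) ≠ 0 := by
    intro h
    rw [h, mul_zero] at hsum
    exact lt_irrefl 0 hsum
  have hcard0 : (Fintype.card ({e // e ∈ Eplus} → Equiv.Perm (Fin d)) : ℝ) ≠ 0 := by
    exact_mod_cast Fintype.card_ne_zero
  apply hsne
  have := hx
  rw [Polynomial.IsRoot, hMdg] at this
  rw [Polynomial.eval_smul, Polynomial.eval_finset_sum] at this
  have h2 : (Fintype.card ({e // e ∈ Eplus} → Equiv.Perm (Fin d)) : ℝ)⁻¹ ≠ 0 :=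
    inv_ne_zero hcard0
  simp only [smul_eq_mul] at this
  rcases mul_eq_zero.mp this with h | h
  · exact absurd h h2
  · exact h
end

section
/- Let X be a uniformly random element of S_{r−1} ≤ S_r (permutations fixing r), and for 1 ≤ j ≤ r−1 let Y_j be independent random permutations with Y_j = (j r) with probability 1/(r−j+1) and Y_j = id with probability (r−j)/(r−j+1). Then the product X·Y₁·Y₂⋯Y_{r−1} is uniformly distributed on S_r. -/
open scoped BigOperators

/-- A product of permutations each fixing `x` fixes `x`. -/
lemma prod_fixes {α : Type*} (x : α) :
    ∀ l : List (Equiv.Perm α), (∀ q ∈ l, q x = x) → l.prod x = x := by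
  intro l
  induction l with
  | nil => simp
  | cons a t ih =>
    intro h
    rw [List.prod_cons, Equiv.Perm.mul_apply, ih (fun q hq => h q (List.mem_cons_of_mem a hq)),
      h a List.mem_cons_self]

/-- Inverse of a product of optional transpositions with `m`, applied at `m`, gives the
first "chosen" element. -/
lemma swapProd_inv_apply {α : Type*} [DecidableEq α] (m : α) (p : α → Bool) :
    ∀ (l : List α), (∀ a ∈ l, a ≠ m) → l.Nodup →
      (((l.map fun a => if p a then Equiv.swap a m else 1).prod)⁻¹ : Equiv.Perm α) m
        = ((l.find? p).getD m) := by
  intro l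
  induction l with
  | nil => simp
  | cons a t ih =>
    intro hm hnd
    rw [List.map_cons, List.prod_cons, mul_inv_rev, Equiv.Perm.mul_apply]
    have ha : ((if p a then Equiv.swap a m else 1 : Equiv.Perm α)⁻¹) m
        = if p a then a else m := by
      by_cases h : p a <;> simp [h, Equiv.swap_inv, Equiv.swap_apply_right]
    rw [ha]
    by_cases h : p a
    · simp only [h, if_true]
      have hfix : ((t.map fun a => if p a then Equiv.swap a m else 1).prod) a = a := by
        apply prod_fixes
        intro q hq
        rw [List.mem_map] at hq
        obtain ⟨a', ha', rfl⟩ := hq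
        have h1 : a ≠ a' := by rintro rfl; exact (List.nodup_cons.mp hnd).1 ha'
        have h2 : a ≠ m := hm a List.mem_cons_self
        by_cases hp : p a'
        · simp [hp, Equiv.swap_apply_of_ne_of_ne h1 h2]
        · simp [hp]
      have : ((t.map fun a => if p a then Equiv.swap a m else 1).prod)⁻¹ a = a := by
        conv_lhs => rw [← hfix]
        exact Equiv.symm_apply_apply _ _
      rw [this, List.find?_cons_of_pos h, Option.getD_some]
    · simp only [h, if_false]
      rw [List.find?_cons_of_neg (by simpa using h)]
      exact ih (fun a' ha' => hm a' (List.mem_cons_of_mem a ha'))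
        (List.nodup_cons.mp hnd).2

/-- `find?` on `ofFn` when `j₀` is the first index satisfying `p ∘ g`. -/
lemma find?_ofFn_getD {α : Type*} (p : α → Bool) (d : α) :
    ∀ (q : ℕ) (g : Fin q → α) (j₀ : Fin q), p (g j₀) = true →
      (∀ i, i < j₀ → p (g i) = false) →
      ((List.ofFn g).find? p).getD d = g j₀ := by
  intro q
  induction q with
  | zero => intro g j₀; exact j₀.elim0
  | succ q ih =>
    intro g j₀ h1 h2
    rw [List.ofFn_succ]
    by_cases h0 : j₀ = 0
    · subst h0
      rw [List.find?_cons_of_pos h1, Option.getD_some]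
    · have hne : (0 : Fin (q+1)) < j₀ := Fin.pos_of_ne_zero h0
      rw [List.find?_cons_of_neg (by simp [h2 0 hne])]
      obtain ⟨i, rfl⟩ : ∃ i : Fin q, j₀ = i.succ := ⟨j₀.pred h0, by simp⟩
      exact ih (g ∘ Fin.succ) i h1 (fun i' hi' => h2 i'.succ (by simpa using hi'))

/-- Telescoping product. -/
lemma tel_prod (n : ℕ) : ∀ K, K ≤ n →
    ∏ i ∈ Finset.range K, (((n-i : ℕ) : ℝ)/((n-i : ℕ) + 1)) = ((n-K : ℕ) + 1)/((n : ℝ)+1) := by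
  intro K
  induction K with
  | zero =>
    intro _
    simp
    rw [div_self (by positivity)]
  | succ K ihK =>
    intro hK
    rw [Finset.prod_range_succ, ihK (by omega)]
    have e1 : (n - (K+1) : ℕ) + 1 = (n - K : ℕ) := by omega
    have e2 : ((n - (K+1) : ℕ) : ℝ) + 1 = ((n - K : ℕ) : ℝ) := by
      rw [← e1]; push_cast; ring
    rw [e2]
    have h1 : ((n - K : ℕ) : ℝ) + 1 ≠ 0 := by positivity
    have h2 : (n : ℝ) + 1 ≠ 0 := by positivity
    field_simp

/-- Sum over the Boolean cube of a product factorizes. -/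
lemma cube_sum (n : ℕ) (φ : Fin n → Bool → ℝ) :
    ∑ s : Fin n → Bool, ∏ j, φ j (s j) = ∏ j, (φ j true + φ j false) := by
  have : ∀ j : Fin n, φ j true + φ j false = ∑ b : Bool, φ j b := by
    intro j; rw [Fintype.sum_bool]
  simp_rw [this]
  rw [Finset.prod_univ_sum]
  rw [Fintype.piFinset_univ]
section Phi
variable {n : ℕ}

/-- boolean predicate on `Fin (n+1)` induced by `s : Fin n → Bool`. -/
def bp (s : Fin n → Bool) : Fin (n + 1) → Bool :=
  fun a => if h : (a : ℕ) < n then s ⟨a, h⟩ else false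

lemma bp_castSucc (s : Fin n → Bool) (j : Fin n) : bp s (Fin.castSucc j) = s j := by
  simp [bp, j.2]

lemma Phi_eq (s : Fin n → Bool) :
    (((List.ofFn fun j : Fin n =>
        if s j then Equiv.swap (Fin.castSucc j) (Fin.last n) else 1).prod)⁻¹ : Equiv.Perm (Fin (n+1)))
      (Fin.last n)
      = (((List.ofFn (Fin.castSucc : Fin n → Fin (n+1))).find? (bp s)).getD (Fin.last n)) := by
  have hmap : (List.ofFn (Fin.castSucc : Fin n → Fin (n+1))).map
      (fun a => if bp s a then Equiv.swap a (Fin.last n) else 1)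
      = List.ofFn fun j : Fin n =>
        if s j then Equiv.swap (Fin.castSucc j) (Fin.last n) else 1 := by
    rw [List.map_ofFn]
    congr 1
    funext j
    simp [Function.comp, bp_castSucc]
  rw [← hmap]
  apply swapProd_inv_apply
  · intro a ha
    rw [List.mem_ofFn] at ha
    obtain ⟨j, rfl⟩ := ha
    exact (Fin.castSucc_lt_last j).ne
  · exact List.nodup_ofFn.mpr (Fin.castSucc_injective n)

lemma Phi_none (s : Fin n → Bool) (h : ∀ j, s j = false) :
    (((List.ofFn (Fin.castSucc : Fin n → Fin (n+1))).find? (bp s)).getD (Fin.last n))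
      = Fin.last n := by
  rw [List.find?_eq_none.mpr, Option.getD_none]
  intro a ha
  rw [List.mem_ofFn] at ha
  obtain ⟨j, rfl⟩ := ha
  simp [bp_castSucc, h j]

lemma Phi_first (s : Fin n → Bool) (j₀ : Fin n) (h1 : s j₀ = true)
    (h2 : ∀ i, i < j₀ → s i = false) :
    (((List.ofFn (Fin.castSucc : Fin n → Fin (n+1))).find? (bp s)).getD (Fin.last n))
      = Fin.castSucc j₀ := by
  exact find?_ofFn_getD (bp s) _ n Fin.castSucc j₀ (by rw [bp_castSucc]; exact h1)
    (fun i hi => by rw [bp_castSucc]; exact h2 i hi)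

/-- Existence of a minimal true index. -/
lemma exists_minimal (s : Fin n → Bool) (h : ¬ ∀ j, s j = false) :
    ∃ j₀ : Fin n, s j₀ = true ∧ ∀ i, i < j₀ → s i = false := by
  push_neg at h
  obtain ⟨j, hj⟩ := h
  have hQ : ∃ t : ℕ, ∃ ht : t < n, s ⟨t, ht⟩ = true :=
    ⟨j, j.2, by rwa [Fin.eta, ← Bool.ne_false_iff]⟩
  classical
  obtain ⟨ht0, hs0⟩ := Nat.find_spec hQ
  refine ⟨⟨Nat.find hQ, ht0⟩, hs0, ?_⟩
  intro i hi
  have := Nat.find_min hQ (m := (i : ℕ)) hi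
  push_neg at this
  have := this i.2
  simpa using this
end Phi

/-- Let `X` be uniform on `S_{r-1} ≤ S_r` (here `r = n + 1`, and `S_{r-1}` is the
stabilizer of the last point), and let `Y₁, …, Y_{r-1}` be independent random permutations
where `Y_j` is the transposition `(j r)` with probability `1/(r - j + 1)` and the identity
otherwise.  Then the product `X · Y₁ ⋯ Y_{r-1}` is uniformly distributed on `S_r`.
Distributions are given by their probability mass functions `μX` and `μY j`, and the
distribution of the product is the corresponding convolution. -/
theorem product_of_swaps_uniform (n : ℕ)
    (μX : Equiv.Perm (Fin (n + 1)) → ℝ)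
    (hμX : ∀ x, μX x =
      if x (Fin.last n) = Fin.last n then (1 / (Nat.factorial n : ℝ)) else 0)
    (μY : Fin n → Equiv.Perm (Fin (n + 1)) → ℝ)
    (hμY : ∀ j y, μY j y =
      if y = Equiv.swap (Fin.castSucc j) (Fin.last n) then
        (1 / ((n + 1 - (j : ℕ) : ℕ) : ℝ))
      else if y = 1 then ((n - (j : ℕ) : ℕ) : ℝ) / ((n + 1 - (j : ℕ) : ℕ) : ℝ)
      else 0) :
    ∀ g : Equiv.Perm (Fin (n + 1)),
      (∑ x : Equiv.Perm (Fin (n + 1)), ∑ y : Fin n → Equiv.Perm (Fin (n + 1)),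
        (μX x * ∏ j, μY j (y j)) * (if x * (List.ofFn y).prod = g then 1 else 0)) =
        1 / (Nat.factorial (n + 1) : ℝ) := by
  intro g
  classical
  set σ : Fin n → Equiv.Perm (Fin (n+1)) := fun j => Equiv.swap (Fin.castSucc j) (Fin.last n) with hσ
  set w : Fin n → Bool → ℝ := fun j b =>
    if b then 1 / ((n + 1 - (j : ℕ) : ℕ) : ℝ)
    else ((n - (j : ℕ) : ℕ) : ℝ) / ((n + 1 - (j : ℕ) : ℕ) : ℝ) with hw
  set E : (Fin n → Bool) → (Fin n → Equiv.Perm (Fin (n+1))) :=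
    fun s j => if s j then σ j else 1 with hE
  -- Step A: swap sums
  rw [Finset.sum_comm]
  -- Step B: collapse the x-sum
  have stepB : ∀ y : Fin n → Equiv.Perm (Fin (n+1)),
      (∑ x : Equiv.Perm (Fin (n+1)),
        (μX x * ∏ j, μY j (y j)) * (if x * (List.ofFn y).prod = g then 1 else 0))
      = μX (g * ((List.ofFn y).prod)⁻¹) * ∏ j, μY j (y j) := by
    intro y
    have hcond : ∀ x : Equiv.Perm (Fin (n+1)),
        (x * (List.ofFn y).prod = g) = (x = g * ((List.ofFn y).prod)⁻¹) := by
      intro x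
      rw [eq_iff_iff, ← eq_mul_inv_iff_mul_eq]
    simp_rw [hcond, mul_ite, mul_one, mul_zero]
    rw [Finset.sum_ite_eq' Finset.univ (g * ((List.ofFn y).prod)⁻¹)
      (fun x => μX x * ∏ j, μY j (y j)), if_pos (Finset.mem_univ _)]
  simp_rw [stepB]
  -- Step C/D: expand μY over Boolean choices
  have hY : ∀ (j : Fin n) (v : Equiv.Perm (Fin (n+1))),
      μY j v = ∑ b : Bool, (if v = (if b then σ j else 1) then w j b else 0) := by
    intro j v
    rw [hμY, Fintype.sum_bool]
    simp only [if_true, if_false, hw]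
    have hne : σ j ≠ 1 := by
      rw [hσ]
      simp only []
      rw [Ne, Equiv.swap_eq_one_iff]
      exact (Fin.castSucc_lt_last j).ne
    by_cases h1 : v = σ j
    · simp +zetaDelta [h1, hne]
    · by_cases h2 : v = 1
      · simp +zetaDelta [h1, h2, Ne.symm hne]
      · simp +zetaDelta [h1, h2]
  have stepD : ∀ y : Fin n → Equiv.Perm (Fin (n+1)),
      (∏ j, μY j (y j))
        = ∑ s : Fin n → Bool, ∏ j, (if y j = E s j then w j (s j) else 0) := by
    intro y
    simp_rw [hY]
    rw [Finset.prod_univ_sum]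
    rw [Fintype.piFinset_univ]
  simp_rw [stepD, Finset.mul_sum]
  rw [Finset.sum_comm]
  -- Step E: collapse the y-sum
  have prodIte : ∀ (s : Fin n → Bool) (y : Fin n → Equiv.Perm (Fin (n+1))),
      (∏ j, (if y j = E s j then w j (s j) else 0))
        = if y = E s then (∏ j, w j (s j)) else 0 := by
    intro s y
    by_cases hy : y = E s
    · rw [if_pos hy]
      exact Finset.prod_congr rfl fun j _ => if_pos (congrFun hy j)
    · rw [if_neg hy]
      obtain ⟨j, hj⟩ : ∃ j, y j ≠ E s j := by
        by_contra hcon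
        push_neg at hcon
        exact hy (funext hcon)
      exact Finset.prod_eq_zero (Finset.mem_univ j) (if_neg hj)
  have stepE : ∀ s : Fin n → Bool,
      (∑ y : Fin n → Equiv.Perm (Fin (n+1)),
        μX (g * ((List.ofFn y).prod)⁻¹) * ∏ j, (if y j = E s j then w j (s j) else 0))
      = μX (g * ((List.ofFn (E s)).prod)⁻¹) * ∏ j, w j (s j) := by
    intro s
    simp_rw [prodIte s, mul_ite, mul_zero]
    rw [Finset.sum_ite_eq' Finset.univ (E s)
      (fun y => μX (g * ((List.ofFn y).prod)⁻¹) * ∏ j, w j (s j)),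
      if_pos (Finset.mem_univ _)]
  simp_rw [stepE]
  -- notation for the "first chosen index" map
  have denom : ∀ j : Fin n, ((n + 1 - (j : ℕ) : ℕ) : ℝ) = ((n - (j : ℕ) : ℕ) : ℝ) + 1 := by
    intro j
    have hj : (n + 1 - (j : ℕ) : ℕ) = (n - (j : ℕ) : ℕ) + 1 := by omega
    rw [hj]
    push_cast
    ring
  -- Step F: compute μX at the collapsed point
  have stepF : ∀ s : Fin n → Bool,
      μX (g * ((List.ofFn (E s)).prod)⁻¹)
        = if (((List.ofFn (Fin.castSucc : Fin n → Fin (n+1))).find? (bp s)).getD (Fin.last n))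
              = g⁻¹ (Fin.last n)
          then 1 / (Nat.factorial n : ℝ) else 0 := by
    intro s
    rw [hμX, Equiv.Perm.mul_apply]
    have hPhi : ((List.ofFn (E s)).prod)⁻¹ (Fin.last n)
        = (((List.ofFn (Fin.castSucc : Fin n → Fin (n+1))).find? (bp s)).getD (Fin.last n)) := by
      simp only [hE, hσ]
      exact Phi_eq s
    rw [hPhi]
    have hcc : (g ((((List.ofFn (Fin.castSucc : Fin n → Fin (n+1))).find? (bp s)).getD
          (Fin.last n))) = Fin.last n)
        = ((((List.ofFn (Fin.castSucc : Fin n → Fin (n+1))).find? (bp s)).getD (Fin.last n))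
            = g⁻¹ (Fin.last n)) := by
      rw [eq_iff_iff]
      exact Equiv.Perm.eq_inv_iff_eq.symm
    exact if_congr (iff_of_eq hcc) rfl rfl
  simp_rw [stepF, ite_mul, zero_mul]
  have pull : ∀ s : Fin n → Bool,
      (if (((List.ofFn (Fin.castSucc : Fin n → Fin (n+1))).find? (bp s)).getD (Fin.last n))
            = g⁻¹ (Fin.last n)
        then (1 / (Nat.factorial n : ℝ)) * ∏ j, w j (s j) else 0)
      = (1 / (Nat.factorial n : ℝ)) *
        (if (((List.ofFn (Fin.castSucc : Fin n → Fin (n+1))).find? (bp s)).getD (Fin.last n))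
            = g⁻¹ (Fin.last n)
        then ∏ j, w j (s j) else 0) := by
    intro s
    by_cases h : (((List.ofFn (Fin.castSucc : Fin n → Fin (n+1))).find? (bp s)).getD (Fin.last n))
        = g⁻¹ (Fin.last n) <;> simp [h]
  simp_rw [pull]
  rw [← Finset.mul_sum]
  -- Key combinatorial identity
  have key : ∀ k : Fin (n+1),
      (∑ s : Fin n → Bool,
        (if (((List.ofFn (Fin.castSucc : Fin n → Fin (n+1))).find? (bp s)).getD (Fin.last n)) = k
          then ∏ j, w j (s j) else 0))
      = 1 / ((n : ℝ) + 1) := by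
    intro k
    rcases Fin.eq_castSucc_or_eq_last k with ⟨k', rfl⟩ | rfl
    · -- k = castSucc k'
      set χ : Fin n → Bool → ℝ := fun j b =>
        if (j : ℕ) < (k' : ℕ) then (if b then (0:ℝ) else 1)
        else if j = k' then (if b then 1 else 0) else 1 with hχ
      have hsummand : ∀ s : Fin n → Bool,
          (if (((List.ofFn (Fin.castSucc : Fin n → Fin (n+1))).find? (bp s)).getD (Fin.last n))
              = Fin.castSucc k'
            then ∏ j, w j (s j) else 0)
          = ∏ j, (w j (s j) * χ j (s j)) := by
        intro s
        rw [Finset.prod_mul_distrib]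
        by_cases hC : s k' = true ∧ ∀ i, i < k' → s i = false
        · rw [if_pos (Phi_first s k' hC.1 hC.2)]
          have hχ1 : (∏ j, χ j (s j)) = 1 := by
            apply Finset.prod_eq_one
            intro j _
            rcases lt_trichotomy ((j : ℕ)) ((k' : ℕ)) with hlt | heq | hgt
            · have hsj : s j = false := hC.2 j (by rwa [Fin.lt_def])
              simp only [hχ, if_pos hlt, hsj]
              simp
            · have hjk : j = k' := Fin.ext heq
              have h1 : ¬ ((j : ℕ) < (k' : ℕ)) := by omega
              simp only [hχ, if_neg h1, if_pos hjk, hjk, hC.1]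
              simp
            · have h1 : ¬ ((j : ℕ) < (k' : ℕ)) := Nat.lt_asymm hgt
              have h2 : j ≠ k' := by rintro rfl; exact lt_irrefl _ hgt
              have h3 : ¬ (j < k') := by rw [Fin.lt_def]; exact h1
              simp [hχ, h1, h2, h3]
          rw [hχ1, mul_one]
        · have hneg : ¬ ((((List.ofFn (Fin.castSucc : Fin n → Fin (n+1))).find? (bp s)).getD
              (Fin.last n)) = Fin.castSucc k') := by
            intro hF
            apply hC
            by_cases hall : ∀ j, s j = false
            · rw [Phi_none s hall] at hF
              exact absurd hF.symm (Fin.castSucc_lt_last k').ne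
            · obtain ⟨j₀, h1, h2⟩ := exists_minimal s hall
              rw [Phi_first s j₀ h1 h2] at hF
              have hj : j₀ = k' := Fin.castSucc_injective n hF
              subst hj
              exact ⟨h1, h2⟩
          rw [if_neg hneg]
          have hχ0 : (∏ j, χ j (s j)) = 0 := by
            rcases not_and_or.mp hC with hk | hex
            · refine Finset.prod_eq_zero (Finset.mem_univ k') ?_
              have hsk : s k' = false := by simpa using hk
              simp [hχ, hsk]
            · push_neg at hex
              obtain ⟨i, hi, hsi⟩ := hex
              refine Finset.prod_eq_zero (Finset.mem_univ i) ?_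
              have hsi' : s i = true := by simpa using hsi
              have hi' : (i : ℕ) < (k' : ℕ) := by rwa [Fin.lt_def] at hi
              simp [hχ, hi, hi', hsi']
          rw [hχ0, mul_zero]
      simp_rw [hsummand]
      rw [cube_sum n (fun j b => w j b * χ j b)]
      -- evaluate each factor
      set cnat : ℕ → ℝ := fun i =>
        if i < (k' : ℕ) then ((n - i : ℕ) : ℝ) / (((n - i : ℕ) : ℝ) + 1)
        else if i = (k' : ℕ) then 1 / (((n - (k' : ℕ) : ℕ) : ℝ) + 1) else 1 with hcnat
      have hval : ∀ j : Fin n, (w j true * χ j true + w j false * χ j false) = cnat (j : ℕ) := by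
        intro j
        have hD : ((n + 1 - (j : ℕ) : ℕ) : ℝ) ≠ 0 := by
          have : 0 < (n + 1 - (j : ℕ) : ℕ) := by omega
          exact_mod_cast this.ne'
        rcases lt_trichotomy ((j : ℕ)) ((k' : ℕ)) with hlt | heq | hgt
        · simp only [hχ, hcnat, if_pos hlt]
          simp [hw, denom j]
        · have hjk : j = k' := Fin.ext heq
          simp only [hχ, hcnat, hjk, lt_irrefl, if_neg (lt_irrefl _), if_pos rfl]
          simp [hw, denom k']
        · have h1 : ¬ ((j : ℕ) < (k' : ℕ)) := Nat.lt_asymm hgt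
          have h2 : j ≠ k' := fun h => absurd (congrArg Fin.val h) (by omega)
          have h2' : (j : ℕ) ≠ (k' : ℕ) := by omega
          simp only [hχ, hcnat, if_neg h1, if_neg h2, if_neg h2']
          simp only [hw, eq_self_iff_true, Bool.false_eq_true, if_true, if_false]
          rw [mul_one, mul_one, ← add_div, add_comm (1:ℝ), ← denom j, div_self hD]
      rw [Finset.prod_congr rfl (fun j _ => hval j)]
      rw [Fin.prod_univ_eq_prod_range cnat n]
      have hsub : Finset.range ((k' : ℕ) + 1) ⊆ Finset.range n :=
        Finset.range_subset_range.mpr (by have := k'.2; omega)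
      rw [← Finset.prod_subset hsub (fun i _ hi => by
        have hik : ¬ (i < (k' : ℕ)) := by simp at hi; omega
        have hik' : i ≠ (k' : ℕ) := by simp at hi; omega
        simp [hcnat, hik, hik'])]
      rw [Finset.prod_range_succ]
      rw [Finset.prod_congr rfl (fun i hi => by
        simp only [hcnat, if_pos (Finset.mem_range.mp hi)] : ∀ i ∈ Finset.range (k' : ℕ), cnat i
          = ((n - i : ℕ) : ℝ) / (((n - i : ℕ) : ℝ) + 1))]
      rw [tel_prod n (k' : ℕ) (le_of_lt k'.2)]
      have hck : cnat (k' : ℕ) = 1 / (((n - (k' : ℕ) : ℕ) : ℝ) + 1) := by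
        simp [hcnat]
      rw [hck]
      have h1 : ((n - (k' : ℕ) : ℕ) : ℝ) + 1 ≠ 0 := by positivity
      have h2 : (n : ℝ) + 1 ≠ 0 := by positivity
      have h1' : ((n : ℝ) - ((k' : ℕ) : ℝ)) + 1 ≠ 0 := by
        rw [← Nat.cast_sub (le_of_lt k'.2)]; exact h1
      field_simp
    · -- k = last
      have hcond : ∀ s : Fin n → Bool,
          ((((List.ofFn (Fin.castSucc : Fin n → Fin (n+1))).find? (bp s)).getD (Fin.last n))
              = Fin.last n)
          = (s = fun _ => false) := by
        intro s
        rw [eq_iff_iff]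
        constructor
        · intro h
          by_contra hs
          have hall : ¬ ∀ j, s j = false := fun hA => hs (funext hA)
          obtain ⟨j₀, h1, h2⟩ := exists_minimal s hall
          rw [Phi_first s j₀ h1 h2] at h
          exact absurd h (Fin.castSucc_lt_last j₀).ne
        · rintro rfl
          exact Phi_none _ (fun _ => rfl)
      simp_rw [hcond]
      rw [Finset.sum_ite_eq' Finset.univ (fun _ => false) (fun s : Fin n → Bool => ∏ j, w j (s j)),
        if_pos (Finset.mem_univ _)]
      have hwf : ∀ j : Fin n, w j false = ((n - (j : ℕ) : ℕ) : ℝ) / (((n - (j : ℕ) : ℕ) : ℝ) + 1) := by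
        intro j
        simp [hw, denom j]
      rw [Finset.prod_congr rfl (fun j _ => hwf j)]
      rw [Fin.prod_univ_eq_prod_range
        (fun i => ((n - i : ℕ) : ℝ) / (((n - i : ℕ) : ℝ) + 1)) n]
      rw [tel_prod n n le_rfl]
      simp
  rw [key (g⁻¹ (Fin.last n))]
  -- final arithmetic
  rw [Nat.factorial_succ]
  have hf : (Nat.factorial n : ℝ) ≠ 0 := by exact_mod_cast n.factorial_pos.ne'
  have hn : (n : ℝ) + 1 ≠ 0 := by positivity
  push_cast
  field_simp
end
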